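/- arXiv:2001.04411 — 4 statements merged into one kernel-verified Lean document; each statement's English description precedes it below -/
import Mathlib

section
/- Let (W,S) be a Coxeter system with Bruhat order ≤. For all x, y, x' in W with x' ≤ x, there exists y' in W with y' ≤ y such that x'y' ≤ xy. -/
section AuxiliaryBruhatDevelopment

attribute [local instance] Classical.propDecidable

section BruhatSetupDefs

variable {B : Type*} {W : Type*} [Group W] {M : CoxeterMatrix B}

def BruhatLE' (cs : CoxeterSystem M W) (u v : W) : Prop :=
  ∀ ω : List B, cs.IsReduced ω → cs.wordProd ω = v →
    ∃ ω' : List B, List.Sublist ω' ω ∧ cs.IsReduced ω' ∧ cs.wordProd ω' = u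

end BruhatSetupDefs

namespace BruhatProofAux
open List

section genGroup

variable {G : Type*} [Group G]

lemma inv_pair_lemma1 (a b : G) (ha : a * a = 1) (hb : b * b = 1) (m k : ℕ) (w : G) :
    ((a*b)^m * w * ((a*b)^m)⁻¹ = ((a*b)^k)⁻¹ * b) ↔ (w = ((a*b)^(2*m+k))⁻¹ * b) := by
  have ha' : a⁻¹ = a := inv_eq_of_mul_eq_one_right ha
  have hb' : b⁻¹ = b := inv_eq_of_mul_eq_one_right hb
  set Q := a * b with hQdef
  have base : SemiconjBy b Q Q⁻¹ := by
    show b * Q = Q⁻¹ * b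
    rw [hQdef, mul_inv_rev, ha', hb', mul_assoc]
  have hbk : ∀ k : ℕ, b * Q ^ k = (Q ^ k)⁻¹ * b := by
    intro k
    have := base.pow_right k
    rwa [inv_pow] at this
  have hx : (Q^m)⁻¹ * (((Q^k)⁻¹ * b) * Q^m) = (Q^(2*m+k))⁻¹ * b := by
    calc (Q^m)⁻¹ * (((Q^k)⁻¹ * b) * Q^m) = (Q^m)⁻¹ * (Q^k)⁻¹ * (b * Q^m) := by group
    _ = (Q^m)⁻¹ * (Q^k)⁻¹ * ((Q^m)⁻¹ * b) := by rw [hbk m]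
    _ = ((Q⁻¹)^m * (Q⁻¹)^k * (Q⁻¹)^m) * b := by simp only [← inv_pow]; group
    _ = (Q⁻¹)^(m+k+m) * b := by rw [← pow_add, ← pow_add]
    _ = (Q^(2*m+k))⁻¹ * b := by rw [← inv_pow]; congr 2; omega
  constructor
  · intro h
    have : w = (Q^m)⁻¹ * (((Q^k)⁻¹ * b) * Q^m) := by rw [← h]; group
    rw [this, hx]
  · intro h
    rw [h, ← hx]
    group

lemma inv_pair_lemma2 (a b : G) (ha : a * a = 1) (hb : b * b = 1) (X : G) :
    (b * X * b = a) ↔ (X = (a*b)⁻¹ * b) := by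
  have ha' : a⁻¹ = a := inv_eq_of_mul_eq_one_right ha
  have hb' : b⁻¹ = b := inv_eq_of_mul_eq_one_right hb
  have hQinv : (a*b)⁻¹ = b * a := by rw [mul_inv_rev, ha', hb']
  constructor
  · intro h
    have : X = b⁻¹ * a * b⁻¹ := by rw [← h]; group
    rw [this, hb', hQinv]
  · intro h
    rw [h, hQinv]
    calc b * (b * a * b) * b = (b * b) * a * (b * b) := by group
    _ = 1 * a * 1 := by rw [hb]
    _ = a := by group

lemma inv_pair_lemma3 (a b : G) (ha : a * a = 1) (hb : b * b = 1) (X : G) :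
    a * (b * X * b) * a = (a*b) * X * (a*b)⁻¹ := by
  have ha' : a⁻¹ = a := inv_eq_of_mul_eq_one_right ha
  have hb' : b⁻¹ = b := inv_eq_of_mul_eq_one_right hb
  rw [mul_inv_rev, ha', hb']
  group

end genGroup

namespace Second

variable {B W : Type*} [Group W] {M : CoxeterMatrix B} (cs : CoxeterSystem M W)

local prefix:100 "s" => cs.simple
local prefix:100 "π" => cs.wordProd
local prefix:100 "ℓ" => cs.length


lemma lis_cons (i : B) (ω : List B) :
    cs.leftInvSeq (i :: ω) = s i :: List.map (⇑(MulAut.conj (s i))) (cs.leftInvSeq ω) := rfl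

lemma lis_append (α β : List B) :
    cs.leftInvSeq (α ++ β)
      = cs.leftInvSeq α ++ List.map (⇑(MulAut.conj (π α))) (cs.leftInvSeq β) := by
  induction α with
  | nil => simp
  | cons i α ih =>
      rw [cons_append, lis_cons, lis_cons, ih, map_append, cs.wordProd_cons]
      simp only [cons_append, map_map, map_mul, MulAut.coe_mul]

lemma lis_eq_map_conj (ω : List B) :
    cs.leftInvSeq ω = List.map (⇑(MulAut.conj (π ω))) (cs.rightInvSeq ω) := by
  induction ω with
  | nil => simp
  | cons i ω ih =>
      rw [lis_cons, CoxeterSystem.rightInvSeq, cs.wordProd_cons, ih]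
      simp only [List.map_cons, map_map, map_mul, MulAut.coe_mul]
      congr 1
      simp [MulAut.conj_apply, mul_assoc, cs.simple_mul_simple_self]

lemma simple_conj_conj (i : B) (w : W) : s i * (s i * w * s i) * s i = w := by
  simp only [← mul_assoc, cs.simple_mul_simple_self, one_mul]
  rw [mul_assoc, cs.simple_mul_simple_self, mul_one]

lemma simple_conj_eq_self_iff (i : B) (w : W) : (s i * w * s i = s i) ↔ (w = s i) := by
  constructor
  · intro h
    calc w = s i * (s i * w * s i) * s i := (simple_conj_conj cs i w).symm
    _ = s i * (s i * s i) := by rw [h, mul_assoc]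
    _ = s i := by rw [cs.simple_mul_simple_self, mul_one]
  · rintro rfl
    rw [cs.simple_mul_simple_self, one_mul]

/-- The basic involution of `W × ZMod 2` attached to a simple reflection. -/
noncomputable def refPfun (i : B) : W × ZMod 2 → W × ZMod 2 :=
  fun p => (s i * p.1 * s i, p.2 + if p.1 = s i then 1 else 0)

lemma refPfun_involutive (i : B) : Function.Involutive (refPfun cs i) := by
  intro ⟨w, ε⟩
  show (s i * (s i * w * s i) * s i,
      (ε + if w = s i then 1 else 0) + if s i * w * s i = s i then 1 else 0) = (w, ε)
  rw [Prod.mk.injEq]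
  refine ⟨simple_conj_conj cs i w, ?_⟩
  rw [if_congr (simple_conj_eq_self_iff cs i w) rfl rfl]
  split_ifs with h
  · rw [add_assoc]
    have h2 : (1 : ZMod 2) + 1 = 0 := by decide
    rw [h2, add_zero]
  · simp

noncomputable def refP (i : B) : Equiv.Perm (W × ZMod 2) :=
  (refPfun_involutive cs i).toPerm

lemma refP_apply (i : B) (w : W) (ε : ZMod 2) :
    refP cs i (w, ε) = (s i * w * s i, ε + if w = s i then 1 else 0) := rfl

lemma braid_pow_formula (i i' : B) (m : ℕ) (w : W) (ε : ZMod 2) :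
    ((refP cs i * refP cs i') ^ m) (w, ε)
      = ((s i * s i') ^ m * w * ((s i * s i') ^ m)⁻¹,
          ε + ∑ k ∈ Finset.range (2 * m),
            if w = ((s i * s i') ^ k)⁻¹ * s i' then 1 else 0) := by
  have ha := cs.simple_mul_simple_self i
  have hb := cs.simple_mul_simple_self i'
  induction m with
  | zero => simp
  | succ m ih =>
      rw [pow_succ', Equiv.Perm.mul_apply, ih, Equiv.Perm.mul_apply, refP_apply, refP_apply]
      rw [Prod.mk.injEq]
      have e0 : ((s i * s i') ^ m * w * (((s i * s i') ^ m))⁻¹ = s i')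
          ↔ (w = ((s i * s i') ^ (2*m))⁻¹ * s i') := by
        have := BruhatProofAux.inv_pair_lemma1 (s i) (s i') ha hb m 0 w
        simpa using this
      have e1 : (s i' * ((s i * s i') ^ m * w * (((s i * s i') ^ m))⁻¹) * s i' = s i)
          ↔ (w = ((s i * s i') ^ (2*m+1))⁻¹ * s i') := by
        rw [BruhatProofAux.inv_pair_lemma2 (s i) (s i') ha hb]
        have := BruhatProofAux.inv_pair_lemma1 (s i) (s i') ha hb m 1 w
        rw [← this, pow_one]
      constructor
      · rw [BruhatProofAux.inv_pair_lemma3 (s i) (s i') ha hb, pow_succ' (s i * s i') m]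
        rw [mul_inv_rev ((s i) * (s i')) ((s i * s i') ^ m)]
        simp only [mul_assoc]
      · rw [if_congr e0 rfl rfl, if_congr e1 rfl rfl]
        have h2m : 2*(m+1) = (2*m) + 1 + 1 := by ring
        rw [h2m, Finset.sum_range_succ, Finset.sum_range_succ]
        ring

lemma refP_liftable : M.IsLiftable (fun i => refP cs i) := by
  intro i i'
  apply Equiv.ext
  rintro ⟨w, ε⟩
  show ((refP cs i * refP cs i') ^ (M i i')) (w, ε) = (1 : Equiv.Perm (W × ZMod 2)) (w, ε)
  rw [braid_pow_formula]
  have hq : (s i * s i') ^ (M i i') = 1 := cs.simple_mul_simple_pow i i'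
  have hsum : ∑ k ∈ Finset.range (2 * M i i'),
      (if w = ((s i * s i') ^ k)⁻¹ * s i' then (1 : ZMod 2) else 0) = 0 := by
    rw [two_mul, Finset.sum_range_add]
    have : ∀ k, ((s i * s i') ^ (M i i' + k))⁻¹ = ((s i * s i') ^ k)⁻¹ := by
      intro k
      rw [pow_add, hq, one_mul]
    simp only [this]
    have hx : ∀ x : ZMod 2, x + x = 0 := by decide
    exact hx _
  rw [hq, hsum]
  simp

noncomputable def refRep : W →* Equiv.Perm (W × ZMod 2) :=
  cs.lift ⟨fun i => refP cs i, refP_liftable cs⟩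

lemma refRep_simple (i : B) : refRep cs (s i) = refP cs i :=
  cs.lift_apply_simple (refP_liftable cs) i


/-- count of `u` in the left inversion sequence, mod 2. -/
noncomputable def nlis (ω : List B) (u : W) : ZMod 2 :=
  (((cs.leftInvSeq ω).count u : ℕ) : ZMod 2)

lemma refRep_wordProd_apply (ω : List B) (w : W) (ε : ZMod 2) :
    refRep cs (π ω) (w, ε)
      = (π ω * w * (π ω)⁻¹, ε + nlis cs ω (π ω * w * (π ω)⁻¹)) := by
  induction ω with
  | nil => simp [nlis]
  | cons i ω ih =>
      rw [cs.wordProd_cons, map_mul, Equiv.Perm.mul_apply, ih, refRep_simple, refP_apply]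
      rw [Prod.mk.injEq]
      have hconj : s i * (π ω * w * (π ω)⁻¹) * s i
          = (s i * π ω) * w * (s i * π ω)⁻¹ := by
        rw [mul_inv_rev, cs.inv_simple]
        simp only [mul_assoc]
      constructor
      · exact hconj
      · have hcount : ((cs.leftInvSeq (i :: ω)).count ((s i * π ω) * w * (s i * π ω)⁻¹) : ℕ)
            = ((cs.leftInvSeq ω).count (π ω * w * (π ω)⁻¹) : ℕ)
              + (if π ω * w * (π ω)⁻¹ = s i then 1 else 0) := by
          rw [lis_cons]
          rw [List.count_cons]
          congr 1
          · -- count in mapped list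
            have : (s i * π ω) * w * (s i * π ω)⁻¹
                = (MulAut.conj (s i)) (π ω * w * (π ω)⁻¹) := by
              rw [MulAut.conj_apply, cs.inv_simple, ← hconj]
            rw [this]
            exact List.count_map_of_injective _ _ (MulAut.conj (s i)).injective _
          · -- the indicator
            have hiff : ((s i * π ω) * w * (s i * π ω)⁻¹ = s i) ↔ (π ω * w * (π ω)⁻¹ = s i) := by
              rw [← hconj, simple_conj_eq_self_iff]
            simp only [beq_iff_eq]
            rw [if_congr (eq_comm.trans hiff) rfl rfl]
        unfold nlis
        rw [hcount]
        push_cast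
        ring

lemma nlis_invariant {ω ω' : List B} (h : π ω = π ω') (u : W) :
    nlis cs ω u = nlis cs ω' u := by
  have key : ∀ (θ : List B), refRep cs (π θ) ((π θ)⁻¹ * u * π θ, 0) = (u, nlis cs θ u) := by
    intro θ
    rw [refRep_wordProd_apply]
    have h1 : π θ * ((π θ)⁻¹ * u * π θ) * (π θ)⁻¹ = u := by group
    rw [h1, zero_add]
  have e1 := key ω
  have e2 := key ω'
  rw [← h] at e2
  have := e1.symm.trans e2
  exact congrArg Prod.snd this

lemma nlis_palindrome (υ : List B) (i : B) :
    nlis cs (υ ++ [i] ++ υ.reverse) (π υ * s i * (π υ)⁻¹) = 1 := by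
  have hcomp : (⇑(MulAut.conj (π υ)) ∘ ⇑(MulAut.conj (s i))) = ⇑(MulAut.conj (π υ * s i)) := by
    rw [map_mul, MulAut.coe_mul]
  have ht2 : (MulAut.conj (π υ * s i)) (s i) = π υ * s i * (π υ)⁻¹ := by
    rw [MulAut.conj_apply, mul_inv_rev, cs.inv_simple]
    calc π υ * s i * s i * (s i * (π υ)⁻¹) = π υ * (s i * s i * s i) * (π υ)⁻¹ := by
          simp only [mul_assoc]
    _ = π υ * s i * (π υ)⁻¹ := by rw [cs.simple_mul_simple_self, one_mul]
  have ht3 : (MulAut.conj (π υ)) (s i) = π υ * s i * (π υ)⁻¹ := by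
    rw [MulAut.conj_apply]
  have hlist : cs.leftInvSeq (υ ++ [i] ++ υ.reverse)
      = cs.leftInvSeq υ ++ ((π υ * s i * (π υ)⁻¹) ::
          List.map (⇑(MulAut.conj (π υ * s i))) (cs.leftInvSeq υ.reverse)) := by
    rw [List.append_assoc, lis_append]
    congr 1
    show List.map (⇑(MulAut.conj (π υ))) (cs.leftInvSeq (i :: υ.reverse)) = _
    rw [lis_cons, List.map_cons, List.map_map, ht3, hcomp]
  unfold nlis
  rw [hlist, List.count_append, List.count_cons]
  have c1 : (cs.leftInvSeq υ).count (π υ * s i * (π υ)⁻¹)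
      = (cs.rightInvSeq υ).count (s i) := by
    rw [lis_eq_map_conj, ← ht3]
    exact List.count_map_of_injective _ _ (MulAut.conj (π υ)).injective _
  have c2 : (List.map (⇑(MulAut.conj (π υ * s i))) (cs.leftInvSeq υ.reverse)).count
        (π υ * s i * (π υ)⁻¹) = (cs.rightInvSeq υ).count (s i) := by
    rw [← ht2, List.count_map_of_injective _ _ (MulAut.conj (π υ * s i)).injective,
      cs.leftInvSeq_reverse, List.count_reverse]
  rw [c1, c2]
  simp only [beq_self_eq_true, if_true]
  have hfin : (((cs.rightInvSeq υ).count (s i)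
      + ((cs.rightInvSeq υ).count (s i) + 1) : ℕ) : ZMod 2) = ((1 : ℕ) : ZMod 2) := by
    rw [ZMod.natCast_eq_natCast_iff]
    unfold Nat.ModEq
    omega
  simpa using hfin

lemma strong_exchange_mem {t w : W} (ht : cs.IsReflection t) (hlen : ℓ (t * w) < ℓ w)
    {ω : List B} (hred : cs.IsReduced ω) (hw : π ω = w) : t ∈ cs.leftInvSeq ω := by
  obtain ⟨u, i, htu⟩ := ht
  obtain ⟨υ, hυred, hυ⟩ := cs.exists_reduced_word' u
  obtain ⟨ν, hνred, hν⟩ := cs.exists_reduced_word' (t * w)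
  have hτ : π (υ ++ [i] ++ υ.reverse) = t := by
    rw [CoxeterSystem.wordProd_append, CoxeterSystem.wordProd_append,
      CoxeterSystem.wordProd_reverse, cs.wordProd_singleton, htu, hυ]
  have htt : cs.IsReflection t := ⟨u, i, htu⟩
  have hprod : π ((υ ++ [i] ++ υ.reverse) ++ ν) = π ω := by
    rw [CoxeterSystem.wordProd_append, hτ, ← hν, ← mul_assoc, htt.mul_self, one_mul, hw]
  have hinv := nlis_invariant cs hprod t
  have hτν : nlis cs ((υ ++ [i] ++ υ.reverse) ++ ν) t = 1 := by
    unfold nlis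
    rw [lis_append, List.count_append, hτ]
    have hν0 : (cs.leftInvSeq ν).count t = 0 := by
      rw [List.count_eq_zero]
      intro hmem
      have := cs.isLeftInversion_of_mem_leftInvSeq hνred hmem
      rw [← hν] at this
      have h2 := this.2
      rw [← mul_assoc, htt.mul_self, one_mul] at h2
      omega
    have hmap0 : (List.map (⇑(MulAut.conj t)) (cs.leftInvSeq ν)).count t = 0 := by
      have htc : (MulAut.conj t) t = t := by
        rw [MulAut.conj_apply]
        group
      have hcm := List.count_map_of_injective (cs.leftInvSeq ν) (⇑(MulAut.conj t))
        (MulAut.conj t).injective t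
      rw [htc] at hcm
      rw [hcm, hν0]
    rw [hmap0, Nat.add_zero]
    have := nlis_palindrome cs υ i
    unfold nlis at this
    rw [← hυ, ← htu] at this
    exact this
  rw [hτν] at hinv
  by_contra hmem
  have : (cs.leftInvSeq ω).count t = 0 := List.count_eq_zero.mpr hmem
  unfold nlis at hinv
  rw [this] at hinv
  exact absurd hinv.symm (by decide)

lemma exch_left {t w : W} (ht : cs.IsReflection t) (hlen : ℓ (t * w) < ℓ w)
    {ω : List B} (hred : cs.IsReduced ω) (hw : π ω = w) :
    ∃ j < ω.length, π (ω.eraseIdx j) = t * w := by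
  have hmem := strong_exchange_mem cs ht hlen hred hw
  obtain ⟨j, hj, hget⟩ := List.getElem_of_mem hmem
  have hjlen : j < ω.length := by
    have := cs.length_leftInvSeq ω
    omega
  refine ⟨j, hjlen, ?_⟩
  have hkey := cs.getD_leftInvSeq_mul_wordProd ω j
  rw [List.getD_eq_getElem _ _ hj, hget, hw] at hkey
  exact hkey.symm

lemma exch_right {t w : W} (ht : cs.IsReflection t) (hlen : ℓ (w * t) < ℓ w)
    {ω : List B} (hred : cs.IsReduced ω) (hw : π ω = w) :
    ∃ j < ω.length, π (ω.eraseIdx j) = w * t := by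
  have ht' := ht.conj w
  have heq : (w * t * w⁻¹) * w = w * t := by group
  have hlen' : ℓ ((w * t * w⁻¹) * w) < ℓ w := by rw [heq]; exact hlen
  obtain ⟨j, hj, hh⟩ := exch_left cs ht' hlen' hred hw
  exact ⟨j, hj, by rw [hh, heq]⟩

lemma isReduced_eraseIdx_of_lengths {ω : List B} (hred : cs.IsReduced ω) {j : ℕ}
    (hj : j < ω.length) {v : W} (hv : π (ω.eraseIdx j) = v) (hlv : ℓ v + 1 = ℓ (π ω)) :
    cs.IsReduced (ω.eraseIdx j) := by
  show ℓ (π (ω.eraseIdx j)) = (ω.eraseIdx j).length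
  rw [hv, List.length_eraseIdx, if_pos hj]
  have : ω.length = ℓ (π ω) := hred.symm
  omega

/-! ### The Bruhat order layer -/

lemma Brefl (w : W) : BruhatLE' cs w w := fun ω h1 h2 => ⟨ω, List.Sublist.refl ω, h1, h2⟩

lemma Btrans {u v w : W} (h1 : BruhatLE' cs u v) (h2 : BruhatLE' cs v w) :
    BruhatLE' cs u w := by
  intro ω hred hw
  obtain ⟨σ, hσ, hσred, hσp⟩ := h2 ω hred hw
  obtain ⟨τ, hτ, hτred, hτp⟩ := h1 σ hσred hσp
  exact ⟨τ, hτ.trans hσ, hτred, hτp⟩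

lemma Bone (w : W) : BruhatLE' cs 1 w := by
  intro ω hred hw
  refine ⟨[], List.nil_sublist ω, ?_, cs.wordProd_nil⟩
  show ℓ (π []) = ([] : List B).length
  rw [cs.wordProd_nil]
  simp

lemma isReduced_tail {i : B} {σ : List B} (h : cs.IsReduced (i :: σ)) : cs.IsReduced σ := by
  have := h.drop 1
  simpa using this

lemma exchL {i : B} {w : W} (hlen : ℓ (s i * w) < ℓ w) {ω : List B}
    (hred : cs.IsReduced ω) (hw : π ω = w) :
    ∃ j < ω.length, π (ω.eraseIdx j) = s i * w ∧ cs.IsReduced (ω.eraseIdx j) := by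
  obtain ⟨j, hj, hjp⟩ := exch_left cs (cs.isReflection_simple i) hlen hred hw
  refine ⟨j, hj, hjp, ?_⟩
  apply isReduced_eraseIdx_of_lengths cs hred hj hjp
  rcases cs.length_simple_mul w i with h | h
  · omega
  · rw [hw]; omega

lemma exchR {i : B} {w : W} (hlen : ℓ (w * s i) < ℓ w) {ω : List B}
    (hred : cs.IsReduced ω) (hw : π ω = w) :
    ∃ j < ω.length, π (ω.eraseIdx j) = w * s i ∧ cs.IsReduced (ω.eraseIdx j) := by
  obtain ⟨j, hj, hjp⟩ := exch_right cs (cs.isReflection_simple i) hlen hred hw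
  refine ⟨j, hj, hjp, ?_⟩
  apply isReduced_eraseIdx_of_lengths cs hred hj hjp
  rcases cs.length_mul_simple w i with h | h
  · omega
  · rw [hw]; omega

lemma simple_cancel (i : B) (w : W) : s i * (s i * w) = w := by
  rw [← mul_assoc, cs.simple_mul_simple_self, one_mul]

lemma BupL {i : B} {w : W} (h : ℓ w < ℓ (s i * w)) : BruhatLE' cs w (s i * w) := by
  intro ω hred hw
  have hlen : ℓ (s i * π ω) < ℓ (π ω) := by
    rw [hw, simple_cancel]
    exact h
  obtain ⟨j, hj, hjp, hjred⟩ := exchL cs hlen hred rfl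
  rw [hw, simple_cancel] at hjp
  exact ⟨ω.eraseIdx j, List.eraseIdx_sublist ω j, hjred, hjp⟩

lemma BdownL {i : B} {w : W} (h : ℓ (s i * w) < ℓ w) : BruhatLE' cs (s i * w) w := by
  intro ω hred hw
  obtain ⟨j, hj, hjp, hjred⟩ := exchL cs (by rw [hw]; exact h) hred rfl
  rw [hw] at hjp
  exact ⟨ω.eraseIdx j, List.eraseIdx_sublist ω j, hjred, hjp⟩

lemma Binv {u w : W} (h : BruhatLE' cs u w) : BruhatLE' cs u⁻¹ w⁻¹ := by
  intro ω hred hw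
  have hrev : π ω.reverse = w := by rw [cs.wordProd_reverse, hw, inv_inv]
  obtain ⟨σ, hσ, hσred, hσp⟩ := h ω.reverse ((cs.isReduced_reverse_iff ω).mpr hred) hrev
  refine ⟨σ.reverse, ?_, (cs.isReduced_reverse_iff σ).mpr hσred, ?_⟩
  · have := hσ.reverse
    rwa [List.reverse_reverse] at this
  · rw [cs.wordProd_reverse, hσp]

lemma lenred_cons {i : B} {σ : List B} (h : cs.IsReduced (i :: σ)) :
    ℓ (π σ) + 1 = ℓ (π (i :: σ)) := by
  have h1 : ℓ (π (i :: σ)) = σ.length + 1 := by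
    rw [h]
    simp
  rw [h1, (isReduced_tail cs h : ℓ (π σ) = σ.length)]

lemma LlemA {i : B} {u w : W} (hu : BruhatLE' cs u w) (hw : ℓ (s i * w) < ℓ w)
    (ha : ℓ (s i * u) < ℓ u) : BruhatLE' cs (s i * u) (s i * w) := by
  intro ν hνred hν
  have hcons_red : cs.IsReduced (i :: ν) := by
    show ℓ (π (i :: ν)) = (i :: ν).length
    rw [cs.wordProd_cons, hν, simple_cancel]
    rcases cs.length_simple_mul w i with h | h
    · omega
    · have : ν.length = ℓ (s i * w) := hνred.symm.trans (by rw [hν])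
      simp
      omega
  have hcons_p : π (i :: ν) = w := by rw [cs.wordProd_cons, hν, simple_cancel]
  obtain ⟨σ, hσ, hσred, hσp⟩ := hu (i :: ν) hcons_red hcons_p
  rcases List.sublist_cons_iff.mp hσ with hcase | ⟨σ₁, rfl, hσ₁⟩
  · -- σ <+ ν ; use exchange on σ
    obtain ⟨j, hj, hjp, hjred⟩ := exchL cs (by rw [hσp]; exact ha) hσred rfl
    rw [hσp] at hjp
    exact ⟨σ.eraseIdx j, (List.eraseIdx_sublist σ j).trans hcase, hjred, hjp⟩
  · -- σ = i :: σ₁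
    refine ⟨σ₁, hσ₁, isReduced_tail cs hσred, ?_⟩
    have : π (i :: σ₁) = u := hσp
    rw [cs.wordProd_cons] at this
    rw [← this, simple_cancel]

lemma LlemB {i : B} {u w : W} (hu : BruhatLE' cs u w) (hw : ℓ (s i * w) < ℓ w)
    (ha : ℓ u < ℓ (s i * u)) : BruhatLE' cs u (s i * w) := by
  intro ν hνred hν
  have hcons_red : cs.IsReduced (i :: ν) := by
    show ℓ (π (i :: ν)) = (i :: ν).length
    rw [cs.wordProd_cons, hν, simple_cancel]
    rcases cs.length_simple_mul w i with h | h
    · omega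
    · have : ν.length = ℓ (s i * w) := hνred.symm.trans (by rw [hν])
      simp
      omega
  have hcons_p : π (i :: ν) = w := by rw [cs.wordProd_cons, hν, simple_cancel]
  obtain ⟨σ, hσ, hσred, hσp⟩ := hu (i :: ν) hcons_red hcons_p
  rcases List.sublist_cons_iff.mp hσ with hcase | ⟨σ₁, rfl, hσ₁⟩
  · exact ⟨σ, hcase, hσred, hσp⟩
  · exfalso
    have h1 : ℓ (π σ₁) + 1 = ℓ (π (i :: σ₁)) := lenred_cons cs hσred
    have h2 : π σ₁ = s i * u := by
      have : π (i :: σ₁) = u := hσp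
      rw [cs.wordProd_cons] at this
      rw [← this, simple_cancel]
    rw [h2, hσp] at h1
    omega

/-! ### The reflection-chain order -/

def cov (v w : W) : Prop := cs.length v < cs.length w ∧ ∃ t, cs.IsReflection t ∧ w = v * t

def Ale : W → W → Prop := Relation.ReflTransGen (cov cs)

lemma exists_reduced_sublist (ω : List B) :
    ∃ ρ, List.Sublist ρ ω ∧ cs.IsReduced ρ ∧ π ρ = π ω := by
  induction ω using List.reverseRecOn with
  | nil => exact ⟨[], List.Sublist.refl [], by show ℓ (π []) = _; simp, rfl⟩
  | append_singleton ν i ih =>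
      obtain ⟨ρ, hsub, hred, hprod⟩ := ih
      rcases cs.length_mul_simple (π ν) i with h | h
      · refine ⟨ρ ++ [i], hsub.append (List.Sublist.refl [i]), ?_, ?_⟩
        · show ℓ (π (ρ ++ [i])) = (ρ ++ [i]).length
          rw [cs.wordProd_append, hprod, cs.wordProd_singleton, h]
          rw [List.length_append]
          have : ρ.length = ℓ (π ν) := by rw [← hprod]; exact hred.symm
          simp [this]
        · rw [cs.wordProd_append, cs.wordProd_append, hprod]
      · have hlen : ℓ (π ρ * s i) < ℓ (π ρ) := by rw [hprod]; omega
        obtain ⟨j, hj, hjp, hjred⟩ := exchR cs hlen hred rfl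
        refine ⟨ρ.eraseIdx j, ?_, hjred, ?_⟩
        · exact ((List.eraseIdx_sublist ρ j).trans hsub).trans (List.sublist_append_left ν [i])
        · rw [hjp, hprod, cs.wordProd_append, cs.wordProd_singleton]

lemma Ale_to_Ble : ∀ n : ℕ, ∀ u w : W, ℓ w = n → Ale cs u w → BruhatLE' cs u w := by
  intro n
  induction n using Nat.strong_induction_on with
  | _ n IH =>
  intro u w hn h
  rcases h.cases_tail with heq | ⟨v, hav, hcov⟩
  · rw [heq]; exact Brefl cs u
  · obtain ⟨hlv, t, htr, rfl⟩ := hcov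
    intro ω hred hw
    have hlen : ℓ ((v * t) * t) < ℓ (v * t) := by
      rw [mul_assoc, htr.mul_self, mul_one]
      exact hlv
    obtain ⟨j, hj, hjp⟩ := exch_right cs htr hlen hred hw
    have hjv : π (ω.eraseIdx j) = v := by
      rw [hjp, mul_assoc, htr.mul_self, mul_one]
    obtain ⟨ρ, hρsub, hρred, hρprod⟩ := exists_reduced_sublist cs (ω.eraseIdx j)
    have hBuv : BruhatLE' cs u v := IH (ℓ v) (by omega) u v rfl hav
    obtain ⟨σ, hσ, hσred, hσp⟩ := hBuv ρ hρred (by rw [hρprod, hjv])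
    exact ⟨σ, (hσ.trans hρsub).trans (List.eraseIdx_sublist ω j), hσred, hσp⟩

def Cle (u w : W) : Prop :=
  ∃ ω σ : List B, cs.IsReduced ω ∧ π ω = w ∧ List.Sublist σ ω ∧ cs.IsReduced σ ∧ π σ = u

lemma mainInd : ∀ n : ℕ,
    (∀ w : W, ℓ w = n → ∀ u : W, Cle cs u w → Ale cs u w)
  ∧ (∀ w : W, ℓ w = n → ∀ (v : W) (i : B), Ale cs v w → ℓ v < ℓ (s i * v) →
        ℓ w < ℓ (s i * w) → Ale cs (s i * v) (s i * w)) := by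
  intro n
  induction n using Nat.strong_induction_on with
  | _ n IH =>
  constructor
  · -- C implies A
    intro w hw u hC
    obtain ⟨ω, σ, hωred, hωp, hσsub, hσred, hσp⟩ := hC
    cases ω with
    | nil =>
        have hσnil : σ = [] := List.sublist_nil.mp hσsub
        have : u = w := by rw [← hσp, ← hωp, hσnil]
        rw [this]
        exact Relation.ReflTransGen.refl
    | cons i ω₁ =>
        have hω₁red : cs.IsReduced ω₁ := isReduced_tail cs hωred
        have hw1len : ℓ (π ω₁) + 1 = n := by
          rw [← hw, ← hωp]
          exact lenred_cons cs hωred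
        have hwcons : w = s i * π ω₁ := by rw [← hωp, cs.wordProd_cons]
        have hcovw : cov cs (π ω₁) w := by
          refine ⟨by omega, (π ω₁)⁻¹ * s i * π ω₁, ?_, ?_⟩
          · have := (cs.isReflection_simple i).conj (π ω₁)⁻¹
            rwa [inv_inv] at this
          · rw [hwcons]
            group
        rcases List.sublist_cons_iff.mp hσsub with hcase | ⟨σ₁, rfl, hσ₁⟩
        · have hA := (IH (n-1) (by omega)).1 (π ω₁) (by omega) u
            ⟨ω₁, σ, hω₁red, rfl, hcase, hσred, hσp⟩
          exact hA.tail hcovw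
        · have hσ₁red : cs.IsReduced σ₁ := isReduced_tail cs hσred
          have hu1 : u = s i * π σ₁ := by rw [← hσp, cs.wordProd_cons]
          have hulen : ℓ (π σ₁) + 1 = ℓ u := by rw [← hσp]; exact lenred_cons cs hσred
          have hA1 := (IH (n-1) (by omega)).1 (π ω₁) (by omega) (π σ₁)
            ⟨ω₁, σ₁, hω₁red, rfl, hσ₁, hσ₁red, rfl⟩
          have hK := (IH (n-1) (by omega)).2 (π ω₁) (by omega) (π σ₁) i hA1
            (by rw [← hu1]; omega)
            (by rw [← hwcons]; omega)
          rwa [← hu1, ← hwcons] at hK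
  · -- the lifting (KEY)
    intro w hw v i hA hav haw
    rcases hA.cases_tail with heq | ⟨w₀, hA₀, hcov⟩
    · rw [heq]; exact Relation.ReflTransGen.refl
    · obtain ⟨hl₀, t, htr, rfl⟩ := hcov
      by_cases hcase : ℓ w₀ < ℓ (s i * w₀)
      · have hK := (IH (ℓ w₀) (by omega)).2 w₀ rfl v i hA₀ hav hcase
        have hasc : ℓ (s i * w₀) = ℓ w₀ + 1 := by
          rcases cs.length_simple_mul w₀ i with h | h
          · exact h
          · omega
        have hcov2 : cov cs (s i * w₀) (s i * (w₀ * t)) := by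
          refine ⟨by omega, t, htr, by rw [mul_assoc]⟩
        exact hK.tail hcov2
      · have hdesc : ℓ (s i * w₀) < ℓ w₀ := by
          rcases cs.length_simple_mul w₀ i with h | h
          · omega
          · omega
        have hBv : BruhatLE' cs v w₀ := Ale_to_Ble cs (ℓ w₀) v w₀ rfl hA₀
        have hBvs : BruhatLE' cs v (s i * w₀) := LlemB cs hBv hdesc hav
        obtain ⟨ν, hνred, hν⟩ := cs.exists_reduced_word' (s i * w₀)
        obtain ⟨σ, hσ, hσred, hσp⟩ := hBvs ν hνred hν.symm
        have hA' : Ale cs v (s i * w₀) :=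
          (IH (ℓ (s i * w₀)) (by omega)).1 (s i * w₀) rfl v
            ⟨ν, σ, hνred, hν.symm, hσ, hσred, hσp⟩
        have hK := (IH (ℓ (s i * w₀)) (by omega)).2 (s i * w₀) rfl v i hA' hav
          (by rw [simple_cancel]; exact hdesc)
        rw [simple_cancel] at hK
        -- hK : Ale v? no: Ale (s i * v) w₀
        have hc1 : cov cs w₀ (w₀ * t) := ⟨hl₀, t, htr, rfl⟩
        have hc2 : cov cs (w₀ * t) (s i * (w₀ * t)) := by
          refine ⟨haw, (w₀ * t)⁻¹ * s i * (w₀ * t), ?_, by group⟩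
          have := (cs.isReflection_simple i).conj (w₀ * t)⁻¹
          rwa [inv_inv] at this
        exact (hK.tail hc1).tail hc2

lemma BofC {u w : W} (h : Cle cs u w) : BruhatLE' cs u w :=
  Ale_to_Ble cs (ℓ w) u w rfl ((mainInd cs (ℓ w)).1 w rfl u h)

lemma BliftUpL {i : B} {v w : W} (h : BruhatLE' cs v w) (hav : ℓ v < ℓ (s i * v))
    (haw : ℓ w < ℓ (s i * w)) : BruhatLE' cs (s i * v) (s i * w) := by
  obtain ⟨ω, hωred, hω⟩ := cs.exists_reduced_word' w
  obtain ⟨σ, hσ, hσred, hσp⟩ := h ω hωred hω.symm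
  apply BofC cs
  have hascw : ℓ (s i * w) = ℓ w + 1 := by
    rcases cs.length_simple_mul w i with hh | hh
    · exact hh
    · omega
  have hascv : ℓ (s i * v) = ℓ v + 1 := by
    rcases cs.length_simple_mul v i with hh | hh
    · exact hh
    · omega
  have hlw : ℓ w = ω.length := by rw [hω]; exact hωred
  have hlv : ℓ v = σ.length := by rw [← hσp]; exact hσred
  refine ⟨i :: ω, i :: σ, ?_, ?_, List.cons_sublist_cons.mpr hσ, ?_, ?_⟩
  · show ℓ (π (i :: ω)) = (i :: ω).length
    rw [cs.wordProd_cons, ← hω, hascw, List.length_cons, ← hlw]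
  · rw [cs.wordProd_cons, ← hω]
  · show ℓ (π (i :: σ)) = (i :: σ).length
    rw [cs.wordProd_cons, hσp, hascv, List.length_cons, ← hlv]
  · rw [cs.wordProd_cons, hσp]

lemma BupR {i : B} {w : W} (h : ℓ w < ℓ (w * s i)) : BruhatLE' cs w (w * s i) := by
  have e : s i * w⁻¹ = (w * s i)⁻¹ := by rw [mul_inv_rev, cs.inv_simple]
  have h' : ℓ w⁻¹ < ℓ (s i * w⁻¹) := by rw [e, cs.length_inv, cs.length_inv]; exact h
  have := Binv cs (BupL cs h')
  rwa [inv_inv, e, inv_inv] at this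

lemma RlemA {i : B} {u w : W} (hu : BruhatLE' cs u w) (hw : ℓ (w * s i) < ℓ w)
    (ha : ℓ (u * s i) < ℓ u) : BruhatLE' cs (u * s i) (w * s i) := by
  have ew : s i * w⁻¹ = (w * s i)⁻¹ := by rw [mul_inv_rev, cs.inv_simple]
  have eu : s i * u⁻¹ = (u * s i)⁻¹ := by rw [mul_inv_rev, cs.inv_simple]
  have hw' : ℓ (s i * w⁻¹) < ℓ w⁻¹ := by rw [ew, cs.length_inv, cs.length_inv]; exact hw
  have ha' : ℓ (s i * u⁻¹) < ℓ u⁻¹ := by rw [eu, cs.length_inv, cs.length_inv]; exact ha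
  have := Binv cs (LlemA cs (Binv cs hu) hw' ha')
  rwa [eu, ew, inv_inv, inv_inv] at this

lemma RlemB {i : B} {u w : W} (hu : BruhatLE' cs u w) (hw : ℓ (w * s i) < ℓ w)
    (ha : ℓ u < ℓ (u * s i)) : BruhatLE' cs u (w * s i) := by
  have ew : s i * w⁻¹ = (w * s i)⁻¹ := by rw [mul_inv_rev, cs.inv_simple]
  have eu : s i * u⁻¹ = (u * s i)⁻¹ := by rw [mul_inv_rev, cs.inv_simple]
  have hw' : ℓ (s i * w⁻¹) < ℓ w⁻¹ := by rw [ew, cs.length_inv, cs.length_inv]; exact hw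
  have ha' : ℓ u⁻¹ < ℓ (s i * u⁻¹) := by rw [eu, cs.length_inv, cs.length_inv]; exact ha
  have := Binv cs (LlemB cs (Binv cs hu) hw' ha')
  rwa [ew, inv_inv, inv_inv] at this

lemma mainlem : ∀ n : ℕ, ∀ y x x' : W, ℓ y = n → BruhatLE' cs x' x →
    ∃ y' : W, BruhatLE' cs y' y ∧ BruhatLE' cs (x' * y') (x * y) := by
  intro n
  induction n using Nat.strong_induction_on with
  | _ n IH =>
  intro y x x' hn h
  by_cases hy : y = 1
  · refine ⟨1, ?_, ?_⟩
    · rw [hy]; exact Brefl cs 1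
    · rw [hy]; simpa using h
  · obtain ⟨i, hdesc⟩ := cs.exists_leftDescent_of_ne_one hy
    have hdesc' : ℓ (s i * y) < ℓ y := hdesc
    set y₁ := s i * y with hy₁def
    have hy₁y : s i * y₁ = y := by rw [hy₁def, simple_cancel]
    have hly₁ : ℓ y₁ < n := by rw [← hn]; exact hdesc'
    have t2 : BruhatLE' cs y₁ y := by
      have := BupL cs (w := y₁) (i := i) (by rw [hy₁y]; omega)
      rwa [hy₁y] at this
    have e2 : x * y = (x * s i) * y₁ := by rw [← hy₁y]; group
    rcases Nat.lt_or_ge (ℓ (x * s i)) (ℓ x) with hxd | hxa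
    · rcases Nat.lt_or_ge (ℓ (x' * s i)) (ℓ x') with hd | hna
      · have hB : BruhatLE' cs (x' * s i) (x * s i) := RlemA cs h hxd hd
        obtain ⟨y₁', hy₁', hxy⟩ := IH (ℓ y₁) (by omega) y₁ (x * s i) (x' * s i) rfl hB
        refine ⟨s i * y₁', ?_, ?_⟩
        · rcases Nat.lt_or_ge (ℓ y₁') (ℓ (s i * y₁')) with ha | hb
          · have := BliftUpL cs hy₁' ha (by rw [hy₁y]; omega)
            rwa [hy₁y] at this
          · have hlt : ℓ (s i * y₁') < ℓ y₁' := by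
              rcases cs.length_simple_mul y₁' i with hh | hh <;> omega
            exact Btrans cs (Btrans cs (BdownL cs hlt) hy₁') t2
        · have e1 : x' * (s i * y₁') = (x' * s i) * y₁' := by group
          rw [e1, e2]
          exact hxy
      · have hna' : ℓ x' < ℓ (x' * s i) := by
          have := cs.length_mul_simple_ne x' i
          omega
        have hB : BruhatLE' cs x' (x * s i) := RlemB cs h hxd hna'
        obtain ⟨y₁', hy₁', hxy⟩ := IH (ℓ y₁) (by omega) y₁ (x * s i) x' rfl hB
        refine ⟨y₁', Btrans cs hy₁' t2, ?_⟩
        rw [e2]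
        exact hxy
    · have hxa' : ℓ x < ℓ (x * s i) := by
        have := cs.length_mul_simple_ne x i
        omega
      have hB : BruhatLE' cs x' (x * s i) := Btrans cs h (BupR cs hxa')
      obtain ⟨y₁', hy₁', hxy⟩ := IH (ℓ y₁) (by omega) y₁ (x * s i) x' rfl hB
      refine ⟨y₁', Btrans cs hy₁' t2, ?_⟩
      rw [e2]
      exact hxy

end Second
end BruhatProofAux

theorem statement_0' {B : Type*} {W : Type*} [Group W] {M : CoxeterMatrix B}
    (cs : CoxeterSystem M W) (x y x' : W) (h : BruhatLE' cs x' x) :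
    ∃ y' : W, BruhatLE' cs y' y ∧ BruhatLE' cs (x' * y') (x * y) :=
  BruhatProofAux.Second.mainlem cs (cs.length y) y x x' rfl h

end AuxiliaryBruhatDevelopment

section BruhatSetup

variable {B : Type*} {W : Type*} [Group W] {M : CoxeterMatrix B}

/-- Strong Bruhat order: `u ≤ v` iff every reduced word for `v` has a sublist
that is a reduced word for `u`. -/
def BruhatLE (cs : CoxeterSystem M W) (u v : W) : Prop :=
  ∀ ω : List B, cs.IsReduced ω → cs.wordProd ω = v →
    ∃ ω' : List B, List.Sublist ω' ω ∧ cs.IsReduced ω' ∧ cs.wordProd ω' = u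

/-- Strict strong Bruhat order. -/
def BruhatLT (cs : CoxeterSystem M W) (u v : W) : Prop :=
  BruhatLE cs u v ∧ u ≠ v

/-- The standard parabolic subgroup `W_L` generated by the simple reflections in `L`. -/
def parab (cs : CoxeterSystem M W) (L : Set B) : Subgroup W :=
  Subgroup.closure (cs.simple '' L)

/-- The set `W^L` of minimal length coset representatives for `W / W_L`. -/
def minReps (cs : CoxeterSystem M W) (L : Set B) : Set W :=
  {w : W | ∀ i ∈ L, cs.length w < cs.length (w * cs.simple i)}

/-- Right weak order: `v ≤_R w` iff `ℓ(w) = ℓ(w v⁻¹) + ℓ(v)`. -/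
def leR (cs : CoxeterSystem M W) (v w : W) : Prop :=
  cs.length w = cs.length (w * v⁻¹) + cs.length v

theorem statement_0 (cs : CoxeterSystem M W) (x y x' : W) (h : BruhatLE cs x' x) :
    ∃ y' : W, BruhatLE cs y' y ∧ BruhatLE cs (x' * y') (x * y) := by
  exact statement_0' cs x y x' h

end BruhatSetup
end

section
/- With the setup of the order ≤_O (I, J, K pairwise disjoint and disconnected, σ : W_I → W_J an isomorphism x ↦ x*): if w, w₁ ∈ W(I,J,K) satisfy w ≤_O w₁, then for every w₂ in the coset w₁ W_K W_{I,J} there exists v in the coset w W_K W_{I,J} with v ≤ w₂ in Bruhat order. -/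
section BruhatSetup

variable {B : Type*} {W : Type*} [Group W] {M : CoxeterMatrix B}

/-- The setup of the order `≤_O`: `I`, `J`, `K` are pairwise disjoint and pairwise
disconnected subsets of the simple system (so that `W_{I∪J∪K} = W_I × W_J × W_K`),
and `σ : x ↦ x*` restricts to an isomorphism of Coxeter groups `W_I → W_J`
(a bijective group homomorphism sending simple reflections to simple reflections). -/
structure GoodSetup (cs : CoxeterSystem M W) (I J K : Set B) (σ : W → W) : Prop where
  disjIJ : Disjoint I J
  disjIK : Disjoint I K
  disjJK : Disjoint J K
  commIJ : ∀ i ∈ I, ∀ j ∈ J, Commute (cs.simple i) (cs.simple j)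
  commIK : ∀ i ∈ I, ∀ k ∈ K, Commute (cs.simple i) (cs.simple k)
  commJK : ∀ j ∈ J, ∀ k ∈ K, Commute (cs.simple j) (cs.simple k)
  directProd : ∀ x ∈ parab cs I, ∀ y ∈ parab cs J, ∀ z ∈ parab cs K,
    x * y * z = 1 → x = 1 ∧ y = 1 ∧ z = 1
  mulSigma : ∀ x ∈ parab cs I, ∀ y ∈ parab cs I, σ (x * y) = σ x * σ y
  bijSigma : Set.BijOn σ (parab cs I : Set W) (parab cs J : Set W)
  simpleSigma : ∀ i ∈ I, ∃ j ∈ J, σ (cs.simple i) = cs.simple j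

/-- Membership in the coset `[w] = w · W_K · W_{I,J}` where `W_{I,J} = {x x* : x ∈ W_I}`. -/
def inCoset (cs : CoxeterSystem M W) (I K : Set B) (σ : W → W) (w u : W) : Prop :=
  ∃ a ∈ parab cs K, ∃ x ∈ parab cs I, u = w * a * (x * σ x)

/-- The relation `≤_O`: `w' ≤_O w` iff some `u ∈ [w']` satisfies `u ≤ w` in Bruhat order. -/
def leO (cs : CoxeterSystem M W) (I K : Set B) (σ : W → W) (w' w : W) : Prop :=
  ∃ u, inCoset cs I K σ w' u ∧ BruhatLE cs u w

/-- The strict relation associated to `≤_O`. -/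
def ltO (cs : CoxeterSystem M W) (I K : Set B) (σ : W → W) (w' w : W) : Prop :=
  leO cs I K σ w' w ∧ w' ≠ w

/-- `Min(w)`: the elements of the coset `[w]` of length `ℓ(w)`. -/
def MinC (cs : CoxeterSystem M W) (I K : Set B) (σ : W → W) (w : W) : Set W :=
  {u : W | inCoset cs I K σ w u ∧ cs.length u = cs.length w}

/-- The set `M` of all elements having minimal length in their coset mod `W_K W_{I,J}`. -/
def Mset (cs : CoxeterSystem M W) (I J K : Set B) (σ : W → W) : Set W :=
  {u : W | ∃ w ∈ minReps cs (J ∪ K), u ∈ MinC cs I K σ w}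


namespace AuxBruhat

open List CoxeterSystem
open scoped Classical

variable {B : Type*} {W : Type*} [Group W] {M : CoxeterMatrix B} (cs : CoxeterSystem M W)

/-- The endomorphism of `W × ZMod 2` associated to the simple reflection `i`. -/
noncomputable def fE (i : B) : Function.End (W × ZMod 2) :=
  fun p => (cs.simple i * p.1 * cs.simple i,
    p.2 + (if p.1 = cs.simple i then 1 else 0))

private lemma if_eq_of_iff {P Q : Prop} [Decidable P] [Decidable Q] (h : P ↔ Q) :
    (if P then (1 : ZMod 2) else 0) = if Q then 1 else 0 := by
  rw [if_congr h rfl rfl]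

lemma fE_pow_apply (i j : B) (k : ℕ) (p : W × ZMod 2) :
    ((fE cs i * fE cs j) ^ k) p =
      ((cs.simple i * cs.simple j) ^ k * p.1 * ((cs.simple i * cs.simple j) ^ k)⁻¹,
        p.2 + ∑ h ∈ Finset.range (2 * k),
          (if p.1 = (cs.simple j * cs.simple i) ^ h * cs.simple j then 1 else 0)) := by
  induction k generalizing p with
  | zero =>
    show p = _
    simp
  | succ k ih =>
    have hmul : ((fE cs i * fE cs j) ^ (k+1)) p
        = ((fE cs i * fE cs j) ^ k) ((fE cs i * fE cs j) p) := by
      rw [pow_succ]; rfl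
    have hc1 : (p.1 = cs.simple j) ↔
        (p.1 = (cs.simple j * cs.simple i) ^ 0 * cs.simple j) := by
      rw [pow_zero, one_mul]
    have hc2 : (cs.simple j * p.1 * cs.simple j = cs.simple i) ↔
        (p.1 = (cs.simple j * cs.simple i) ^ 1 * cs.simple j) := by
      rw [pow_one]
      constructor
      · intro hh
        have := congrArg (fun z => cs.simple j * z * cs.simple j) hh
        simp only [mul_assoc] at this ⊢
        rw [cs.simple_mul_simple_cancel_left] at this
        rw [← this]
        rw [cs.simple_mul_simple_self, mul_one]
      · intro hh
        rw [hh]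
        simp only [mul_assoc]
        rw [cs.simple_mul_simple_cancel_left, cs.simple_mul_simple_self, mul_one]
    have hgp : (fE cs i * fE cs j) p =
        ((cs.simple i * cs.simple j) * p.1 * (cs.simple i * cs.simple j)⁻¹,
          p.2 + ((if p.1 = (cs.simple j * cs.simple i) ^ 0 * cs.simple j then 1 else 0)
            + (if p.1 = (cs.simple j * cs.simple i) ^ 1 * cs.simple j then 1 else 0))) := by
      show fE cs i (fE cs j p) = _
      simp only [fE]
      rw [Prod.mk.injEq]
      constructor
      · rw [mul_inv_rev, cs.inv_simple, cs.inv_simple]; group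
      · rw [add_assoc]
        congr 1
        rw [if_eq_of_iff hc1]; congr 1; exact if_eq_of_iff hc2
    rw [hmul, hgp, ih]
    rw [Prod.mk.injEq]
    have conj_iff : ∀ (g x y : W), (g * x * g⁻¹ = y) ↔ (x = g⁻¹ * y * g) := by
      intro g x y
      constructor
      · intro hh; rw [← hh]; group
      · intro hh; rw [hh]; group
    constructor
    · show _ = (cs.simple i * cs.simple j)^(k+1) * p.1 * ((cs.simple i * cs.simple j)^(k+1))⁻¹
      simp only [pow_succ, mul_inv_rev, mul_assoc]
    · show _ = p.2 + ∑ h ∈ Finset.range (2 * (k+1)), _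
      have h2k : 2 * (k + 1) = (2 * k + 1) + 1 := by ring
      rw [h2k, Finset.sum_range_succ', Finset.sum_range_succ']
      have hshift : ∀ h : ℕ,
          (if (cs.simple i * cs.simple j) * p.1 * (cs.simple i * cs.simple j)⁻¹
              = (cs.simple j * cs.simple i) ^ h * cs.simple j then (1 : ZMod 2) else 0)
          = (if p.1 = (cs.simple j * cs.simple i) ^ (h + 1 + 1) * cs.simple j then 1 else 0) := by
        intro h
        apply if_eq_of_iff
        rw [conj_iff]
        have key : (cs.simple i * cs.simple j)⁻¹ * ((cs.simple j * cs.simple i) ^ h * cs.simple j)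
            * (cs.simple i * cs.simple j)
            = (cs.simple j * cs.simple i) ^ (h + 1 + 1) * cs.simple j := by
          rw [mul_inv_rev, cs.inv_simple, cs.inv_simple]
          have lhs_eq : cs.simple j * cs.simple i * ((cs.simple j * cs.simple i) ^ h * cs.simple j)
              * (cs.simple i * cs.simple j)
              = ((cs.simple j * cs.simple i) * (cs.simple j * cs.simple i) ^ h)
                * ((cs.simple j * cs.simple i) * cs.simple j) := by
            simp only [mul_assoc]
          rw [lhs_eq, ← pow_succ', ← mul_assoc, ← pow_succ]
        rw [key]
      rw [Finset.sum_congr rfl (fun h _ => hshift h)]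
      simp only [Nat.zero_add, zero_add]
      abel

lemma fE_liftable : M.IsLiftable (fE cs) := by
  intro i j
  funext p
  rw [fE_pow_apply]
  have h1 : (cs.simple i * cs.simple j) ^ M.M i j = 1 := cs.simple_mul_simple_pow i j
  have h2 : (cs.simple j * cs.simple i) ^ M.M i j = 1 := cs.simple_mul_simple_pow' i j
  rw [h1]
  have hsum : ∑ h ∈ Finset.range (2 * M.M i j),
      (if p.1 = (cs.simple j * cs.simple i) ^ h * cs.simple j then (1 : ZMod 2) else 0) = 0 := by
    have hsplit : ∀ (f : ℕ → ZMod 2) (m : ℕ), ∑ h ∈ Finset.range (2 * m), f h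
        = ∑ h ∈ Finset.range m, f h + ∑ h ∈ Finset.range m, f (m + h) := by
      intro f m
      rw [two_mul]
      exact Finset.sum_range_add f m m
    rw [hsplit]
    have hper : ∀ h, (if p.1 = (cs.simple j * cs.simple i) ^ (M.M i j + h) * cs.simple j
        then (1 : ZMod 2) else 0)
        = (if p.1 = (cs.simple j * cs.simple i) ^ h * cs.simple j then 1 else 0) := by
      intro h
      apply if_eq_of_iff
      rw [pow_add, h2, one_mul]
    rw [Finset.sum_congr rfl (fun h _ => hper h), ← Finset.sum_add_distrib]
    apply Finset.sum_eq_zero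
    intro h _
    exact CharTwo.add_self_eq_zero _
  rw [hsum]
  show _ = p
  simp

/-- The reflection-cocycle representation `W →* End (W × ZMod 2)`. -/
noncomputable def eta : W →* Function.End (W × ZMod 2) :=
  cs.lift ⟨fE cs, fE_liftable cs⟩

lemma eta_simple (i : B) : eta cs (cs.simple i) = fE cs i :=
  cs.lift_apply_simple (fE_liftable cs) i

lemma eta_one_apply (p : W × ZMod 2) : eta cs 1 p = p := by
  rw [map_one]; rfl

lemma eta_mul_simple_apply (i : B) (w : W) (p : W × ZMod 2) :
    eta cs (cs.simple i * w) p = fE cs i (eta cs w p) := by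
  rw [map_mul, eta_simple]; rfl

lemma eta_fst (w : W) (p : W × ZMod 2) : (eta cs w p).1 = w * p.1 * w⁻¹ := by
  induction w using cs.simple_induction_left generalizing p with
  | one => rw [eta_one_apply]; simp
  | mul_simple_left w i ih =>
    rw [eta_mul_simple_apply]
    show cs.simple i * (eta cs w p).1 * cs.simple i = _
    rw [ih, mul_inv_rev, cs.inv_simple]
    group

lemma eta_snd (w : W) (p : W × ZMod 2) :
    (eta cs w p).2 = p.2 + (eta cs w (p.1, 0)).2 := by
  induction w using cs.simple_induction_left generalizing p with
  | one => rw [eta_one_apply, eta_one_apply]; simp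
  | mul_simple_left w i ih =>
    rw [eta_mul_simple_apply, eta_mul_simple_apply]
    show (eta cs w p).2 + (if (eta cs w p).1 = cs.simple i then 1 else 0)
        = p.2 + ((eta cs w (p.1, 0)).2 + (if (eta cs w (p.1, 0)).1 = cs.simple i then 1 else 0))
    rw [eta_fst cs w p, eta_fst cs w (p.1, 0), ih p]
    show p.2 + (eta cs w (p.1, 0)).2 + (if w * p.1 * w⁻¹ = cs.simple i then 1 else 0)
        = p.2 + ((eta cs w (p.1, 0)).2 + (if w * p.1 * w⁻¹ = cs.simple i then 1 else 0))
    rw [add_assoc]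

/-- `nn cs w t` is the cocycle value. -/
noncomputable def nn (w t : W) : ZMod 2 := (eta cs w (t, 0)).2

lemma nn_one (t : W) : nn cs 1 t = 0 := by
  show ((eta cs) 1 (t, 0)).2 = 0
  rw [eta_one_apply]

lemma nn_mul (v u t : W) : nn cs (v * u) t = nn cs u t + nn cs v (u * t * u⁻¹) := by
  show ((eta cs) (v * u) (t, 0)).2 = _
  rw [map_mul]
  show ((eta cs v) ((eta cs u) (t, 0))).2 = _
  rw [eta_snd cs v ((eta cs u) (t, 0)), eta_fst cs u (t, 0)]
  rfl

lemma nn_simple (i : B) (t : W) :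
    nn cs (cs.simple i) t = if t = cs.simple i then 1 else 0 := by
  show ((eta cs) (cs.simple i) (t, 0)).2 = _
  rw [eta_simple]
  show (0 : ZMod 2) + _ = _
  rw [zero_add]

lemma nn_wordProd (ω : List B) (t : W) :
    nn cs (cs.wordProd ω) t = ((cs.rightInvSeq ω).count t : ZMod 2) := by
  induction ω generalizing t with
  | nil =>
    rw [cs.wordProd_nil]
    simp [nn_one]
  | cons i ω ih =>
    rw [cs.wordProd_cons, nn_mul, nn_simple]
    have hris : cs.rightInvSeq (i :: ω)
        = ((cs.wordProd ω)⁻¹ * cs.simple i * cs.wordProd ω) :: cs.rightInvSeq ω := rfl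
    rw [hris, List.count_cons, Nat.cast_add, ih,
      apply_ite (fun n : ℕ => (n : ZMod 2)), Nat.cast_one, Nat.cast_zero]
    congr 1
    apply if_eq_of_iff
    rw [beq_iff_eq]
    constructor
    · intro hh
      rw [← hh]; group
    · intro hh
      rw [← hh]; group

lemma nn_reflection_self {t : W} (ht : cs.IsReflection t) : nn cs t t = 1 := by
  obtain ⟨q, i, rfl⟩ := ht
  have e1 : q⁻¹ * (q * cs.simple i * q⁻¹) * q⁻¹⁻¹ = cs.simple i := by group
  have hqq := nn_mul cs q q⁻¹ (q * cs.simple i * q⁻¹)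
  rw [mul_inv_cancel, nn_one, e1] at hqq
  -- hqq : 0 = nn q⁻¹ X + nn q (s i)
  have h1 := nn_mul cs (q * cs.simple i) q⁻¹ (q * cs.simple i * q⁻¹)
  have h2 := nn_mul cs q (cs.simple i) (q⁻¹ * (q * cs.simple i * q⁻¹) * q⁻¹⁻¹)
  rw [e1] at h2
  have e2 : cs.simple i * cs.simple i * (cs.simple i)⁻¹ = cs.simple i := by group
  rw [e2, nn_simple, if_pos rfl] at h2
  have e3 : q * cs.simple i * q⁻¹ = (q * cs.simple i) * q⁻¹ := by group
  rw [← e3] at h1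
  rw [h1, e1, h2]
  -- goal : nn q⁻¹ X + (1 + nn q (s i)) = 1
  have : nn cs q⁻¹ (q * cs.simple i * q⁻¹) + nn cs q (cs.simple i) = 0 := hqq.symm
  calc nn cs q⁻¹ (q * cs.simple i * q⁻¹) + (1 + nn cs q (cs.simple i))
      = (nn cs q⁻¹ (q * cs.simple i * q⁻¹) + nn cs q (cs.simple i)) + 1 := by abel
    _ = 1 := by rw [this, zero_add]

lemma mem_rightInvSeq_iff_nn {ω : List B} (hω : cs.IsReduced ω) (t : W) :
    t ∈ cs.rightInvSeq ω ↔ nn cs (cs.wordProd ω) t = 1 := by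
  rw [nn_wordProd]
  constructor
  · intro hmem
    rw [List.count_eq_one_of_mem hω.nodup_rightInvSeq hmem]
    simp
  · intro h1
    by_contra hnot
    rw [List.count_eq_zero.2 hnot] at h1
    simp at h1

/-- Strong exchange property. -/
theorem strong_exchange {ω : List B} (hω : cs.IsReduced ω) {t : W} (ht : cs.IsReflection t)
    (hlt : cs.length (cs.wordProd ω * t) < cs.length (cs.wordProd ω)) :
    ∃ j < ω.length, cs.wordProd ω * t = cs.wordProd (ω.eraseIdx j) := by
  have hmem : t ∈ cs.rightInvSeq ω := by
    rw [mem_rightInvSeq_iff_nn cs hω]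
    obtain ⟨ζ, hζred, hζ⟩ := cs.exists_reduced_word' (cs.wordProd ω * t)
    have hback : cs.wordProd ω = cs.wordProd ζ * t := by
      rw [← hζ, mul_assoc, ht.mul_self, mul_one]
    have hnnζ : nn cs (cs.wordProd ζ) t = 0 := by
      rcases (by decide : ∀ z : ZMod 2, z = 0 ∨ z = 1) (nn cs (cs.wordProd ζ) t) with h0 | h1
      · exact h0
      · exfalso
        have hmem' : t ∈ cs.rightInvSeq ζ := (mem_rightInvSeq_iff_nn cs hζred t).2 h1
        have hinv := cs.isRightInversion_of_mem_rightInvSeq hζred hmem'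
        have : cs.length (cs.wordProd ζ * t) < cs.length (cs.wordProd ζ) := hinv.2
        rw [← hback, ← hζ] at this
        omega
    rw [hback, nn_mul]
    have htt : t * t * t⁻¹ = t := by rw [ht.mul_self, one_mul, ht.inv]
    rw [htt, hnnζ, nn_reflection_self cs ht, add_zero]
  obtain ⟨j, hj, hget⟩ := List.getElem_of_mem hmem
  rw [cs.length_rightInvSeq] at hj
  refine ⟨j, hj, ?_⟩
  have hgetD : (cs.rightInvSeq ω).getD j 1 = t := by
    rw [List.getD_eq_getElem _ _ (by rw [cs.length_rightInvSeq]; exact hj)]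
    exact hget
  rw [← hgetD]
  exact cs.wordProd_mul_getD_rightInvSeq ω j

/-- Deletion property: every word has a reduced sublist with the same product. -/
theorem exists_reduced_sublist (ω : List B) :
    ∃ ω', ω' <+ ω ∧ cs.IsReduced ω' ∧ cs.wordProd ω' = cs.wordProd ω := by
  induction ω using List.reverseRecOn with
  | nil => exact ⟨[], List.Sublist.refl _, by simp [CoxeterSystem.IsReduced], rfl⟩
  | append_singleton ζ d ih =>
    obtain ⟨ζ₀, hsub, hred, hprod⟩ := ih
    by_cases hcand : cs.IsReduced (ζ₀ ++ [d])
    · exact ⟨ζ₀ ++ [d], hsub.append (List.Sublist.refl _), hcand,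
        by rw [cs.wordProd_append, cs.wordProd_append, hprod]⟩
    · have hlen : cs.length (cs.wordProd ζ₀ * cs.simple d) < cs.length (cs.wordProd ζ₀) := by
        have h1 := cs.length_mul_simple (cs.wordProd ζ₀) d
        have h2 : cs.length (cs.wordProd ζ₀ * cs.simple d) ≠ ζ₀.length + 1 := by
          intro hc
          apply hcand
          show cs.length (cs.wordProd (ζ₀ ++ [d])) = _
          rw [cs.wordProd_append, cs.wordProd_singleton, List.length_append, hc]
          simp
      -- hred : |ζ₀| = ℓ (π ζ₀)
        have h3 : cs.length (cs.wordProd ζ₀) = ζ₀.length := hred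
        omega
      obtain ⟨j, hj, hex⟩ := strong_exchange cs hred (cs.isReflection_simple d) hlen
      refine ⟨ζ₀.eraseIdx j, ?_, ?_, ?_⟩
      · exact ((ζ₀.eraseIdx_sublist j).trans hsub).trans (List.sublist_append_left _ _)
      · show cs.length (cs.wordProd (ζ₀.eraseIdx j)) = _
        rw [← hex]
        have h3 : cs.length (cs.wordProd ζ₀) = ζ₀.length := hred
        have h4 := cs.length_mul_simple (cs.wordProd ζ₀) d
        rw [List.length_eraseIdx, if_pos hj]
        omega
      · rw [← hex, cs.wordProd_append, cs.wordProd_singleton, hprod]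

/-! ### The chain (Bruhat) order -/

/-- Chain version of the Bruhat order. -/
inductive Ch (cs : CoxeterSystem M W) : W → W → Prop
  | refl (w : W) : Ch cs w w
  | step {u v t : W} : Ch cs u v → cs.IsReflection t →
      cs.length v < cs.length (v * t) → Ch cs u (v * t)

lemma Ch.trans' {a b c : W} (h1 : Ch cs a b) (h2 : Ch cs b c) : Ch cs a c := by
  induction h2 with
  | refl => exact h1
  | step h ht hl ih => exact Ch.step ih ht hl

lemma Ch.length_le {a b : W} (h : Ch cs a b) : cs.length a ≤ cs.length b := by
  induction h with
  | refl => exact le_refl _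
  | step h ht hl ih => omega

lemma Ch.eq_of_length_ge {a b : W} (h : Ch cs a b) (hl : cs.length b ≤ cs.length a) :
    a = b := by
  cases h with
  | refl => rfl
  | step h ht hlt =>
    have := Ch.length_le cs h
    omega

/-- Going up by one simple reflection. -/
lemma Ch.up {v : W} (i : B) (h : cs.length v < cs.length (v * cs.simple i)) :
    Ch cs v (v * cs.simple i) :=
  Ch.step (Ch.refl v) (cs.isReflection_simple i) h

/-- Going from `v * s i` up to `v`. -/
lemma Ch.up' {v : W} (i : B) (h : cs.length (v * cs.simple i) < cs.length v) :
    Ch cs (v * cs.simple i) v := by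
  have := Ch.step (Ch.refl (v * cs.simple i)) (cs.isReflection_simple i)
    (by rwa [cs.simple_mul_simple_cancel_right])
  rwa [cs.simple_mul_simple_cancel_right] at this

lemma length_parity_mul_reflection {v t : W} (ht : cs.IsReflection t) :
    cs.length (v * t) % 2 ≠ cs.length v % 2 := by
  have h1 := cs.length_mul_mod_two v t
  obtain ⟨k, hk⟩ := ht.odd_length
  omega

/-- Conjugated step: from `x ≤ c * sᵢ` to `x ≤ c * t * sᵢ`. -/
lemma Ch.step_conj {x c : W} (t : W) (i : B) (h : Ch cs x (c * cs.simple i))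
    (ht : cs.IsReflection t)
    (hl : cs.length (c * cs.simple i) < cs.length (c * t * cs.simple i)) :
    Ch cs x (c * t * cs.simple i) := by
  have ht' : cs.IsReflection (cs.simple i * t * cs.simple i) := by
    have := ht.conj (cs.simple i)
    rwa [cs.inv_simple] at this
  have he : (c * cs.simple i) * (cs.simple i * t * cs.simple i) = c * t * cs.simple i := by
    simp only [mul_assoc, cs.simple_mul_simple_cancel_left]
  have := Ch.step h ht' (by rw [he]; exact hl)
  rwa [he] at this

/-- The descent lifting property. -/
lemma Ch.liftQ : ∀ n : ℕ, ∀ a b : W, ∀ i : B, Ch cs a b →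
    cs.length (b * cs.simple i) < cs.length b → cs.length b ≤ n →
    ((cs.length (a * cs.simple i) < cs.length a →
        Ch cs (a * cs.simple i) (b * cs.simple i)) ∧
      (cs.length a < cs.length (a * cs.simple i) → Ch cs a (b * cs.simple i))) := by
  intro n
  induction n using Nat.strong_induction_on with
  | _ n IH =>
  intro a b i hab hdesc hbound
  cases hab with
  | refl =>
    constructor
    · intro _; exact Ch.refl _
    · intro h2; omega
  | @step c t hac ht hct =>
    -- b = c * t
    have hbsi := cs.length_mul_simple (c * t) i
    have hcsi := cs.length_mul_simple c i
    rcases hcsi with hup | hdown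
    · -- ℓ(c * sᵢ) = ℓ c + 1
      have hparity := length_parity_mul_reflection cs (v := c) ht
      have hbig : cs.length (c * t) = cs.length c + 1 ∨
          cs.length c + 3 ≤ cs.length (c * t) := by omega
      rcases hbig with heq1 | hge3
      · -- exchange argument: here c = (c * t) * sᵢ
        have hcd : cs.length ((c * t) * cs.simple i) + 1 = cs.length (c * t) := by omega
        obtain ⟨ζ, hζred, hζ⟩ := cs.exists_reduced_word' ((c * t) * cs.simple i)
        have hζlen : cs.length (cs.wordProd ζ) = ζ.length := hζred
        have hωprod : cs.wordProd (ζ ++ [i]) = c * t := by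
          rw [cs.wordProd_append, cs.wordProd_singleton, ← hζ,
            cs.simple_mul_simple_cancel_right]
        have hωred : cs.IsReduced (ζ ++ [i]) := by
          show cs.length (cs.wordProd (ζ ++ [i])) = _
          rw [hωprod, List.length_append, List.length_singleton]
          rw [← hζ] at hζlen
          omega
        have hlt2 : cs.length (cs.wordProd (ζ ++ [i]) * t) <
            cs.length (cs.wordProd (ζ ++ [i])) := by
          rw [hωprod, mul_assoc, ht.mul_self, mul_one]
          exact hct
        obtain ⟨j, hj, hex⟩ := strong_exchange cs hωred ht hlt2
        rw [hωprod, mul_assoc, ht.mul_self, mul_one] at hex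
        -- hex : c = π ((ζ ++ [i]).eraseIdx j)
        rcases lt_or_ge j ζ.length with hjlt | hjge
        · exfalso
          rw [List.eraseIdx_append_of_lt_length hjlt] at hex
          have hmul : c * cs.simple i = cs.wordProd (ζ.eraseIdx j) := by
            rw [hex, cs.wordProd_append, cs.wordProd_singleton,
              cs.simple_mul_simple_cancel_right]
          have hle := cs.length_wordProd_le (ζ.eraseIdx j)
          rw [← hmul] at hle
          rw [List.length_eraseIdx, if_pos hjlt] at hle
          rw [← hζ] at hζlen
          omega
        · have hjeq : (ζ ++ [i]).eraseIdx j = ζ := by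
            rw [List.eraseIdx_append_of_length_le hjge]
            have hj0 : j - ζ.length = 0 := by
              rw [List.length_append, List.length_singleton] at hj
              omega
            rw [hj0]
            simp
          rw [hjeq, ← hζ] at hex
          -- hex : c = (c * t) * sᵢ
          constructor
          · intro hadown
            have h1 : Ch cs (a * cs.simple i) a := Ch.up' cs i hadown
            have h2 : Ch cs (a * cs.simple i) c := Ch.trans' cs h1 hac
            rwa [hex] at h2
          · intro haup
            have h2 : Ch cs a c := hac
            rwa [hex] at h2
      · -- ℓ(c*t) ≥ ℓ c + 3 : pure chain constructions
        have hc1 : Ch cs c (c * cs.simple i) := Ch.up cs i (by omega)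
        have hc2 : Ch cs (c * cs.simple i) (c * t * cs.simple i) :=
          Ch.step_conj cs t i (Ch.refl _) ht (by omega)
        constructor
        · intro hadown
          have h1 : Ch cs (a * cs.simple i) a := Ch.up' cs i hadown
          exact Ch.trans' cs (Ch.trans' cs (Ch.trans' cs h1 hac) hc1) hc2
        · intro haup
          exact Ch.trans' cs (Ch.trans' cs hac hc1) hc2
    · -- ℓ(c * sᵢ) + 1 = ℓ c : use induction hypothesis
      have hIH := IH (cs.length c) (by omega) a c i hac (by omega) (le_refl _)
      have hl : cs.length (c * cs.simple i) < cs.length (c * t * cs.simple i) := by omega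
      constructor
      · intro hadown
        exact Ch.step_conj cs t i (hIH.1 hadown) ht hl
      · intro haup
        exact Ch.step_conj cs t i (hIH.2 haup) ht hl

/-- The ascent lifting property (property Z). -/
lemma Ch.liftP : ∀ n : ℕ, ∀ a b : W, ∀ i : B, Ch cs a b →
    cs.length b < cs.length (b * cs.simple i) →
    cs.length a < cs.length (a * cs.simple i) →
    cs.length (b * cs.simple i) ≤ n →
    Ch cs (a * cs.simple i) (b * cs.simple i) := by
  intro n
  induction n using Nat.strong_induction_on with
  | _ n IH =>
  intro a b i hab hbup haup hbound
  cases hab with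
  | refl => exact Ch.refl _
  | @step c t hac ht hct =>
    have hcsi := cs.length_mul_simple c i
    rcases hcsi with hup | hdown
    · -- ℓ(c sᵢ) = ℓ c + 1
      have h1 : Ch cs (a * cs.simple i) (c * cs.simple i) :=
        IH (cs.length (c * cs.simple i)) (by omega) a c i hac (by omega) haup (le_refl _)
      exact Ch.step_conj cs t i h1 ht (by omega)
    · -- ℓ(c sᵢ) = ℓ c - 1
      have hQ := (Ch.liftQ cs (cs.length c) a c i hac (by omega) (le_refl _)).2 haup
      -- hQ : Ch a (c * sᵢ)
      have hcc : (c * cs.simple i) * cs.simple i = c := cs.simple_mul_simple_cancel_right i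
      have h2 : Ch cs (a * cs.simple i) c := by
        have := IH (cs.length c) (by omega) a (c * cs.simple i) i hQ
          (by rw [hcc]; omega) haup (by rw [hcc])
        rwa [hcc] at this
      have h3 : Ch cs (a * cs.simple i) (c * t) := Ch.step h2 ht hct
      exact Ch.trans' cs h3 (Ch.up cs i hbup)

/-- If `a ≤ b` and `b` has a right descent at `i`, then `a * sᵢ ≤ b`. -/
lemma Ch.liftR {a b : W} {i : B} (hab : Ch cs a b)
    (hdesc : cs.length (b * cs.simple i) < cs.length b) :
    Ch cs (a * cs.simple i) b := by
  rcases cs.length_mul_simple a i with hup | hdown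
  · have hQ := (Ch.liftQ cs (cs.length b) a b i hab hdesc (le_refl _)).2 (by omega)
    have hbb : (b * cs.simple i) * cs.simple i = b := cs.simple_mul_simple_cancel_right i
    have := Ch.liftP cs (cs.length b) a (b * cs.simple i) i hQ
      (by rw [hbb]; omega) (by omega) (by rw [hbb])
    rwa [hbb] at this
  · exact Ch.trans' cs (Ch.up' cs i (by omega)) hab


/-- Bruhat order (all reduced words version) implies chain order and conversely. -/
lemma Ch.toBruhatLE {a b : W} (h : Ch cs a b) : BruhatLE cs a b := by
  induction h with
  | refl =>
    intro ω hred hprod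
    exact ⟨ω, List.Sublist.refl _, hred, hprod⟩
  | @step v t huv ht hlt ih =>
    intro ω hred hprod
    have hlt2 : cs.length (cs.wordProd ω * t) < cs.length (cs.wordProd ω) := by
      rw [hprod, mul_assoc, ht.mul_self, mul_one]
      omega
    obtain ⟨j, hj, hex⟩ := strong_exchange cs hred ht hlt2
    have hv : cs.wordProd (ω.eraseIdx j) = v := by
      rw [← hex, hprod, mul_assoc, ht.mul_self, mul_one]
    obtain ⟨ζ, hζsub, hζred, hζprod⟩ := exists_reduced_sublist cs (ω.eraseIdx j)
    obtain ⟨ω', hsub', hred', hprod'⟩ := ih ζ hζred (by rw [hζprod, hv])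
    exact ⟨ω', (hsub'.trans hζsub).trans (ω.eraseIdx_sublist j), hred', hprod'⟩

lemma Ch.ofSublist : ∀ ω ω' : List B, cs.IsReduced ω → ω' <+ ω → cs.IsReduced ω' →
    Ch cs (cs.wordProd ω') (cs.wordProd ω) := by
  intro ω
  induction ω using List.reverseRecOn with
  | nil =>
    intro ω' _ hsub _
    rw [List.sublist_nil.1 hsub]
    exact Ch.refl _
  | append_singleton ζ d ih =>
    intro ω' hred hsub hred'
    have hζred : cs.IsReduced ζ := by
      have := hred.take ζ.length
      rwa [List.take_left] at this
    have hζlen : cs.length (cs.wordProd ζ) = ζ.length := hζred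
    have hωlen : cs.length (cs.wordProd (ζ ++ [d])) = ζ.length + 1 := by
      have : cs.length (cs.wordProd (ζ ++ [d])) = (ζ ++ [d]).length := hred
      simpa using this
    have hπω : cs.wordProd (ζ ++ [d]) = cs.wordProd ζ * cs.simple d := by
      rw [cs.wordProd_append, cs.wordProd_singleton]
    rcases List.sublist_append_iff.1 hsub with ⟨x, y, rfl, hx, hy⟩
    rcases List.sublist_singleton.1 hy with rfl | rfl
    · have hxred : cs.IsReduced x := by simpa using hred'
      have h1 : Ch cs (cs.wordProd x) (cs.wordProd ζ) := ih x hζred hx hxred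
      have h2 : Ch cs (cs.wordProd ζ) (cs.wordProd (ζ ++ [d])) := by
        rw [hπω] at hωlen ⊢
        exact Ch.up cs d (by omega)
      have := Ch.trans' cs h1 h2
      simpa using this
    · have hxred : cs.IsReduced x := by
        have := hred'.take x.length
        rwa [List.take_left] at this
      have hxlen : cs.length (cs.wordProd x) = x.length := hxred
      have hω'len : cs.length (cs.wordProd (x ++ [d])) = x.length + 1 := by
        have : cs.length (cs.wordProd (x ++ [d])) = (x ++ [d]).length := hred'
        simpa using this
      have hπω' : cs.wordProd (x ++ [d]) = cs.wordProd x * cs.simple d := by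
        rw [cs.wordProd_append, cs.wordProd_singleton]
      have h1 : Ch cs (cs.wordProd x) (cs.wordProd ζ) := ih x hζred hx hxred
      have h2 : Ch cs (cs.wordProd x * cs.simple d) (cs.wordProd ζ * cs.simple d) := by
        apply Ch.liftP cs (cs.length (cs.wordProd ζ * cs.simple d)) _ _ _ h1
        · rw [← hπω]; omega
        · rw [← hπω']; omega
        · exact le_refl _
      rw [← hπω, ← hπω'] at h2
      exact h2

lemma bruhatLE_iff_Ch {a b : W} : BruhatLE cs a b ↔ Ch cs a b := by
  constructor
  · intro h
    obtain ⟨ω, hred, hprod⟩ := cs.exists_reduced_word' b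
    obtain ⟨ω', hsub, hred', hprod'⟩ := h ω hred hprod.symm
    have := Ch.ofSublist cs ω ω' hred hsub hred'
    rwa [hprod', ← hprod] at this
  · exact Ch.toBruhatLE cs


/-! ### Parabolic subgroups -/

lemma wordProd_mem_parab {L : Set B} {ω : List B} (hω : ∀ c ∈ ω, c ∈ L) :
    cs.wordProd ω ∈ parab cs L := by
  induction ω with
  | nil => rw [cs.wordProd_nil]; exact one_mem _
  | cons i ω ih =>
    rw [cs.wordProd_cons]
    exact mul_mem (Subgroup.subset_closure ⟨i, hω i (List.mem_cons_self), rfl⟩)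
      (ih (fun c hc => hω c (List.mem_cons_of_mem i hc)))

lemma simple_mem_parab {L : Set B} {i : B} (hi : i ∈ L) : cs.simple i ∈ parab cs L :=
  Subgroup.subset_closure ⟨i, hi, rfl⟩

lemma mem_parab_iff {L : Set B} {x : W} :
    x ∈ parab cs L ↔ ∃ ω : List B, (∀ c ∈ ω, c ∈ L) ∧ cs.wordProd ω = x := by
  constructor
  · intro hx
    refine Subgroup.closure_induction ?_ ?_ ?_ ?_ hx
    · rintro g ⟨i, hi, rfl⟩
      exact ⟨[i], by simpa using hi, cs.wordProd_singleton i⟩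
    · exact ⟨[], by simp, cs.wordProd_nil⟩
    · rintro g g' _ _ ⟨ω1, h1, rfl⟩ ⟨ω2, h2, rfl⟩
      refine ⟨ω1 ++ ω2, ?_, (cs.wordProd_append ω1 ω2)⟩
      intro c hc
      rcases List.mem_append.1 hc with hc | hc
      · exact h1 c hc
      · exact h2 c hc
    · rintro g _ ⟨ω, h1, rfl⟩
      refine ⟨ω.reverse, ?_, cs.wordProd_reverse ω⟩
      intro c hc
      exact h1 c (List.mem_reverse.1 hc)
  · rintro ⟨ω, hω, rfl⟩
    exact wordProd_mem_parab cs hω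

lemma parab_mono {L1 L2 : Set B} (h : L1 ⊆ L2) : parab cs L1 ≤ parab cs L2 :=
  Subgroup.closure_mono (fun _ ⟨a, ha, e⟩ => ⟨a, h ha, e⟩)

lemma exists_reduced_word_parab {L : Set B} {x : W} (hx : x ∈ parab cs L) :
    ∃ ω, (∀ c ∈ ω, c ∈ L) ∧ cs.IsReduced ω ∧ cs.wordProd ω = x := by
  obtain ⟨ω, hω, rfl⟩ := (mem_parab_iff cs).1 hx
  obtain ⟨ζ, hsub, hred, hprod⟩ := exists_reduced_sublist cs ω
  exact ⟨ζ, fun c hc => hω c (hsub.subset hc), hred, hprod⟩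

lemma parab_descent {L : Set B} {x : W} (hx : x ∈ parab cs L) (hne : x ≠ 1) :
    ∃ c ∈ L, ∃ x' ∈ parab cs L, x = x' * cs.simple c ∧ cs.length x' + 1 = cs.length x := by
  obtain ⟨ω, hω, hred, rfl⟩ := exists_reduced_word_parab cs hx
  rcases List.eq_nil_or_concat ω with rfl | ⟨ζ, d, hcd⟩
  · exact absurd (cs.wordProd_nil) hne
  · rw [List.concat_eq_append] at hcd
    subst hcd
    have hd : d ∈ L := hω d (by simp)
    have hζL : ∀ c ∈ ζ, c ∈ L := fun c hc => hω c (by simp [hc])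
    have hζred : cs.IsReduced ζ := by
      have := hred.take ζ.length
      rwa [List.take_left] at this
    refine ⟨d, hd, cs.wordProd ζ, wordProd_mem_parab cs hζL, ?_, ?_⟩
    · rw [cs.wordProd_append, cs.wordProd_singleton]
    · have h1 : cs.length (cs.wordProd ζ) = ζ.length := hζred
      have h2 : cs.length (cs.wordProd (ζ ++ [d])) = ζ.length + 1 := by
        have : cs.length (cs.wordProd (ζ ++ [d])) = (ζ ++ [d]).length := hred
        simpa using this
      omega

lemma commute_simple_parab {L : Set B} {i : B}
    (hcomm : ∀ j ∈ L, Commute (cs.simple i) (cs.simple j)) {y : W} (hy : y ∈ parab cs L) :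
    Commute (cs.simple i) y := by
  obtain ⟨ω, hω, rfl⟩ := (mem_parab_iff cs).1 hy
  clear hy
  induction ω with
  | nil => rw [cs.wordProd_nil]; exact Commute.one_right _
  | cons c ω ih =>
    rw [cs.wordProd_cons]
    exact Commute.mul_right (hcomm c (hω c (List.mem_cons_self)))
      (ih (fun c' hc' => hω c' (List.mem_cons_of_mem c hc')))

lemma commute_parab_parab {L1 L2 : Set B}
    (hcomm : ∀ i ∈ L1, ∀ j ∈ L2, Commute (cs.simple i) (cs.simple j))
    {x y : W} (hx : x ∈ parab cs L1) (hy : y ∈ parab cs L2) : Commute x y := by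
  obtain ⟨ω, hω, rfl⟩ := (mem_parab_iff cs).1 hx
  clear hx
  induction ω with
  | nil => rw [cs.wordProd_nil]; exact Commute.one_left _
  | cons c ω ih =>
    rw [cs.wordProd_cons]
    exact Commute.mul_left
      (commute_simple_parab cs (hcomm c (hω c (List.mem_cons_self))) hy)
      (ih (fun c' hc' => hω c' (List.mem_cons_of_mem c hc')))

lemma not_minReps {L : Set B} {w : W} (hw : w ∉ minReps cs L) :
    ∃ c ∈ L, cs.length (w * cs.simple c) + 1 = cs.length w := by
  rw [minReps, Set.mem_setOf_eq] at hw
  push_neg at hw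
  obtain ⟨c, hc, hlen⟩ := hw
  rcases cs.length_mul_simple w c with hup | hdown
  · omega
  · exact ⟨c, hc, hdown⟩

lemma parab_decomp (L : Set B) : ∀ n : ℕ, ∀ g : W, cs.length g ≤ n →
    ∃ q ∈ minReps cs L, ∃ r ∈ parab cs L, g = q * r ∧
      cs.length g = cs.length q + cs.length r := by
  intro n
  induction n using Nat.strong_induction_on with
  | _ n IH =>
  intro g hg
  by_cases hmem : g ∈ minReps cs L
  · exact ⟨g, hmem, 1, one_mem _, by simp, by simp⟩
  · obtain ⟨c, hc, hdown⟩ := not_minReps cs hmem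
    have hlt : cs.length (g * cs.simple c) < n := by omega
    obtain ⟨q, hq, r, hr, hgs, hlen⟩ := IH (cs.length (g * cs.simple c)) (by omega)
      (g * cs.simple c) (le_refl _)
    have hgeq : g = q * (r * cs.simple c) := by
      have : g = (g * cs.simple c) * cs.simple c := by
        rw [cs.simple_mul_simple_cancel_right]
      rw [this, hgs, mul_assoc]
    have hrc : r * cs.simple c ∈ parab cs L := mul_mem hr (simple_mem_parab cs hc)
    refine ⟨q, hq, r * cs.simple c, hrc, hgeq, ?_⟩
    rcases cs.length_mul_simple r c with hup | hdown2
    · omega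
    · exfalso
      have hle := cs.length_mul_le q (r * cs.simple c)
      rw [← hgeq] at hle
      omega

lemma minReps_Ch_mul {L : Set B} : ∀ n : ℕ, ∀ w y : W, w ∈ minReps cs L → y ∈ parab cs L →
    cs.length y ≤ n → Ch cs w (w * y) := by
  intro n
  induction n using Nat.strong_induction_on with
  | _ n IH =>
  intro w y hw hy hbound
  by_cases hone : y = 1
  · rw [hone, mul_one]; exact Ch.refl w
  · obtain ⟨c, hc, y', hy', rfl, hlen⟩ := parab_descent cs hy hone
    have h1 : Ch cs w (w * y') := IH (cs.length y') (by omega) w y' hw hy' (le_refl _)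
    rw [← mul_assoc]
    rcases cs.length_mul_simple (w * y') c with hup | hdown
    · exact Ch.trans' cs h1 (Ch.up cs c (by omega))
    · exact (Ch.liftQ cs (cs.length (w * y')) w (w * y') c h1 (by omega) (le_refl _)).2
        (hw c hc)

lemma minReps_length_le {L : Set B} {w y : W} (hw : w ∈ minReps cs L)
    (hy : y ∈ parab cs L) : cs.length w ≤ cs.length (w * y) :=
  (minReps_Ch_mul cs (cs.length y) w y hw hy (le_refl _)).length_le cs

lemma minReps_mul_length {L : Set B} {w y : W} (hw : w ∈ minReps cs L)
    (hy : y ∈ parab cs L) : cs.length (w * y) = cs.length w + cs.length y := by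
  obtain ⟨q, hq, r, hr, hdecomp, hlen⟩ := parab_decomp cs L (cs.length (w * y)) (w * y)
    (le_refl _)
  have hry : r * y⁻¹ ∈ parab cs L := mul_mem hr (inv_mem hy)
  have hwq : w = q * (r * y⁻¹) := by
    have : w = (w * y) * y⁻¹ := by group
    rw [this, hdecomp]
    group
  have hyr : y * r⁻¹ ∈ parab cs L := mul_mem hy (inv_mem hr)
  have hqw : q = w * (y * r⁻¹) := by
    have : q = (w * y) * r⁻¹ := by rw [hdecomp]; group
    rw [this]
    group
  have h1 : cs.length q ≤ cs.length w := by
    have := minReps_length_le cs hq hry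
    rwa [← hwq] at this
  have h2 : cs.length w ≤ cs.length q := by
    have := minReps_length_le cs hw hyr
    rwa [← hqw] at this
  have hchain := minReps_Ch_mul cs (cs.length (r * y⁻¹)) q (r * y⁻¹) hq hry (le_refl _)
  have heq : q = q * (r * y⁻¹) := Ch.eq_of_length_ge cs hchain (by rw [← hwq]; omega)
  have hr1 : r * y⁻¹ = 1 := by
    have := heq.symm
    rwa [mul_eq_left] at this
  have hreqy : r = y := by
    have : r * y⁻¹ * y = 1 * y := by rw [hr1]
    rwa [inv_mul_cancel_right, one_mul] at this
  rw [hlen, hreqy]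
  omega


/-! ### Lemmas depending on the good setup -/

section Setup

variable {I J K : Set B} {σ : W → W} (h : GoodSetup cs I J K σ)

include h

lemma simple_ne_simple_JK {i t : B} (hi : i ∈ I) (ht : t ∈ J ∪ K) :
    cs.simple i ≠ cs.simple t := by
  intro he
  have hlen : cs.length (cs.simple i) = 1 := cs.length_simple i
  rcases ht with hJ | hK
  · have := h.directProd (cs.simple i) (simple_mem_parab cs hi)
      (cs.simple t) (simple_mem_parab cs hJ) 1 (one_mem _)
      (by rw [← he, mul_one, cs.simple_mul_simple_self])
    rw [this.1] at hlen
    simp at hlen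
  · have := h.directProd (cs.simple i) (simple_mem_parab cs hi)
      1 (one_mem _) (cs.simple t) (simple_mem_parab cs hK)
      (by rw [← he, mul_one, cs.simple_mul_simple_self])
    rw [this.1] at hlen
    simp at hlen

lemma commute_simple_JK {i t : B} (hi : i ∈ I) (ht : t ∈ J ∪ K) :
    Commute (cs.simple i) (cs.simple t) := by
  rcases ht with hJ | hK
  · exact h.commIJ i hi t hJ
  · exact h.commIK i hi t hK

lemma minReps_mul_simpleI {z : W} (hz : z ∈ minReps cs (J ∪ K)) {i : B} (hi : i ∈ I) :
    z * cs.simple i ∈ minReps cs (J ∪ K) := by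
  intro t ht
  have hcomm : cs.simple i * cs.simple t = cs.simple t * cs.simple i :=
    (commute_simple_JK cs h hi ht).eq
  have hzt := hz t ht
  have htr1 := cs.length_mul_simple z i
  have htr2 := cs.length_mul_simple (z * cs.simple i) t
  by_contra hcon
  push_neg at hcon
  have hdown2 : cs.length (z * cs.simple i * cs.simple t) + 1 = cs.length (z * cs.simple i) := by
    omega
  rcases htr1 with hup | hdown
  · -- ℓ(z sᵢ) = ℓ z + 1 : exchange argument
    have hzst : cs.length (z * cs.simple t) = cs.length z + 1 := by
      have := cs.length_mul_simple z t
      omega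
    obtain ⟨ζ, hζred, hζ⟩ := cs.exists_reduced_word' z
    have hζlen : cs.length (cs.wordProd ζ) = ζ.length := hζred
    rw [← hζ] at hζlen
    have hωprod : cs.wordProd (ζ ++ [t]) = z * cs.simple t := by
      rw [cs.wordProd_append, cs.wordProd_singleton, ← hζ]
    have hωred : cs.IsReduced (ζ ++ [t]) := by
      show cs.length (cs.wordProd (ζ ++ [t])) = _
      rw [hωprod, List.length_append, List.length_singleton]
      omega
    have hcomm2 : z * cs.simple t * cs.simple i = z * cs.simple i * cs.simple t := by
      rw [mul_assoc, ← hcomm, mul_assoc]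
    have hlt : cs.length (cs.wordProd (ζ ++ [t]) * cs.simple i) <
        cs.length (cs.wordProd (ζ ++ [t])) := by
      rw [hωprod, hcomm2]
      omega
    obtain ⟨j, hj, hex⟩ := strong_exchange cs hωred (cs.isReflection_simple i) hlt
    rw [hωprod, hcomm2] at hex
    rcases lt_or_ge j ζ.length with hjlt | hjge
    · rw [List.eraseIdx_append_of_lt_length hjlt, cs.wordProd_append,
        cs.wordProd_singleton] at hex
      have hcancel : z * cs.simple i = cs.wordProd (ζ.eraseIdx j) :=
        mul_right_cancel hex
      have hle := cs.length_wordProd_le (ζ.eraseIdx j)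
      rw [← hcancel, List.length_eraseIdx, if_pos hjlt] at hle
      omega
    · have hjeq : (ζ ++ [t]).eraseIdx j = ζ := by
        rw [List.eraseIdx_append_of_length_le hjge]
        have hj0 : j - ζ.length = 0 := by
          rw [List.length_append, List.length_singleton] at hj
          omega
        rw [hj0]
        simp
      rw [hjeq, ← hζ] at hex
      -- hex : z * sᵢ * sₜ = z
      have : cs.simple i * cs.simple t = 1 := by
        have h2 : z * (cs.simple i * cs.simple t) = z * 1 := by
          rw [mul_one, ← mul_assoc]
          exact hex
        exact mul_left_cancel h2
      have : cs.simple i = cs.simple t := by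
        have h3 : cs.simple i * cs.simple t * cs.simple t = 1 * cs.simple t := by rw [this]
        rw [cs.simple_mul_simple_cancel_right, one_mul] at h3
        exact h3
      exact simple_ne_simple_JK cs h hi ht this
  · -- ℓ(z sᵢ) = ℓ z - 1 : direct contradiction
    have hrw : z * cs.simple i * cs.simple t * cs.simple i = z * cs.simple t := by
      rw [mul_assoc (z * cs.simple i), ← hcomm, ← mul_assoc, cs.simple_mul_simple_cancel_right]
    have hle := cs.length_mul_simple (z * cs.simple i * cs.simple t) i
    rw [hrw] at hle
    omega

lemma minReps_mul_parabI {w x : W} (hw : w ∈ minReps cs (J ∪ K)) (hx : x ∈ parab cs I) :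
    w * x ∈ minReps cs (J ∪ K) := by
  obtain ⟨ω, hω, rfl⟩ := (mem_parab_iff cs).1 hx
  clear hx
  induction ω generalizing w with
  | nil => rw [cs.wordProd_nil, mul_one]; exact hw
  | cons c ω ih =>
    rw [cs.wordProd_cons, ← mul_assoc]
    exact ih (minReps_mul_simpleI cs h hw (hω c (List.mem_cons_self)))
      (fun c' hc' => hω c' (List.mem_cons_of_mem c hc'))

lemma parab_JK_mul_length {b a : W} (hb : b ∈ parab cs J) (ha : a ∈ parab cs K) :
    cs.length (b * a) = cs.length b + cs.length a := by
  have main : ∀ n : ℕ, ∀ a : W, a ∈ parab cs K → cs.length a ≤ n →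
      cs.length (b * a) = cs.length b + cs.length a := by
    intro n
    induction n using Nat.strong_induction_on with
    | _ n IH =>
    intro a ha hbound
    by_cases hone : a = 1
    · rw [hone, mul_one]; simp
    · obtain ⟨k, hk, a', ha', rfl, hlen⟩ := parab_descent cs ha hone
      have hIH : cs.length (b * a') = cs.length b + cs.length a' :=
        IH (cs.length a') (by omega) a' ha' (le_refl _)
      rw [← mul_assoc]
      rcases cs.length_mul_simple (b * a') k with hup | hdown
      · omega
      · exfalso
        obtain ⟨ζJ, hζJL, hζJred, hζJ⟩ := exists_reduced_word_parab cs hb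
        obtain ⟨ζK, hζKL, hζKred, hζK⟩ := exists_reduced_word_parab cs ha'
        have hωprod : cs.wordProd (ζJ ++ ζK) = b * a' := by
          rw [cs.wordProd_append, hζJ, hζK]
        have hζJlen : cs.length (cs.wordProd ζJ) = ζJ.length := hζJred
        have hζKlen : cs.length (cs.wordProd ζK) = ζK.length := hζKred
        rw [hζJ] at hζJlen
        rw [hζK] at hζKlen
        have hωred : cs.IsReduced (ζJ ++ ζK) := by
          show cs.length (cs.wordProd (ζJ ++ ζK)) = _
          rw [hωprod, List.length_append]
          omega
        have hlt : cs.length (cs.wordProd (ζJ ++ ζK) * cs.simple k) <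
            cs.length (cs.wordProd (ζJ ++ ζK)) := by
          rw [hωprod]
          omega
        obtain ⟨j, hj, hex⟩ := strong_exchange cs hωred (cs.isReflection_simple k) hlt
        rw [hωprod] at hex
        rcases lt_or_ge j ζJ.length with hjlt | hjge
        · rw [List.eraseIdx_append_of_lt_length hjlt, cs.wordProd_append, hζK] at hex
          -- hex : b * a' * s k = π(ζJ') * a'
          set QJ := cs.wordProd (ζJ.eraseIdx j) with hQJ
          have hu : b * (a' * cs.simple k * a'⁻¹) = QJ := by
            have : b * a' * cs.simple k * a'⁻¹ = QJ * a' * a'⁻¹ := by rw [hex]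
            rw [mul_inv_cancel_right] at this
            rw [← this]
            group
          have huK : a' * cs.simple k * a'⁻¹ ∈ parab cs K :=
            mul_mem (mul_mem ha' (simple_mem_parab cs hk)) (inv_mem ha')
          have hQJmem : QJ ∈ parab cs J := by
            apply wordProd_mem_parab
            intro c hc
            exact hζJL c ((ζJ.eraseIdx_sublist j).subset hc)
          have hbQJ : b⁻¹ * QJ ∈ parab cs J := mul_mem (inv_mem hb) hQJmem
          have heq1 : b⁻¹ * QJ = a' * cs.simple k * a'⁻¹ := by
            rw [← hu]
            group
          have hprod1 : (1 : W) * (b⁻¹ * QJ) * (a' * cs.simple k * a'⁻¹)⁻¹ = 1 := by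
            rw [heq1]
            group
          have := h.directProd 1 (one_mem _) (b⁻¹ * QJ) hbQJ
            ((a' * cs.simple k * a'⁻¹)⁻¹) (inv_mem huK) hprod1
          have hsk1 : a' * cs.simple k * a'⁻¹ = 1 := by
            rw [← heq1, this.2.1]
          have : cs.simple k = 1 := by
            have h5 : a'⁻¹ * (a' * cs.simple k * a'⁻¹) * a' = a'⁻¹ * 1 * a' := by rw [hsk1]
            simpa [mul_assoc] using h5
          have := cs.length_simple k
          rw [this] at *
          simp_all
        · rw [List.eraseIdx_append_of_length_le hjge, cs.wordProd_append, hζJ] at hex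
          have hcancel : a' * cs.simple k = cs.wordProd (ζK.eraseIdx (j - ζJ.length)) := by
            apply mul_left_cancel (a := b)
            rw [← mul_assoc]
            exact hex
          have hle := cs.length_wordProd_le (ζK.eraseIdx (j - ζJ.length))
          rw [← hcancel] at hle
          have hlenK : (ζK.eraseIdx (j - ζJ.length)).length ≤ ζK.length := by
            rw [List.length_eraseIdx]
            split <;> omega
          omega
  exact main (cs.length a) a ha (le_refl _)


lemma sigma_one : σ 1 = 1 := by
  have := h.mulSigma 1 (one_mem _) 1 (one_mem _)
  rw [mul_one] at this
  exact (mul_eq_left.1 this.symm)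

lemma sigma_mem {x : W} (hx : x ∈ parab cs I) : σ x ∈ parab cs J :=
  h.bijSigma.mapsTo hx

lemma sigma_word : ∀ ω : List B, (∀ c ∈ ω, c ∈ I) →
    ∃ ω' : List B, (∀ c ∈ ω', c ∈ J) ∧ ω'.length = ω.length ∧
      cs.wordProd ω' = σ (cs.wordProd ω) ∧
      (∀ c ∈ ω', ∃ i ∈ I, σ (cs.simple i) = cs.simple c) := by
  intro ω
  induction ω with
  | nil =>
    intro _
    refine ⟨[], by simp, by simp, ?_, by simp⟩
    rw [cs.wordProd_nil, sigma_one cs h]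
  | cons i ω ih =>
    intro hω
    have hiI : i ∈ I := hω i (List.mem_cons_self)
    obtain ⟨ω', hω'J, hω'len, hω'prod, hω'spec⟩ :=
      ih (fun c hc => hω c (List.mem_cons_of_mem i hc))
    obtain ⟨j, hj, hji⟩ := h.simpleSigma i hiI
    refine ⟨j :: ω', ?_, by simp [hω'len], ?_, ?_⟩
    · intro c hc
      rcases List.mem_cons.1 hc with rfl | hc
      · exact hj
      · exact hω'J c hc
    · rw [cs.wordProd_cons, cs.wordProd_cons,
        h.mulSigma (cs.simple i) (simple_mem_parab cs hiI) (cs.wordProd ω)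
          (wordProd_mem_parab cs (fun c hc => hω c (List.mem_cons_of_mem i hc))),
        hji, hω'prod]
    · intro c hc
      rcases List.mem_cons.1 hc with rfl | hc
      · exact ⟨i, hiI, hji⟩
      · exact hω'spec c hc

lemma sigma_length_le {x : W} (hx : x ∈ parab cs I) : cs.length (σ x) ≤ cs.length x := by
  obtain ⟨ω, hωI, hred, rfl⟩ := exists_reduced_word_parab cs hx
  obtain ⟨ω', _, hlen, hprod, _⟩ := sigma_word cs h ω hωI
  have := cs.length_wordProd_le ω'
  rw [hprod, hlen] at this
  have hredlen : cs.length (cs.wordProd ω) = ω.length := hred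
  omega

lemma exists_simple_sigma_eq {j : B} (hj : j ∈ J) :
    ∃ i ∈ I, σ (cs.simple i) = cs.simple j := by
  obtain ⟨x, hx, hσx⟩ := h.bijSigma.surjOn (simple_mem_parab cs hj)
  obtain ⟨ω, hωI, hred, rfl⟩ := exists_reduced_word_parab cs hx
  obtain ⟨ω', hω'J, hω'len, hω'prod, hω'spec⟩ := sigma_word cs h ω hωI
  rw [hσx] at hω'prod
  obtain ⟨ζ, hζsub, hζred, hζprod⟩ := exists_reduced_sublist cs ω'
  rw [hω'prod] at hζprod
  have hζlen1 : ζ.length = 1 := by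
    have h1 : cs.length (cs.wordProd ζ) = ζ.length := hζred
    rw [hζprod, cs.length_simple] at h1
    omega
  obtain ⟨c, rfl⟩ : ∃ c, ζ = [c] := by
    match ζ, hζlen1 with
    | [c], _ => exact ⟨c, rfl⟩
  have hcω' : c ∈ ω' := hζsub.subset (List.mem_singleton_self c)
  obtain ⟨i, hi, hic⟩ := hω'spec c hcω'
  refine ⟨i, hi, ?_⟩
  rw [hic, ← hζprod, cs.wordProd_singleton]

lemma sigma_length {x : W} (hx : x ∈ parab cs I) : cs.length (σ x) = cs.length x := by
  refine le_antisymm (sigma_length_le cs h hx) ?_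
  obtain ⟨υ, hυJ, hυred, hυprod⟩ := exists_reduced_word_parab cs (sigma_mem cs h hx)
  have hbuild : ∀ υ : List B, (∀ c ∈ υ, c ∈ J) → ∃ ωI : List B,
      (∀ c ∈ ωI, c ∈ I) ∧ ωI.length = υ.length ∧ σ (cs.wordProd ωI) = cs.wordProd υ := by
    intro υ
    induction υ with
    | nil =>
      intro _
      exact ⟨[], by simp, by simp, by rw [cs.wordProd_nil, sigma_one cs h]⟩
    | cons j υ ihυ =>
      intro hυ
      have hjJ : j ∈ J := hυ j (List.mem_cons_self)
      obtain ⟨ωI, hωI, hωlen, hωprod⟩ := ihυ (fun c hc => hυ c (List.mem_cons_of_mem j hc))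
      obtain ⟨i, hi, hij⟩ := exists_simple_sigma_eq cs h hjJ
      refine ⟨i :: ωI, ?_, by simp [hωlen], ?_⟩
      · intro c hc
        rcases List.mem_cons.1 hc with rfl | hc
        · exact hi
        · exact hωI c hc
      · rw [cs.wordProd_cons, cs.wordProd_cons,
          h.mulSigma (cs.simple i) (simple_mem_parab cs hi) (cs.wordProd ωI)
            (wordProd_mem_parab cs hωI), hij, hωprod]
  obtain ⟨ωI, hωI, hωlen, hωprod⟩ := hbuild υ hυJ
  rw [hυprod] at hωprod
  -- σ (π ωI) = σ x with both in parab I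
  have hxeq : cs.wordProd ωI = x :=
    h.bijSigma.injOn (wordProd_mem_parab cs hωI) hx hωprod
  have h1 := cs.length_wordProd_le ωI
  rw [hxeq] at h1
  have h2 : cs.length (cs.wordProd υ) = υ.length := hυred
  rw [hυprod] at h2
  omega



lemma inCoset_mul_k {w v : W} (hv : inCoset cs I K σ w v) {k : B} (hk : k ∈ K) :
    inCoset cs I K σ w (v * cs.simple k) := by
  obtain ⟨a, ha, x, hx, rfl⟩ := hv
  refine ⟨a * cs.simple k, mul_mem ha (simple_mem_parab cs hk), x, hx, ?_⟩
  have c1 : σ x * cs.simple k = cs.simple k * σ x :=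
    ((commute_simple_parab cs (fun c hc => (h.commJK c hc k hk).symm)
      (sigma_mem cs h hx)).symm).eq
  have c2 : x * cs.simple k = cs.simple k * x :=
    ((commute_simple_parab cs (fun c hc => (h.commIK c hc k hk).symm)
      hx).symm).eq
  simp only [mul_assoc]
  rw [c1, ← mul_assoc x (cs.simple k) (σ x), c2]
  simp only [mul_assoc]

lemma inCoset_mul_pair {w v : W} (hv : inCoset cs I K σ w v) {i : B} (hi : i ∈ I) :
    inCoset cs I K σ w (v * cs.simple i * σ (cs.simple i)) := by
  obtain ⟨a, ha, x, hx, rfl⟩ := hv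
  refine ⟨a, ha, x * cs.simple i, mul_mem hx (simple_mem_parab cs hi), ?_⟩
  rw [h.mulSigma x hx (cs.simple i) (simple_mem_parab cs hi)]
  have hc : cs.simple i * σ x = σ x * cs.simple i :=
    (commute_simple_parab cs (fun c hc => (h.commIJ i hi c hc))
      (sigma_mem cs h hx)).eq
  simp only [mul_assoc]
  rw [← mul_assoc (σ x) (cs.simple i) (σ (cs.simple i)), ← hc]
  simp only [mul_assoc]

lemma pairStep {w w₁ : W} (hw1 : w₁ ∈ minReps cs (J ∪ K)) {x' : W} (hx' : x' ∈ parab cs I)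
    {i : B} (hi : i ∈ I) (hxup : cs.length (x' * cs.simple i) = cs.length x' + 1)
    {v' : W} (hv' : inCoset cs I K σ w v') (hch : Ch cs v' (w₁ * (x' * σ x'))) :
    ∃ v, inCoset cs I K σ w v ∧
      Ch cs v (w₁ * ((x' * cs.simple i) * σ (x' * cs.simple i))) := by
  obtain ⟨j, hjJ, hsj⟩ := h.simpleSigma i hi
  have hxI : x' * cs.simple i ∈ parab cs I := mul_mem hx' (simple_mem_parab cs hi)
  have hσx' : σ x' ∈ parab cs J := sigma_mem cs h hx'
  have hσxJK : σ x' ∈ parab cs (J ∪ K) := parab_mono cs Set.subset_union_left hσx'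
  have hσxi : σ (x' * cs.simple i) = σ x' * cs.simple j := by
    rw [h.mulSigma x' hx' (cs.simple i) (simple_mem_parab cs hi), hsj]
  have hσxiJK : σ (x' * cs.simple i) ∈ parab cs (J ∪ K) :=
    parab_mono cs Set.subset_union_left (sigma_mem cs h hxI)
  have hσlen : cs.length (σ x') = cs.length x' := sigma_length cs h hx'
  have hσleni : cs.length (σ (x' * cs.simple i)) = cs.length x' + 1 := by
    rw [sigma_length cs h hxI, hxup]
  have hmin1 : w₁ * x' ∈ minReps cs (J ∪ K) := minReps_mul_parabI cs h hw1 hx'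
  have hmin2 : w₁ * (x' * cs.simple i) ∈ minReps cs (J ∪ K) :=
    minReps_mul_parabI cs h hw1 hxI
  set z := w₁ * (x' * σ x') with hz
  set z2 := w₁ * ((x' * cs.simple i) * σ (x' * cs.simple i)) with hz2
  have Lz : cs.length z = cs.length (w₁ * x') + cs.length x' := by
    have e : z = (w₁ * x') * σ x' := by rw [hz, mul_assoc]
    rw [e, minReps_mul_length cs hmin1 hσxJK, hσlen]
  have hcommi : cs.simple i * σ x' = σ x' * cs.simple i :=
    (commute_simple_parab cs (fun c hc => (h.commIJ i hi c hc)) hσx').eq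
  have ez1 : z * cs.simple i = (w₁ * (x' * cs.simple i)) * σ x' := by
    rw [hz]
    simp only [mul_assoc]
    rw [← hcommi]
  have Lzs : cs.length (z * cs.simple i)
      = cs.length (w₁ * (x' * cs.simple i)) + cs.length x' := by
    rw [ez1, minReps_mul_length cs hmin2 hσxJK, hσlen]
  have ez2 : z * cs.simple i * cs.simple j = z2 := by
    rw [ez1, hz2, hσxi]
    simp only [mul_assoc]
  have Lz2 : cs.length z2 = cs.length (w₁ * (x' * cs.simple i)) + cs.length x' + 1 := by
    rw [hz2]
    have e : z2 = (w₁ * (x' * cs.simple i)) * σ (x' * cs.simple i) := by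
      rw [hz2]
      simp only [mul_assoc]
    rw [← hz2, e, minReps_mul_length cs hmin2 hσxiJK, hσleni]
    omega
  have htrich : cs.length (w₁ * (x' * cs.simple i)) = cs.length (w₁ * x') + 1 ∨
      cs.length (w₁ * (x' * cs.simple i)) + 1 = cs.length (w₁ * x') := by
    have := cs.length_mul_simple (w₁ * x') i
    rw [mul_assoc] at this
    exact this
  rcases htrich with hup | hdown
  · -- ascent on the minimal-representative side
    have c1 : Ch cs z (z * cs.simple i) := Ch.up cs i (by omega)
    have c2 : Ch cs (z * cs.simple i) (z * cs.simple i * cs.simple j) :=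
      Ch.up cs j (by rw [ez2]; omega)
    refine ⟨v', hv', ?_⟩
    have := Ch.trans' cs (Ch.trans' cs hch c1) c2
    rwa [ez2] at this
  · -- descent on the minimal-representative side
    have hdesc : cs.length (z * cs.simple i) < cs.length z := by omega
    rcases cs.length_mul_simple v' i with hvup | hvdown
    · have hQ2 := (Ch.liftQ cs (cs.length z) v' z i hch hdesc (le_refl _)).2 (by omega)
      have c2 : Ch cs (z * cs.simple i) (z * cs.simple i * cs.simple j) :=
        Ch.up cs j (by rw [ez2]; omega)
      refine ⟨v', hv', ?_⟩
      have := Ch.trans' cs hQ2 c2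
      rwa [ez2] at this
    · have hQ1 := (Ch.liftQ cs (cs.length z) v' z i hch hdesc (le_refl _)).1 (by omega)
      have c2 : Ch cs (v' * cs.simple i) (z * cs.simple i * cs.simple j) := by
        apply Ch.trans' cs hQ1
        exact Ch.up cs j (by rw [ez2]; omega)
      rw [ez2] at c2
      have hdesc2 : cs.length (z2 * cs.simple j) < cs.length z2 := by
        have e : z2 * cs.simple j = z * cs.simple i := by
          rw [← ez2, cs.simple_mul_simple_cancel_right]
        rw [e]
        omega
      have hR := Ch.liftR cs c2 hdesc2
      refine ⟨v' * cs.simple i * cs.simple j, ?_, hR⟩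
      have := inCoset_mul_pair cs h hv' hi
      rwa [hsj] at this


end Setup

end AuxBruhat


open AuxBruhat

theorem statement_4 (cs : CoxeterSystem M W) (I J K : Set B) (σ : W → W)
    (h : GoodSetup cs I J K σ) (w w₁ : W)
    (hw : w ∈ minReps cs (J ∪ K)) (hw₁ : w₁ ∈ minReps cs (J ∪ K))
    (hle : leO cs I K σ w w₁) :
    ∀ w₂, inCoset cs I K σ w₁ w₂ → ∃ v, inCoset cs I K σ w v ∧ BruhatLE cs v w₂ := by
  intro w₂ hw₂
  obtain ⟨u, hu, hule⟩ := hle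
  obtain ⟨a, ha, x, hx, rfl⟩ := hw₂
  have huCh : Ch cs u w₁ := (bruhatLE_iff_Ch cs).1 hule
  -- Step 1: climb along the twisted diagonal part
  have main1 : ∀ n : ℕ, ∀ x ∈ parab cs I, cs.length x ≤ n →
      ∃ v, inCoset cs I K σ w v ∧ Ch cs v (w₁ * (x * σ x)) := by
    intro n
    induction n using Nat.strong_induction_on with
    | _ n IH =>
    intro x hx hbound
    by_cases hone : x = 1
    · refine ⟨u, hu, ?_⟩
      rw [hone, sigma_one cs h, mul_one, mul_one]
      exact huCh
    · obtain ⟨c, hc, x', hx', rfl, hlen⟩ := parab_descent cs hx hone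
      obtain ⟨v', hv', hch⟩ := IH (cs.length x') (by omega) x' hx' (le_refl _)
      exact pairStep cs h hw₁ hx' hc (by omega) hv' hch
  obtain ⟨v, hv, hvch⟩ := main1 (cs.length x) x hx (le_refl _)
  -- Step 2: climb along the W_K part
  have hminx : w₁ * x ∈ minReps cs (J ∪ K) := minReps_mul_parabI cs h hw₁ hx
  have hσxJK : σ x ∈ parab cs (J ∪ K) :=
    parab_mono cs Set.subset_union_left (sigma_mem cs h hx)
  have hZlen : ∀ a'' ∈ parab cs K, cs.length (w₁ * (x * σ x) * a'')
      = cs.length (w₁ * x) + cs.length (σ x) + cs.length a'' := by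
    intro a'' ha''
    have e : w₁ * (x * σ x) * a'' = (w₁ * x) * (σ x * a'') := by
      simp only [mul_assoc]
    rw [e, minReps_mul_length cs hminx
      (mul_mem hσxJK (parab_mono cs Set.subset_union_right ha'')),
      parab_JK_mul_length cs h (sigma_mem cs h hx) ha'', add_assoc]
  have main2 : ∀ n : ℕ, ∀ a ∈ parab cs K, cs.length a ≤ n →
      Ch cs (w₁ * (x * σ x)) (w₁ * (x * σ x) * a) := by
    intro n
    induction n using Nat.strong_induction_on with
    | _ n IH =>
    intro a ha hbound
    by_cases hone : a = 1
    · rw [hone, mul_one]; exact Ch.refl _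
    · obtain ⟨k, hk, a', ha', rfl, hlen⟩ := parab_descent cs ha hone
      have hIH := IH (cs.length a') (by omega) a' ha' (le_refl _)
      have hstep : Ch cs (w₁ * (x * σ x) * a') (w₁ * (x * σ x) * a' * cs.simple k) := by
        apply Ch.up cs k
        have h1 := hZlen a' ha'
        have h2 := hZlen (a' * cs.simple k) (mul_mem ha' (simple_mem_parab cs hk))
        rw [← mul_assoc] at h2
        omega
      have := Ch.trans' cs hIH hstep
      rwa [mul_assoc (w₁ * (x * σ x)) a' (cs.simple k)] at this
  have hKch := main2 (cs.length a) a ha (le_refl _)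
  -- Reassemble : w₁ * a * (x * σ x) = w₁ * (x * σ x) * a
  have hw2eq : w₁ * a * (x * σ x) = w₁ * (x * σ x) * a := by
    have cxa : x * a = a * x :=
      commute_parab_parab cs (fun i' hi' k' hk' => h.commIK i' hi' k' hk') hx ha
    have cσa : σ x * a = a * σ x :=
      commute_parab_parab cs (fun j' hj' k' hk' => h.commJK j' hj' k' hk')
        (sigma_mem cs h hx) ha
    simp only [mul_assoc]
    rw [cσa, ← mul_assoc x a (σ x), cxa]
    simp only [mul_assoc]
  refine ⟨v, hv, ?_⟩
  apply (bruhatLE_iff_Ch cs).2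
  rw [hw2eq]
  exact Ch.trans' cs hvch hKch

end BruhatSetup
end

section
/- With the setup of ≤_O: every element w of W(I,J,K) = W^{J∪K} has minimal length in its coset w W_K W_{I,J}; that is, for all a ∈ W_K and x ∈ W_I, ℓ(w a x x*) ≥ ℓ(w). -/
set_option linter.unusedSectionVars false
set_option maxHeartbeats 1000000

namespace StrongAux

open List CoxeterSystem

variable {B : Type*} {W : Type*} [Group W] {M : CoxeterMatrix B} (cs : CoxeterSystem M W)

open Classical in
noncomputable def delta (u v : W) : ZMod 2 := if u = v then 1 else 0

theorem delta_eq_of_iff {a b c d : W} (h : (a = b) ↔ (c = d)) : delta a b = delta c d := by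
  classical
  simp only [delta]
  by_cases h2 : c = d
  · rw [if_pos (h.mpr h2), if_pos h2]
  · rw [if_neg (fun hc => h2 (h.mp hc)), if_neg h2]

theorem delta_conj (q u v : W) : delta (q * u * q⁻¹) v = delta u (q⁻¹ * v * q) := by
  apply delta_eq_of_iff
  constructor
  · rintro rfl; group
  · rintro rfl; group

theorem delta_self (u : W) : delta u u = 1 := by
  classical
  simp [delta]

theorem zmod2_add_self (z : ZMod 2) : z + z = 0 := by revert z; decide

noncomputable def pperm (i : B) : Equiv.Perm (W × ZMod 2) :=
  Function.Involutive.toPerm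
    (fun p => (cs.simple i * p.1 * cs.simple i, p.2 + delta p.1 (cs.simple i)))
    (by
      rintro ⟨t, e⟩
      simp only [Prod.mk.injEq]
      constructor
      · simp [mul_assoc, cs.simple_mul_simple_cancel_left, cs.simple_mul_simple_self]
      · have hd : delta (cs.simple i * t * cs.simple i) (cs.simple i) = delta t (cs.simple i) := by
          apply delta_eq_of_iff
          constructor
          · intro h
            have h2 := congrArg (fun z => cs.simple i * z * cs.simple i) h
            simpa [mul_assoc, cs.simple_mul_simple_cancel_left, cs.simple_mul_simple_self]
              using h2
          · rintro rfl
            rw [cs.simple_mul_simple_self, one_mul]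
        rw [hd, add_assoc, zmod2_add_self, add_zero])

theorem pperm_apply (i : B) (t : W) (e : ZMod 2) :
    pperm cs i (t, e) = (cs.simple i * t * cs.simple i, e + delta t (cs.simple i)) := rfl

theorem pperm_pow_apply (i i' : B) (k : ℕ) (t : W) (e : ZMod 2) :
    ((pperm cs i * pperm cs i') ^ k) (t, e) =
      ((cs.simple i * cs.simple i') ^ k * t * (((cs.simple i * cs.simple i') ^ k)⁻¹),
        e + ∑ j ∈ Finset.range (2 * k),
          delta t (cs.simple i' * (cs.simple i * cs.simple i') ^ j)) := by
  induction k generalizing t e with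
  | zero => simp
  | succ k ih =>
    have hinv : (cs.simple i * cs.simple i')⁻¹ * cs.simple i' = cs.simple i' * (cs.simple i * cs.simple i') := by
      rw [mul_inv_rev, cs.inv_simple, cs.inv_simple]
      group
    have h1 : ((pperm cs i * pperm cs i') ^ (k+1)) (t, e)
        = ((pperm cs i * pperm cs i') ^ k) ((pperm cs i) ((pperm cs i') (t, e))) := by
      rw [pow_succ]; rfl
    rw [h1, pperm_apply, pperm_apply]
    dsimp only
    rw [ih]
    have hfirst : (cs.simple i * cs.simple i') ^ k
          * (cs.simple i * (cs.simple i' * t * cs.simple i') * cs.simple i)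
          * (((cs.simple i * cs.simple i') ^ k)⁻¹)
        = (cs.simple i * cs.simple i') ^ (k+1) * t * (((cs.simple i * cs.simple i') ^ (k+1))⁻¹) := by
      rw [pow_succ, mul_inv_rev, mul_inv_rev, cs.inv_simple, cs.inv_simple]
      group
    have hbab : delta (cs.simple i' * t * cs.simple i') (cs.simple i)
        = delta t (cs.simple i' * (cs.simple i * cs.simple i')) := by
      have h2 : delta (cs.simple i' * t * (cs.simple i')⁻¹) (cs.simple i)
          = delta t ((cs.simple i')⁻¹ * cs.simple i * cs.simple i') := delta_conj _ _ _
      rw [cs.inv_simple] at h2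
      rw [h2]
      apply delta_eq_of_iff
      rw [mul_assoc]
    have hshift : ∀ j : ℕ,
        delta (cs.simple i * (cs.simple i' * t * cs.simple i') * cs.simple i)
            (cs.simple i' * (cs.simple i * cs.simple i') ^ j)
          = delta t (cs.simple i' * (cs.simple i * cs.simple i') ^ (j+2)) := by
      intro j
      have h2 : cs.simple i * (cs.simple i' * t * cs.simple i') * cs.simple i
          = (cs.simple i * cs.simple i') * t * ((cs.simple i * cs.simple i'))⁻¹ := by
        rw [mul_inv_rev, cs.inv_simple, cs.inv_simple]; group
      rw [h2, delta_conj]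
      apply delta_eq_of_iff
      have h3 : (cs.simple i * cs.simple i')⁻¹
            * (cs.simple i' * (cs.simple i * cs.simple i') ^ j) * (cs.simple i * cs.simple i')
          = cs.simple i' * (cs.simple i * cs.simple i') ^ (j + 2) := by
        calc (cs.simple i * cs.simple i')⁻¹
              * (cs.simple i' * (cs.simple i * cs.simple i') ^ j) * (cs.simple i * cs.simple i')
            = ((cs.simple i * cs.simple i')⁻¹ * cs.simple i')
                * ((cs.simple i * cs.simple i') ^ j * (cs.simple i * cs.simple i')) := by group
          _ = (cs.simple i' * (cs.simple i * cs.simple i'))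
                * ((cs.simple i * cs.simple i') ^ j * (cs.simple i * cs.simple i')) := by rw [hinv]
          _ = cs.simple i' * ((cs.simple i * cs.simple i')
                * ((cs.simple i * cs.simple i') ^ j * (cs.simple i * cs.simple i'))) := by
              rw [mul_assoc]
          _ = cs.simple i' * ((cs.simple i * cs.simple i') * (cs.simple i * cs.simple i') ^ (j+1)) := by
              rw [← pow_succ]
          _ = cs.simple i' * (cs.simple i * cs.simple i') ^ (j+1+1) := by rw [← pow_succ']
          _ = cs.simple i' * (cs.simple i * cs.simple i') ^ (j+2) := by norm_num
      rw [h3]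
    have hsum : ∑ j ∈ Finset.range (2 * (k+1)),
          delta t (cs.simple i' * (cs.simple i * cs.simple i') ^ j)
        = delta t (cs.simple i' * (cs.simple i * cs.simple i') ^ 0)
            + (delta t (cs.simple i' * (cs.simple i * cs.simple i') ^ 1)
            + ∑ j ∈ Finset.range (2 * k),
                delta t (cs.simple i' * (cs.simple i * cs.simple i') ^ (j+2))) := by
      have h2 : 2 * (k+1) = (2 * k + 1) + 1 := by ring
      rw [h2, Finset.sum_range_succ', Finset.sum_range_succ']
      ring
    rw [hsum]
    simp only [Prod.mk.injEq]
    constructor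
    · exact hfirst
    · rw [Finset.sum_congr rfl (fun j _ => hshift j)]
      rw [hbab]
      have h0 : delta t (cs.simple i') = delta t (cs.simple i' * (cs.simple i * cs.simple i') ^ 0) := by
        rw [pow_zero, mul_one]
      have h1' : delta t (cs.simple i' * (cs.simple i * cs.simple i'))
          = delta t (cs.simple i' * (cs.simple i * cs.simple i') ^ 1) := by rw [pow_one]
      rw [h0, h1']
      ring

theorem pperm_liftable : CoxeterMatrix.IsLiftable M (pperm cs) := by
  intro i i'
  apply Equiv.ext
  rintro ⟨t, e⟩
  rw [pperm_pow_apply]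
  have hpow : (cs.simple i * cs.simple i') ^ M i i' = 1 := cs.simple_mul_simple_pow i i'
  have hsum : ∑ j ∈ Finset.range (2 * M i i'),
      delta t (cs.simple i' * (cs.simple i * cs.simple i') ^ j) = 0 := by
    rw [two_mul, Finset.sum_range_add]
    have : ∀ j : ℕ, delta t (cs.simple i' * (cs.simple i * cs.simple i') ^ (M i i' + j))
        = delta t (cs.simple i' * (cs.simple i * cs.simple i') ^ j) := by
      intro j
      rw [pow_add, hpow, one_mul]
    rw [Finset.sum_congr rfl (fun j _ => this j)]
    exact zmod2_add_self _
  rw [hpow, hsum, add_zero, one_mul, inv_one, mul_one]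
  rfl

noncomputable def prep : W →* Equiv.Perm (W × ZMod 2) := cs.lift ⟨pperm cs, pperm_liftable cs⟩

theorem prep_simple (i : B) : prep cs (cs.simple i) = pperm cs i :=
  cs.lift_apply_simple (pperm_liftable cs) i

theorem prep_wordProd (ω : List B) (t : W) (e : ZMod 2) :
    prep cs (cs.wordProd ω) (t, e) =
      (cs.wordProd ω * t * (cs.wordProd ω)⁻¹,
        e + ((cs.rightInvSeq ω).map (delta t)).sum) := by
  induction ω generalizing e with
  | nil => simp [cs.wordProd_nil, CoxeterSystem.rightInvSeq]
  | cons i ω ih =>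
    rw [cs.wordProd_cons, map_mul]
    have h1 : (prep cs (cs.simple i) * prep cs (cs.wordProd ω)) (t, e)
        = prep cs (cs.simple i) (prep cs (cs.wordProd ω) (t, e)) := rfl
    rw [h1, ih, prep_simple, pperm_apply]
    have hris : cs.rightInvSeq (i :: ω)
        = ((cs.wordProd ω)⁻¹ * cs.simple i * cs.wordProd ω) :: cs.rightInvSeq ω := rfl
    rw [hris, List.map_cons, List.sum_cons]
    simp only [Prod.mk.injEq]
    constructor
    · rw [mul_inv_rev, cs.inv_simple]; group
    · rw [delta_conj]
      ring

noncomputable def eta (w t : W) : ZMod 2 := (prep cs w (t, 0)).2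

theorem prep_apply (w t : W) (e : ZMod 2) :
    prep cs w (t, e) = (w * t * w⁻¹, e + eta cs w t) := by
  obtain ⟨ω, -, rfl⟩ := cs.exists_reduced_word' w
  rw [prep_wordProd, eta, prep_wordProd, zero_add]

theorem eta_wordProd (ω : List B) (t : W) :
    eta cs (cs.wordProd ω) t = ((cs.rightInvSeq ω).map (delta t)).sum := by
  rw [eta, prep_wordProd, zero_add]

theorem eta_eq_zero_of_not_mem (ω : List B) (t : W) (h : t ∉ cs.rightInvSeq ω) :
    eta cs (cs.wordProd ω) t = 0 := by
  rw [eta_wordProd]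
  apply List.sum_eq_zero
  intro x hx
  obtain ⟨r, hr, rfl⟩ := List.mem_map.mp hx
  classical
  have : t ≠ r := fun h2 => h (h2 ▸ hr)
  simp [delta, this]

theorem mem_ris_of_eta (ω : List B) (t : W) (h : eta cs (cs.wordProd ω) t ≠ 0) :
    t ∈ cs.rightInvSeq ω := by
  by_contra hmem
  exact h (eta_eq_zero_of_not_mem cs ω t hmem)

theorem eta_reflection {t : W} (ht : cs.IsReflection t) : eta cs t t = 1 := by
  obtain ⟨w, i, rfl⟩ := ht
  set t := w * cs.simple i * w⁻¹ with hts
  have hconj : w⁻¹ * t * (w⁻¹)⁻¹ = cs.simple i := by rw [hts]; group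
  have hstep1 : prep cs w⁻¹ (t, 0) = (cs.simple i, eta cs w⁻¹ t) := by
    rw [prep_apply, hconj, zero_add]
  have hstep2 : ∀ e : ZMod 2, prep cs (cs.simple i) (cs.simple i, e) = (cs.simple i, e + 1) := by
    intro e
    rw [prep_simple, pperm_apply, cs.simple_mul_simple_self, one_mul, delta_self]
  have hstep3 : ∀ e : ZMod 2, prep cs w (cs.simple i, e) = (t, e + eta cs w (cs.simple i)) := by
    intro e
    rw [prep_apply, hts]
  have hcancel : eta cs w⁻¹ t + eta cs w (cs.simple i) = 0 := by
    have h1 : prep cs w (prep cs w⁻¹ (t, 0)) = (t, 0) := by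
      have : prep cs w * prep cs w⁻¹ = 1 := by rw [← map_mul, mul_inv_cancel, map_one]
      calc prep cs w (prep cs w⁻¹ (t, 0)) = (prep cs w * prep cs w⁻¹) (t, 0) := rfl
        _ = (t, 0) := by rw [this]; rfl
    rw [hstep1, hstep3] at h1
    exact (Prod.mk.injEq _ _ _ _).mp h1 |>.2
  have hmain : prep cs t (t, 0) = (t, eta cs w⁻¹ t + 1 + eta cs w (cs.simple i)) := by
    calc prep cs t (t, 0) = prep cs (w * (cs.simple i * w⁻¹)) (t, 0) := by
          rw [hts, mul_assoc]
      _ = prep cs w (prep cs (cs.simple i) (prep cs w⁻¹ (t, 0))) := by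
          rw [map_mul, map_mul]; rfl
      _ = (t, eta cs w⁻¹ t + 1 + eta cs w (cs.simple i)) := by
          rw [hstep1, hstep2, hstep3]
  have : eta cs t t = eta cs w⁻¹ t + 1 + eta cs w (cs.simple i) := by
    have := congrArg Prod.snd hmain
    simpa [eta] using this
  rw [this]
  calc eta cs w⁻¹ t + 1 + eta cs w (cs.simple i)
      = (eta cs w⁻¹ t + eta cs w (cs.simple i)) + 1 := by ring
    _ = 1 := by rw [hcancel, zero_add]

/-- Strong exchange property (membership form). -/
theorem mem_ris_of_descent (ω : List B) {t : W} (ht : cs.IsReflection t)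
    (hlt : cs.length (cs.wordProd ω * t) < cs.length (cs.wordProd ω)) :
    t ∈ cs.rightInvSeq ω := by
  obtain ⟨β, hβred, hβ⟩ := cs.exists_reduced_word' (cs.wordProd ω * t)
  have htβ : t ∉ cs.rightInvSeq β := by
    intro hmem
    have h2 := (cs.isRightInversion_of_mem_rightInvSeq hβred hmem).2
    have h3 : cs.wordProd β * t = cs.wordProd ω := by
      rw [← hβ, mul_assoc, ht.mul_self, mul_one]
    rw [h3, ← hβ] at h2
    omega
  have hetaβ : eta cs (cs.wordProd ω * t) t = 0 := by
    rw [hβ]; exact eta_eq_zero_of_not_mem cs β t htβ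
  apply mem_ris_of_eta
  have hmain : prep cs (cs.wordProd ω) (t, 0) = (cs.wordProd ω * t * (cs.wordProd ω)⁻¹, 1) := by
    calc prep cs (cs.wordProd ω) (t, 0)
        = prep cs ((cs.wordProd ω * t) * t) (t, 0) := by
          rw [mul_assoc, ht.mul_self, mul_one]
      _ = prep cs (cs.wordProd ω * t) (prep cs t (t, 0)) := by rw [map_mul]; rfl
      _ = prep cs (cs.wordProd ω * t) (t, 1) := by
          rw [prep_apply cs t t 0, eta_reflection cs ht, zero_add, ht.mul_self, one_mul, ht.inv]
      _ = (cs.wordProd ω * t * t * (cs.wordProd ω * t)⁻¹, 1 + eta cs (cs.wordProd ω * t) t) :=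
          prep_apply cs _ _ _
      _ = (cs.wordProd ω * t * (cs.wordProd ω)⁻¹, 1) := by
          rw [hetaβ, add_zero]
          congr 1
          group
  have heta : eta cs (cs.wordProd ω) t = 1 := by
    simpa [eta] using congrArg Prod.snd hmain
  rw [heta]
  exact one_ne_zero






theorem simple_mem_closure {L : Set B} {i : B} (hi : i ∈ L) :
    cs.simple i ∈ Subgroup.closure (cs.simple '' L) :=
  Subgroup.subset_closure ⟨i, hi, rfl⟩

theorem wordProd_mem_closure {L : Set B} {ω : List B} (h : ∀ i ∈ ω, i ∈ L) :
    cs.wordProd ω ∈ Subgroup.closure (cs.simple '' L) := by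
  induction ω with
  | nil => rw [cs.wordProd_nil]; exact one_mem _
  | cons i ω ih =>
    rw [cs.wordProd_cons]
    exact mul_mem (simple_mem_closure cs (h i (List.mem_cons_self)))
      (ih (fun j hj => h j (List.mem_cons_of_mem i hj)))

theorem exists_word_of_mem_closure {L : Set B} {x : W}
    (hx : x ∈ Subgroup.closure (cs.simple '' L)) :
    ∃ ω : List B, (∀ i ∈ ω, i ∈ L) ∧ x = cs.wordProd ω := by
  induction hx using Subgroup.closure_induction with
  | mem y hy =>
    obtain ⟨i, hi, rfl⟩ := hy
    exact ⟨[i], by simpa using hi, by simp⟩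
  | one => exact ⟨[], by simp, by simp⟩
  | mul y z hy' hz' hy hz =>
    obtain ⟨ω1, h1, rfl⟩ := hy
    obtain ⟨ω2, h2, rfl⟩ := hz
    refine ⟨ω1 ++ ω2, ?_, (cs.wordProd_append ω1 ω2).symm⟩
    intro i hi
    rcases List.mem_append.mp hi with h | h
    exacts [h1 i h, h2 i h]
  | inv y hy' hy =>
    obtain ⟨ω1, h1, rfl⟩ := hy
    exact ⟨ω1.reverse, fun i hi => h1 i (List.mem_reverse.mp hi), (cs.wordProd_reverse ω1).symm⟩

theorem deletion {ω : List B} (h : ¬ cs.IsReduced ω) :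
    ∃ ω' : List B, ω'.length < ω.length ∧ (∀ i ∈ ω', i ∈ ω) ∧
      cs.wordProd ω' = cs.wordProd ω := by
  classical
  have hne : ω ≠ [] := by
    rintro rfl
    exact h (by simp [CoxeterSystem.IsReduced])
  have hpos : 0 < ω.length := List.length_pos_iff_ne_nil.mpr hne
  have hP : ¬ cs.IsReduced (ω.take (ω.length - 1 + 1)) := by
    have he : ω.length - 1 + 1 = ω.length := by omega
    rwa [he, List.take_length]
  have hex : ∃ k, ¬ cs.IsReduced (ω.take (k+1)) := ⟨ω.length - 1, hP⟩
  set k := Nat.find hex with hkdef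
  have hk : ¬ cs.IsReduced (ω.take (k+1)) := Nat.find_spec hex
  have hkmin : ∀ m, m < k → cs.IsReduced (ω.take (m+1)) := by
    intro m hm
    have := Nat.find_min hex hm
    simpa using this
  have hklt : k < ω.length := by
    have : k ≤ ω.length - 1 := Nat.find_min' hex hP
    omega
  have hred : cs.IsReduced (ω.take k) := by
    rcases Nat.eq_zero_or_pos k with h0 | h0
    · rw [h0]; simp [CoxeterSystem.IsReduced]
    · have hlt : k - 1 < k := by omega
      have h2 := hkmin (k-1) hlt
      have h3 : k - 1 + 1 = k := by omega
      rwa [h3] at h2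
  have hlenk : (ω.take k).length = k := by
    rw [List.length_take]; omega
  have htake : ω.take (k+1) = ω.take k ++ [ω[k]] := by
    rw [List.take_succ, List.getElem?_eq_getElem hklt]
    rfl
  have hprod : cs.wordProd (ω.take (k+1)) = cs.wordProd (ω.take k) * cs.simple ω[k] := by
    rw [htake, cs.wordProd_append, cs.wordProd_singleton]
  have hlen1 : cs.length (cs.wordProd (ω.take k)) = k := by
    rw [hred, hlenk]
  have hle : cs.length (cs.wordProd (ω.take (k+1))) ≤ k := by
    have h1 : cs.length (cs.wordProd (ω.take (k+1))) ≤ (ω.take (k+1)).length :=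
      cs.length_wordProd_le _
    have h2 : (ω.take (k+1)).length = k + 1 := by rw [List.length_take]; omega
    have h3 : cs.length (cs.wordProd (ω.take (k+1))) ≠ k + 1 := by
      intro hc
      exact hk (by rw [CoxeterSystem.IsReduced, h2, hc])
    omega
  have hdesc : cs.length (cs.wordProd (ω.take (k+1))) < cs.length (cs.wordProd (ω.take k)) := by
    rcases cs.length_mul_simple (cs.wordProd (ω.take k)) ω[k] with h1 | h1 <;>
      rw [← hprod] at h1 <;> omega
  have hmem : cs.simple ω[k] ∈ cs.rightInvSeq (ω.take k) := by
    apply mem_ris_of_descent cs (ω.take k) (cs.isReflection_simple ω[k])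
    rw [← hprod]
    exact hdesc
  obtain ⟨j, hj, hjt⟩ := List.mem_iff_getElem.mp hmem
  have hjlen : j < (ω.take k).length := by
    rwa [cs.length_rightInvSeq (ω.take k)] at hj
  have hgetD : (cs.rightInvSeq (ω.take k)).getD j 1 = cs.simple ω[k] := by
    rw [List.getD_eq_getElem _ _ hj, hjt]
  have herase := cs.wordProd_mul_getD_rightInvSeq (ω.take k) j
  rw [hgetD] at herase
  refine ⟨(ω.take k).eraseIdx j ++ ω.drop (k+1), ?_, ?_, ?_⟩
  · have h1 : ((ω.take k).eraseIdx j).length + 1 = (ω.take k).length :=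
      List.length_eraseIdx_add_one hjlen
    rw [List.length_append, List.length_drop]
    omega
  · intro b hb
    rcases List.mem_append.mp hb with hb | hb
    · exact (List.take_sublist k ω).subset ((List.eraseIdx_sublist _ j).subset hb)
    · exact (List.drop_sublist (k+1) ω).subset hb
  · rw [cs.wordProd_append, ← herase, ← hprod, ← cs.wordProd_append, List.take_append_drop]

theorem exists_reduced_word_subset {L : Set B} {x : W}
    (hx : x ∈ Subgroup.closure (cs.simple '' L)) :
    ∃ ω : List B, cs.IsReduced ω ∧ (∀ i ∈ ω, i ∈ L) ∧ x = cs.wordProd ω := by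
  suffices h : ∀ (n : ℕ) (ω : List B), ω.length = n → (∀ i ∈ ω, i ∈ L) →
      ∃ ζ : List B, cs.IsReduced ζ ∧ (∀ i ∈ ζ, i ∈ L) ∧ cs.wordProd ω = cs.wordProd ζ by
    obtain ⟨ω, hω, rfl⟩ := exists_word_of_mem_closure cs hx
    obtain ⟨ζ, h1, h2, h3⟩ := h ω.length ω rfl hω
    exact ⟨ζ, h1, h2, h3⟩
  intro n
  induction n using Nat.strong_induction_on with
  | _ n ih =>
    intro ω hlen hω
    by_cases hr : cs.IsReduced ω
    · exact ⟨ω, hr, hω, rfl⟩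
    · obtain ⟨ω', hlt, hsub, hprod⟩ := deletion cs hr
      obtain ⟨ζ, h1, h2, h3⟩ := ih ω'.length (by omega) ω' rfl
        (fun i hi => hω i (hsub i hi))
      exact ⟨ζ, h1, h2, by rw [← hprod, h3]⟩

theorem ris_mem_closure {L : Set B} {ω : List B} (hω : ∀ i ∈ ω, i ∈ L) :
    ∀ t ∈ cs.rightInvSeq ω, t ∈ Subgroup.closure (cs.simple '' L) := by
  induction ω with
  | nil => simp [CoxeterSystem.rightInvSeq]
  | cons i ω ih =>
    intro t ht
    have hc : cs.rightInvSeq (i :: ω)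
        = ((cs.wordProd ω)⁻¹ * cs.simple i * cs.wordProd ω) :: cs.rightInvSeq ω := rfl
    rw [hc, List.mem_cons] at ht
    have hωtail : ∀ j ∈ ω, j ∈ L := fun j hj => hω j (List.mem_cons_of_mem i hj)
    rcases ht with rfl | ht
    · exact mul_mem (mul_mem (inv_mem (wordProd_mem_closure cs hωtail))
        (simple_mem_closure cs (hω i (List.mem_cons_self))))
        (wordProd_mem_closure cs hωtail)
    · exact ih hωtail t ht

theorem ris_append (α β : List B) :
    cs.rightInvSeq (α ++ β) = (cs.rightInvSeq α).map
      (fun t => (cs.wordProd β)⁻¹ * t * cs.wordProd β) ++ cs.rightInvSeq β := by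
  induction α with
  | nil => simp [CoxeterSystem.rightInvSeq]
  | cons i α ih =>
    have hc : ∀ (l : List B) (i : B), cs.rightInvSeq (i :: l)
        = ((cs.wordProd l)⁻¹ * cs.simple i * cs.wordProd l) :: cs.rightInvSeq l := fun _ _ => rfl
    rw [List.cons_append, hc, hc, ih, List.map_cons, List.cons_append]
    congr 1
    rw [cs.wordProd_append, mul_inv_rev]
    group






theorem min_coset_additive {L : Set B} {u : W}
    (hmin : ∀ z ∈ Subgroup.closure (cs.simple '' L), cs.length u ≤ cs.length (u * z)) :
    ∀ v ∈ Subgroup.closure (cs.simple '' L), cs.length (u * v) = cs.length u + cs.length v := by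
  suffices h : ∀ (n : ℕ) (v : W), v ∈ Subgroup.closure (cs.simple '' L) → cs.length v = n →
      cs.length (u * v) = cs.length u + cs.length v by
    intro v hv
    exact h _ v hv rfl
  intro n
  induction n using Nat.strong_induction_on with
  | _ n ih =>
    intro v hv hn
    obtain ⟨β, hβred, hβL, rfl⟩ := exists_reduced_word_subset cs hv
    rcases List.eq_nil_or_concat β with rfl | ⟨β', i, rfl⟩
    · simp
    · have hprodv : cs.wordProd (β'.concat i) = cs.wordProd β' * cs.simple i :=
        cs.wordProd_concat i β'
      have hβ'red : cs.IsReduced β' := by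
        have h1 := CoxeterSystem.IsReduced.take hβred β'.length
        have h2 : (β'.concat i).take β'.length = β' := by
          rw [List.concat_eq_append, List.take_left]
        rwa [h2] at h1
      have hβ'L : ∀ j ∈ β', j ∈ L := by
        intro j hj
        exact hβL j (by rw [List.concat_eq_append]; exact List.mem_append.mpr (Or.inl hj))
      have hiL : i ∈ L := hβL i (by
        rw [List.concat_eq_append]
        exact List.mem_append.mpr (Or.inr (List.mem_singleton.mpr rfl)))
      have hlenv : cs.length (cs.wordProd (β'.concat i)) = β'.length + 1 := by
        have := hβred
        rwa [CoxeterSystem.IsReduced, List.length_concat] at this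
      have hlenv' : cs.length (cs.wordProd β') = β'.length := hβ'red
      have hv' : cs.wordProd β' ∈ Subgroup.closure (cs.simple '' L) :=
        wordProd_mem_closure cs hβ'L
      have ihv : cs.length (u * cs.wordProd β') = cs.length u + β'.length := by
        have h2 := ih β'.length (by omega) (cs.wordProd β') hv' hlenv'
        omega
      have hrhs : cs.length (cs.wordProd β' * cs.simple i) = β'.length + 1 := by
        rw [← hprodv]
        exact hlenv
      rw [hprodv, ← mul_assoc, hrhs]
      rcases cs.length_mul_simple (u * cs.wordProd β') i with h1 | h1
      · omega
      · exfalso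
        obtain ⟨γ, hγred, hγ⟩ := cs.exists_reduced_word' u
        have hγlen : cs.length u = γ.length := by
          have := hγred
          rwa [CoxeterSystem.IsReduced, ← hγ] at this
        have happred : cs.IsReduced (γ ++ β') := by
          rw [CoxeterSystem.IsReduced, cs.wordProd_append, ← hγ, List.length_append]
          omega
        have hdesc : cs.length (cs.wordProd (γ ++ β') * cs.simple i)
            < cs.length (cs.wordProd (γ ++ β')) := by
          rw [cs.wordProd_append, ← hγ]
          omega
        have hmem := mem_ris_of_descent cs (γ ++ β') (cs.isReflection_simple i) hdesc
        rw [ris_append] at hmem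
        rcases List.mem_append.mp hmem with hm | hm
        · obtain ⟨t, htm, hteq⟩ := List.mem_map.mp hm
          have htinv := cs.isRightInversion_of_mem_rightInvSeq hγred htm
          rw [← hγ] at htinv
          have htL : t ∈ Subgroup.closure (cs.simple '' L) := by
            have ht : t = cs.wordProd β' * cs.simple i * (cs.wordProd β')⁻¹ := by
              rw [← hteq]; group
            rw [ht]
            exact mul_mem (mul_mem hv' (simple_mem_closure cs hiL)) (inv_mem hv')
          have := hmin t htL
          have h3 := htinv.2
          omega
        · have h3 := (cs.isRightInversion_of_mem_rightInvSeq hβ'red hm).2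
          rw [hrhs] at h3
          omega

theorem minReps_additive {L : Set B} {w : W}
    (hw : ∀ i ∈ L, cs.length w < cs.length (w * cs.simple i)) :
    ∀ v ∈ Subgroup.closure (cs.simple '' L), cs.length (w * v) = cs.length w + cs.length v := by
  classical
  have hne : ∃ n, ∃ z ∈ Subgroup.closure (cs.simple '' L), cs.length (w * z) = n :=
    ⟨cs.length w, 1, one_mem _, by rw [mul_one]⟩
  obtain ⟨z0, hz0, hz0len⟩ := Nat.find_spec hne
  have hminval : ∀ z ∈ Subgroup.closure (cs.simple '' L),
      Nat.find hne ≤ cs.length (w * z) :=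
    fun z hz => Nat.find_min' hne ⟨z, hz, rfl⟩
  have hmin : ∀ z ∈ Subgroup.closure (cs.simple '' L),
      cs.length (w * z0) ≤ cs.length (w * z0 * z) := by
    intro z hz
    rw [mul_assoc, hz0len]
    exact hminval (z0 * z) (mul_mem hz0 hz)
  have hadd := min_coset_additive cs hmin
  by_cases h1 : z0 = 1
  · intro v hv
    simpa [h1] using hadd v hv
  · exfalso
    have hz0inv : z0⁻¹ ∈ Subgroup.closure (cs.simple '' L) := inv_mem hz0
    obtain ⟨β, hβred, hβL, hβ⟩ := exists_reduced_word_subset cs hz0inv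
    have hw1 : cs.length w = cs.length (w * z0) + cs.length z0⁻¹ := by
      have h2 := hadd z0⁻¹ hz0inv
      rwa [mul_assoc, mul_inv_cancel, mul_one] at h2
    have hβne : β ≠ [] := by
      rintro rfl
      apply h1
      have : z0⁻¹ = 1 := by rw [hβ, cs.wordProd_nil]
      simpa using congrArg (·⁻¹) this
    rcases List.eq_nil_or_concat β with rfl | ⟨β', i, rfl⟩
    · exact hβne rfl
    · have hprodβ : cs.wordProd (β'.concat i) = cs.wordProd β' * cs.simple i :=
        cs.wordProd_concat i β'
      have hβ'red : cs.IsReduced β' := by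
        have h2 := CoxeterSystem.IsReduced.take hβred β'.length
        have h3 : (β'.concat i).take β'.length = β' := by
          rw [List.concat_eq_append, List.take_left]
        rwa [h3] at h2
      have hβ'L : ∀ j ∈ β', j ∈ L := by
        intro j hj
        exact hβL j (by rw [List.concat_eq_append]; exact List.mem_append.mpr (Or.inl hj))
      have hiL : i ∈ L := hβL i (by
        rw [List.concat_eq_append]
        exact List.mem_append.mpr (Or.inr (List.mem_singleton.mpr rfl)))
      have hlen1 : cs.length z0⁻¹ = β'.length + 1 := by
        rw [hβ]
        have := hβred
        rwa [CoxeterSystem.IsReduced, List.length_concat] at this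
      have hz0si : z0⁻¹ * cs.simple i = cs.wordProd β' := by
        rw [hβ, hprodβ]
        exact cs.simple_mul_simple_cancel_right i
      have hβ'len : cs.length (cs.wordProd β') = β'.length := hβ'red
      have hwsi : w * cs.simple i = (w * z0) * cs.wordProd β' := by
        rw [← hz0si]
        group
      have hsi : cs.length (w * cs.simple i) = cs.length (w * z0) + β'.length := by
        rw [hwsi, hadd (cs.wordProd β') (wordProd_mem_closure cs hβ'L), hβ'len]
      have := hw i hiL
      omega






theorem closure_commute {L1 L2 : Set B}
    (h : ∀ i ∈ L1, ∀ j ∈ L2, Commute (cs.simple i) (cs.simple j)) :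
    ∀ p ∈ Subgroup.closure (cs.simple '' L1), ∀ q ∈ Subgroup.closure (cs.simple '' L2),
      Commute p q := by
  have step1 : ∀ i ∈ L1, ∀ q ∈ Subgroup.closure (cs.simple '' L2), Commute (cs.simple i) q := by
    intro i hi q hq
    induction hq using Subgroup.closure_induction with
    | mem y hy => obtain ⟨j, hj, rfl⟩ := hy; exact h i hi j hj
    | one => exact Commute.one_right _
    | mul y z _ _ hy hz => exact Commute.mul_right hy hz
    | inv y _ hy => exact Commute.inv_right hy
  intro p hp q hq
  induction hp using Subgroup.closure_induction with
  | mem y hy => obtain ⟨i, hi, rfl⟩ := hy; exact step1 i hi q hq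
  | one => exact Commute.one_left _
  | mul y z _ _ hy hz => exact Commute.mul_left hy hz
  | inv y _ hy => exact Commute.inv_left hy

theorem cross_minReps {L1 L2 : Set B} {a : W} (ha : a ∈ Subgroup.closure (cs.simple '' L1))
    (hkill : ∀ j ∈ L2, cs.simple j ∈ Subgroup.closure (cs.simple '' L1) → False) :
    ∀ j ∈ L2, cs.length a < cs.length (a * cs.simple j) := by
  intro j hj
  obtain ⟨γ, hγred, hγL, rfl⟩ := exists_reduced_word_subset cs ha
  rcases cs.length_mul_simple (cs.wordProd γ) j with h1 | h1
  · omega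
  · exfalso
    have hdesc : cs.length (cs.wordProd γ * cs.simple j) < cs.length (cs.wordProd γ) := by
      omega
    have hmem := mem_ris_of_descent cs γ (cs.isReflection_simple j) hdesc
    exact hkill j hj (ris_mem_closure cs hγL _ hmem)

section Sigma

variable {I J : Set B} {σ : W → W}
  (hmul : ∀ x ∈ Subgroup.closure (cs.simple '' I), ∀ y ∈ Subgroup.closure (cs.simple '' I),
    σ (x * y) = σ x * σ y)
  (hsimple : ∀ i ∈ I, ∃ j ∈ J, σ (cs.simple i) = cs.simple j)

include hmul in
theorem sigma_one : σ 1 = 1 := by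
  have h0 := hmul 1 (one_mem _) 1 (one_mem _)
  rw [mul_one] at h0
  exact (left_eq_mul.mp h0)

include hmul hsimple in
theorem sigma_word : ∀ ω : List B, (∀ i ∈ ω, i ∈ I) →
    ∃ ζ : List B, ζ.length = ω.length ∧
      (∀ j ∈ ζ, j ∈ J ∧ ∃ i ∈ I, σ (cs.simple i) = cs.simple j) ∧
      σ (cs.wordProd ω) = cs.wordProd ζ := by
  intro ω
  induction ω with
  | nil =>
    intro _
    exact ⟨[], rfl, by simp, sigma_one cs hmul⟩
  | cons i ω ih =>
    intro hω
    have hiI : i ∈ I := hω i (List.mem_cons_self)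
    have hωI : ∀ b ∈ ω, b ∈ I := fun b hb => hω b (List.mem_cons_of_mem i hb)
    obtain ⟨ζ, hlen, hζ, hσω⟩ := ih hωI
    obtain ⟨j, hjJ, hij⟩ := hsimple i hiI
    refine ⟨j :: ζ, by simp [hlen], ?_, ?_⟩
    · intro b hb
      rcases List.mem_cons.mp hb with rfl | hb
      · exact ⟨hjJ, i, hiI, hij⟩
      · exact hζ b hb
    · rw [cs.wordProd_cons, cs.wordProd_cons,
        hmul (cs.simple i) (simple_mem_closure cs hiI) (cs.wordProd ω)
          (wordProd_mem_closure cs hωI), hij, hσω]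

include hmul hsimple in
theorem simple_image
    (hsurj : Set.SurjOn σ (Subgroup.closure (cs.simple '' I) : Set W)
      (Subgroup.closure (cs.simple '' J) : Set W)) :
    ∀ j ∈ J, ∃ i ∈ I, σ (cs.simple i) = cs.simple j := by
  intro j hj
  have hsj : cs.simple j ∈ Subgroup.closure (cs.simple '' J) := simple_mem_closure cs hj
  obtain ⟨x, hx, hσx⟩ := hsurj hsj
  obtain ⟨ω, hωI, rfl⟩ := exists_word_of_mem_closure cs hx
  obtain ⟨ζ, hlen, hζ, hσω⟩ := sigma_word cs hmul hsimple ω hωI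
  set J0 : Set B := {b | b ∈ J ∧ ∃ i ∈ I, σ (cs.simple i) = cs.simple b} with hJ0
  have hmemJ0 : cs.simple j ∈ Subgroup.closure (cs.simple '' J0) := by
    rw [← hσx, hσω]
    exact wordProd_mem_closure cs hζ
  obtain ⟨ξ, hξred, hξJ0, hξ⟩ := exists_reduced_word_subset cs hmemJ0
  have hlen1 : ξ.length = 1 := by
    have h1 : cs.length (cs.simple j) = 1 := cs.length_simple j
    rw [hξ, hξred] at h1
    exact h1
  obtain ⟨b, rfl⟩ := List.length_eq_one_iff.mp hlen1
  obtain ⟨-, i, hiI, hib⟩ := hξJ0 b (List.mem_singleton.mpr rfl)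
  refine ⟨i, hiI, ?_⟩
  rw [hib, hξ, cs.wordProd_singleton]

include hmul hsimple in
theorem sigma_length_ge
    (hinj : Set.InjOn σ (Subgroup.closure (cs.simple '' I) : Set W))
    (hsurj : Set.SurjOn σ (Subgroup.closure (cs.simple '' I) : Set W)
      (Subgroup.closure (cs.simple '' J) : Set W))
    (hmaps : Set.MapsTo σ (Subgroup.closure (cs.simple '' I) : Set W)
      (Subgroup.closure (cs.simple '' J) : Set W)) :
    ∀ x ∈ Subgroup.closure (cs.simple '' I), cs.length x ≤ cs.length (σ x) := by
  have hpull : ∀ β : List B, (∀ b ∈ β, b ∈ J) → ∃ ωI : List B,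
      (∀ i ∈ ωI, i ∈ I) ∧ ωI.length = β.length ∧ σ (cs.wordProd ωI) = cs.wordProd β := by
    intro β
    induction β with
    | nil => exact fun _ => ⟨[], by simp, rfl, sigma_one cs hmul⟩
    | cons b β ihβ =>
      intro hβ
      obtain ⟨i, hiI, hib⟩ := simple_image cs hmul hsimple hsurj b (hβ b (List.mem_cons_self))
      obtain ⟨ωI, h1, h2, h3⟩ := ihβ (fun c hc => hβ c (List.mem_cons_of_mem b hc))
      refine ⟨i :: ωI, ?_, by simp [h2], ?_⟩
      · intro c hc
        rcases List.mem_cons.mp hc with rfl | hc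
        exacts [hiI, h1 c hc]
      · rw [cs.wordProd_cons, cs.wordProd_cons,
          hmul (cs.simple i) (simple_mem_closure cs hiI) (cs.wordProd ωI)
            (wordProd_mem_closure cs h1), hib, h3]
  intro x hx
  obtain ⟨β, hβred, hβJ, hβ⟩ := exists_reduced_word_subset cs (hmaps hx)
  obtain ⟨ωI, h1, h2, h3⟩ := hpull β hβJ
  have hxeq : x = cs.wordProd ωI := by
    apply hinj hx (wordProd_mem_closure cs h1)
    rw [h3, ← hβ]
  calc cs.length x ≤ ωI.length := by rw [hxeq]; exact cs.length_wordProd_le ωI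
    _ = β.length := h2
    _ = cs.length (σ x) := by rw [hβ, hβred]

end Sigma


end StrongAux



section BruhatSetup

variable {B : Type*} {W : Type*} [Group W] {M : CoxeterMatrix B}

theorem statement_5 (cs : CoxeterSystem M W) (I J K : Set B) (σ : W → W)
    (h : GoodSetup cs I J K σ) :
    ∀ w ∈ minReps cs (J ∪ K), ∀ a ∈ parab cs K, ∀ x ∈ parab cs I,
      cs.length w ≤ cs.length (w * a * (x * σ x)) := by
  intro w hw a ha x hx
  have hσxJ : σ x ∈ Subgroup.closure (cs.simple '' J) := h.bijSigma.mapsTo hx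
  -- rewrite the element
  have hc : x * σ x = σ x * x :=
    StrongAux.closure_commute cs h.commIJ x hx (σ x) hσxJ
  have hrw : w * a * (x * σ x) = (w * (a * σ x)) * x := by
    rw [hc]
    group
  rw [hrw]
  -- w is a minimal coset representative for J ∪ K
  have haJK : a * σ x ∈ Subgroup.closure (cs.simple '' (J ∪ K)) := by
    apply mul_mem
    · exact Subgroup.closure_mono (Set.image_mono Set.subset_union_right) ha
    · exact Subgroup.closure_mono (Set.image_mono Set.subset_union_left) hσxJ
  have hadd1 : cs.length (w * (a * σ x)) = cs.length w + cs.length (a * σ x) :=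
    StrongAux.minReps_additive cs hw (a * σ x) haJK
  -- a has no right descents in J
  have hkill : ∀ j ∈ J, cs.simple j ∈ Subgroup.closure (cs.simple '' K) → False := by
    intro j hj hmem
    have h2 := h.directProd 1 (one_mem _) (cs.simple j) (StrongAux.simple_mem_closure cs hj)
      (cs.simple j)⁻¹ (inv_mem hmem) (by group)
    have h3 := h2.2.1
    have h4 := cs.length_simple j
    rw [h3, cs.length_one] at h4
    exact absurd h4 (by omega)
  have haJ : ∀ j ∈ J, cs.length a < cs.length (a * cs.simple j) :=
    StrongAux.cross_minReps cs ha hkill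
  have hadd2 : cs.length (a * σ x) = cs.length a + cs.length (σ x) :=
    StrongAux.minReps_additive cs haJ (σ x) hσxJ
  -- ℓ x ≤ ℓ (σ x)
  have hσlen : cs.length x ≤ cs.length (σ x) :=
    StrongAux.sigma_length_ge cs h.mulSigma h.simpleSigma h.bijSigma.injOn h.bijSigma.surjOn
      h.bijSigma.mapsTo x hx
  have hsub := cs.length_mul_ge_length_sub_length (w * (a * σ x)) x
  omega

end BruhatSetup
end

section
/- With the setup of ≤_O: let w ∈ W(I,J,K) be written as w = w₁w₂ with w₁ ∈ W^{I∪J∪K} and w₂ ∈ W_I. Then the set Min(w) of minimal-length elements of the coset w W_K W_{I,J} equals {w x x* : x ∈ W_I, ℓ(w₂ x) + ℓ(x⁻¹) = ℓ(w₂)}. -/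
section BruhatSetup

variable {B : Type*} {W : Type*} [Group W] {M : CoxeterMatrix B}

namespace CoxAux

open CoxeterSystem List

attribute [local instance] Classical.propDecidable

variable {B : Type*} {W : Type*} [Group W] {M : CoxeterMatrix B}
variable (cs : CoxeterSystem M W)

local prefix:100 "s" => cs.simple
local prefix:100 "π" => cs.wordProd
local prefix:100 "ℓ" => cs.length
local prefix:100 "ris" => cs.rightInvSeq

lemma conj_eq_iff (p t x : W) : p * t * p⁻¹ = x ↔ t = p⁻¹ * x * p := by
  constructor
  · rintro rfl; group
  · rintro rfl; group

noncomputable section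

def phiFun (i : B) : W × ZMod 2 → W × ZMod 2 :=
  fun p => (s i * p.1 * s i, p.2 + if p.1 = s i then 1 else 0)

lemma simple_conj_eq_iff (i : B) (t x : W) : s i * t * s i = x ↔ t = s i * x * s i := by
  nth_rw 2 [← cs.inv_simple]
  nth_rw 3 [← cs.inv_simple]
  exact conj_eq_iff _ _ _

lemma phiFun_involutive (i : B) : Function.Involutive (phiFun cs i) := by
  rintro ⟨t, e⟩
  simp only [phiFun]
  refine Prod.ext ?_ ?_
  · show s i * (s i * t * s i) * s i = t
    rw [simple_conj_eq_iff]
  · show e + (if t = s i then 1 else 0) + (if _ = s i then 1 else 0) = e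
    have : (s i * t * s i = s i) ↔ t = s i := by
      rw [simple_conj_eq_iff, cs.simple_mul_simple_self, one_mul]
    rw [if_congr this rfl rfl, add_assoc, CharTwo.add_self_eq_zero, add_zero]

def phiPerm (i : B) : Equiv.Perm (W × ZMod 2) := (phiFun_involutive cs i).toPerm

lemma phiPerm_apply (i : B) (p : W × ZMod 2) : phiPerm cs i p = phiFun cs i p := rfl

lemma phiPerm_pow_apply (i j : B) (m : ℕ) (t : W) (e : ZMod 2) :
    ((phiPerm cs i * phiPerm cs j) ^ m) (t, e) =
      ((s i * s j) ^ m * t * ((s i * s j) ^ m)⁻¹,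
        e + ∑ n ∈ Finset.range (2 * m), if t = (s j * s i) ^ n * s j then 1 else 0) := by
  have hinv : (s i * s j)⁻¹ = s j * s i := by
    rw [mul_inv_rev, cs.inv_simple, cs.inv_simple]
  induction m generalizing t e with
  | zero => simp
  | succ m ih =>
    rw [pow_succ, Equiv.Perm.mul_apply]
    have h1 : (phiPerm cs i * phiPerm cs j) (t, e) =
        ((s i * s j) * t * (s i * s j)⁻¹,
          e + ((if t = (s j * s i) ^ 0 * s j then 1 else 0)
            + (if t = (s j * s i) ^ 1 * s j then 1 else 0))) := by
      rw [Equiv.Perm.mul_apply, phiPerm_apply, phiPerm_apply]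
      simp only [phiFun, pow_zero, one_mul, pow_one]
      refine Prod.ext ?_ ?_
      · show s i * (s j * t * s j) * s i = s i * s j * t * (s i * s j)⁻¹
        rw [hinv]; group
      · show e + _ + _ = e + _
        rw [add_assoc]
        congr 1
        have h2 : (s j * t * s j = s i) ↔ (t = s j * s i * s j) :=
          simple_conj_eq_iff cs j t (s i)
        exact congrArg _ (if_congr h2 rfl rfl)
    rw [h1, ih]
    refine Prod.ext ?_ ?_
    · show (s i * s j) ^ m * (s i * s j * t * (s i * s j)⁻¹) * ((s i * s j) ^ m)⁻¹ = _
      rw [pow_succ]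
      simp only [mul_inv_rev, mul_assoc]
    · show _ + _ + _ = e + _
      rw [show 2 * (m + 1) = (2 * m + 1) + 1 by ring]
      rw [Finset.sum_range_succ', Finset.sum_range_succ']
      have hsum : ∀ n ∈ Finset.range (2 * m),
          (if s i * s j * t * (s i * s j)⁻¹ = (s j * s i) ^ n * s j then (1 : ZMod 2) else 0)
            = if t = (s j * s i) ^ (n + 1 + 1) * s j then 1 else 0 := by
        intro n _
        have h3 : (s i * s j * t * (s i * s j)⁻¹ = (s j * s i) ^ n * s j)
            ↔ (t = (s j * s i) ^ (n + 1 + 1) * s j) := by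
          rw [conj_eq_iff, hinv]
          have h4 : (s j * s i) * ((s j * s i) ^ n * s j) * (s i * s j)
              = (s j * s i) ^ (n + 1 + 1) * s j := by
            have h2 : (s j * s i) ^ (n + 1 + 1) = (s j * s i) * (s j * s i) ^ n * (s j * s i) := by
              rw [pow_succ, pow_succ']
            rw [h2]; group
          rw [h4]
        rw [if_congr h3 rfl rfl]
      rw [Finset.sum_congr rfl hsum]
      push_cast
      ring

lemma phi_liftable : CoxeterMatrix.IsLiftable M (fun i => phiPerm cs i) := by
  intro i j
  ext ⟨t, e⟩ <;>
  · rw [Equiv.Perm.one_apply, phiPerm_pow_apply, cs.simple_mul_simple_pow]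
    have hsplit : ∑ n ∈ Finset.range (2 * M.M i j),
        (if t = (s j * s i) ^ n * s j then (1 : ZMod 2) else 0) = 0 := by
      rw [two_mul, Finset.sum_range_add]
      have : ∀ n ∈ Finset.range (M.M i j),
          (if t = (s j * s i) ^ (M.M i j + n) * s j then (1 : ZMod 2) else 0)
            = if t = (s j * s i) ^ n * s j then 1 else 0 := by
        intro n _
        congr 2
        rw [pow_add, cs.simple_mul_simple_pow' i j, one_mul]
      rw [Finset.sum_congr rfl this, CharTwo.add_self_eq_zero]
    simp [hsplit]


def rho : W →* Equiv.Perm (W × ZMod 2) := cs.lift ⟨fun i => phiPerm cs i, phi_liftable cs⟩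

lemma rho_simple (i : B) : rho cs (s i) = phiPerm cs i :=
  cs.lift_apply_simple (phi_liftable cs) i

lemma rho_wordProd (ω : List B) (t : W) (e : ZMod 2) :
    rho cs (π ω) (t, e) = (π ω * t * (π ω)⁻¹, e + ((ris ω).count t : ZMod 2)) := by
  induction ω generalizing t e with
  | nil => simp [rho]
  | cons i ω ih =>
    rw [cs.wordProd_cons, map_mul, Equiv.Perm.mul_apply, ih, rho_simple, phiPerm_apply]
    simp only [phiFun]
    refine Prod.ext ?_ ?_
    · show s i * (π ω * t * (π ω)⁻¹) * s i = s i * π ω * t * (s i * π ω)⁻¹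
      rw [mul_inv_rev, cs.inv_simple]
      simp only [mul_assoc]
    · show e + _ + _ = e + _
      have hris : ris (i :: ω) = ((π ω)⁻¹ * s i * (π ω)) :: ris ω := rfl
      rw [hris, List.count_cons]
      push_cast [beq_iff_eq]
      have hcond : (π ω * t * (π ω)⁻¹ = s i) ↔ ((π ω)⁻¹ * s i * π ω = t) := by
        rw [conj_eq_iff]
        constructor
        · intro h; rw [h]
        · intro h; rw [h]
      rw [if_congr hcond rfl rfl]
      ring

def nn (w t : W) : ZMod 2 := (rho cs w (t, 0)).2

lemma nn_count {ω : List B} {w : W} (hω : π ω = w) (t : W) :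
    nn cs w t = ((ris ω).count t : ZMod 2) := by
  unfold nn
  rw [← hω, rho_wordProd, zero_add]

lemma rho_apply (w t : W) (e : ZMod 2) : rho cs w (t, e) = (w * t * w⁻¹, e + nn cs w t) := by
  obtain ⟨ω, rfl⟩ := cs.wordProd_surjective w
  rw [rho_wordProd, nn_count cs rfl]

lemma nn_one (t : W) : nn cs 1 t = 0 := by
  unfold nn
  rw [map_one]
  rfl

lemma nn_mul (u v t : W) : nn cs (u * v) t = nn cs v t + nn cs u (v * t * v⁻¹) := by
  unfold nn
  rw [map_mul, Equiv.Perm.mul_apply, rho_apply, rho_apply, rho_apply]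
  simp

lemma nn_simple (i : B) (t : W) : nn cs (s i) t = if t = s i then 1 else 0 := by
  unfold nn
  rw [rho_simple]
  show (0 + if t = s i then (1 : ZMod 2) else 0) = _
  rw [zero_add]

lemma nn_refl_self {t : W} (ht : cs.IsReflection t) : nn cs t t = 1 := by
  obtain ⟨u, i, rfl⟩ := ht
  have h1 : nn cs (u⁻¹ * u) (s i) = 0 := by rw [inv_mul_cancel]; exact nn_one cs _
  rw [nn_mul] at h1
  have h2 : nn cs (u * (s i * u⁻¹)) (u * s i * u⁻¹)
      = nn cs (s i * u⁻¹) (u * s i * u⁻¹)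
        + nn cs u ((s i * u⁻¹) * (u * s i * u⁻¹) * (s i * u⁻¹)⁻¹) := nn_mul cs _ _ _
  have e2 : (s i * u⁻¹) * (u * s i * u⁻¹) * (s i * u⁻¹)⁻¹ = s i := by
    rw [mul_inv_rev, inv_inv, cs.inv_simple]
    have : s i * u⁻¹ * (u * s i * u⁻¹) = u⁻¹ := by
      rw [show s i * u⁻¹ * (u * s i * u⁻¹) = s i * (u⁻¹ * u) * s i * u⁻¹ by group,
        inv_mul_cancel, mul_one, cs.simple_mul_simple_self, one_mul]
    rw [this]
    group
  have h3 : nn cs (s i * u⁻¹) (u * s i * u⁻¹)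
      = nn cs u⁻¹ (u * s i * u⁻¹) + nn cs (s i) (u⁻¹ * (u * s i * u⁻¹) * u⁻¹⁻¹) :=
    nn_mul cs _ _ _
  have e3 : u⁻¹ * (u * s i * u⁻¹) * u⁻¹⁻¹ = s i := by group
  have e4 : u * (s i * u⁻¹) = u * s i * u⁻¹ := by group
  rw [e4] at h2
  rw [e2] at h2
  rw [e3, nn_simple, if_pos rfl] at h3
  rw [h2, h3]
  linear_combination h1

lemma nn_eq_zero : ∀ n (w t : W), cs.IsReflection t → ℓ w = n → ℓ w < ℓ (w * t) →
    nn cs w t = 0 := by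
  intro n
  induction n using Nat.strong_induction_on with
  | _ n ih =>
    intro w t ht hn hlt
    rcases eq_or_ne w 1 with rfl | hw
    · exact nn_one cs t
    · obtain ⟨i, hi⟩ := cs.exists_rightDescent_of_ne_one hw
      have hi' : ℓ (w * s i) < ℓ w := hi
      have hti : t ≠ s i := by
        rintro rfl
        omega
      have hw' : w = (w * s i) * s i := by
        rw [cs.simple_mul_simple_cancel_right]
      rw [hw', nn_mul, nn_simple, if_neg hti]
      have ht' : cs.IsReflection (s i * t * (s i)⁻¹) := ht.conj (s i)
      have hlen : ℓ (w * s i) < ℓ ((w * s i) * (s i * t * (s i)⁻¹)) := by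
        have h1 : (w * s i) * (s i * t * (s i)⁻¹) = w * t * s i := by
          rw [cs.inv_simple, show w * s i * (s i * t * s i) = w * (s i * s i) * t * s i by group,
            cs.simple_mul_simple_self, mul_one]
        rw [h1]
        have h2 := cs.length_mul_simple (w * t) i
        omega
      rw [ih (ℓ (w * s i)) (by omega) (w * s i) _ ht' rfl hlen, zero_add]

lemma nn_eq_one {w t : W} (ht : cs.IsReflection t) (hlt : ℓ (w * t) < ℓ w) :
    nn cs w t = 1 := by
  have hsq : w * t * t = w := by
    rw [mul_assoc, ht.mul_self, mul_one]
  have h0 : nn cs (w * t) t = 0 := by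
    refine nn_eq_zero cs (ℓ (w * t)) (w * t) t ht rfl ?_
    rw [hsq]
    exact hlt
  have h1 : nn cs (w * t) t = nn cs t t + nn cs w (t * t * t⁻¹) := nn_mul cs w t t
  have e1 : t * t * t⁻¹ = t := by group
  rw [e1, nn_refl_self cs ht, h0] at h1
  have h2 := congrArg (fun z => z + nn cs w t) h1
  simpa [add_assoc, CharTwo.add_self_eq_zero] using h2

lemma exchange {w : W} {i : B} (hlt : ℓ (w * s i) < ℓ w) {ω : List B} (hω : π ω = w) :
    ∃ j < ω.length, π (ω.eraseIdx j) = w * s i := by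
  have h1 : nn cs w (s i) = 1 := nn_eq_one cs (cs.isReflection_simple i) hlt
  rw [nn_count cs hω] at h1
  have h2 : s i ∈ ris ω := by
    by_contra h
    rw [List.count_eq_zero_of_not_mem h] at h1
    simp at h1
  obtain ⟨j, hj, hval⟩ := List.mem_iff_getElem.mp h2
  have hj' : j < ω.length := by
    rwa [cs.length_rightInvSeq] at hj
  refine ⟨j, hj', ?_⟩
  rw [← hω, ← cs.wordProd_mul_getD_rightInvSeq ω j]
  congr 1
  rw [List.getD_eq_getElem _ 1 hj, hval]


lemma mem_parab_iff {L : Set B} {u : W} :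
    u ∈ Subgroup.closure (cs.simple '' L) ↔ ∃ ω : List B, (∀ b ∈ ω, b ∈ L) ∧ π ω = u := by
  constructor
  · intro hu
    induction hu using Subgroup.closure_induction with
    | mem x hx =>
      obtain ⟨i, hi, rfl⟩ := hx
      exact ⟨[i], by simpa using hi, cs.wordProd_singleton i⟩
    | one => exact ⟨[], by simp, cs.wordProd_nil⟩
    | mul x y hx hy ihx ihy =>
      obtain ⟨ω₁, h₁, rfl⟩ := ihx
      obtain ⟨ω₂, h₂, rfl⟩ := ihy
      refine ⟨ω₁ ++ ω₂, ?_, cs.wordProd_append ω₁ ω₂⟩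
      intro b hb
      rcases List.mem_append.mp hb with h | h
      · exact h₁ b h
      · exact h₂ b h
    | inv x hx ih =>
      obtain ⟨ω, h₁, rfl⟩ := ih
      exact ⟨ω.reverse, fun b hb => h₁ b (List.mem_reverse.mp hb), cs.wordProd_reverse ω⟩
  · rintro ⟨ω, hsub, rfl⟩
    induction ω with
    | nil => simpa using Subgroup.one_mem _
    | cons i ω ih =>
      rw [cs.wordProd_cons]
      refine Subgroup.mul_mem _ (Subgroup.subset_closure ⟨i, hsub i (by simp), rfl⟩) ?_
      exact ih (fun b hb => hsub b (by simp [hb]))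

lemma reduce_word : ∀ n (ω : List B), ω.length = n →
    ∃ ω' : List B, (∀ b ∈ ω', b ∈ ω) ∧ cs.IsReduced ω' ∧ π ω' = π ω := by
  intro n
  induction n using Nat.strong_induction_on with
  | _ n ih =>
    intro ω hlen
    by_cases hred : cs.IsReduced ω
    · exact ⟨ω, fun _ h => h, hred, rfl⟩
    · have hlt : ℓ (π ω) < ω.length :=
        lt_of_le_of_ne (cs.length_wordProd_le ω) hred
      have hstep : ∃ k, k < ω.length ∧ ℓ (π (ω.take (k+1))) < ℓ (π (ω.take k)) := by
        by_contra hno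
        push_neg at hno
        have hall : ∀ k, k ≤ ω.length → ℓ (π (ω.take k)) = k := by
          intro k
          induction k with
          | zero => intro _; simp
          | succ k ihk =>
            intro hk
            have hk' : k < ω.length := by omega
            have htake : ω.take (k+1) = ω.take k ++ [ω[k]] := by
              rw [List.take_succ]
              simp [List.getElem?_eq_getElem hk']
            have hge := hno k hk'
            have hne := cs.length_mul_simple (π (ω.take k)) (ω[k])
            rw [htake, cs.wordProd_append, cs.wordProd_singleton]
            rw [htake, cs.wordProd_append, cs.wordProd_singleton] at hge
            have := ihk (by omega)
            omega
        have := hall ω.length le_rfl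
        rw [List.take_length] at this
        omega
      obtain ⟨k, hk, hdes⟩ := hstep
      have htake : ω.take (k+1) = ω.take k ++ [ω[k]] := by
        rw [List.take_succ]
        simp [List.getElem?_eq_getElem hk]
      rw [htake, cs.wordProd_append, cs.wordProd_singleton] at hdes
      obtain ⟨j, hj, hex⟩ := exchange cs hdes (rfl : π (ω.take k) = π (ω.take k))
      set ω'' := (ω.take k).eraseIdx j ++ ω.drop (k+1) with hω''
      have hprod : π ω'' = π ω := by
        rw [hω'', cs.wordProd_append, hex]
        conv_rhs => rw [← List.take_append_drop (k+1) ω]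
        rw [cs.wordProd_append, htake, cs.wordProd_append, cs.wordProd_singleton]
      have hlen'' : ω''.length + 2 = ω.length := by
        rw [hω'', List.length_append]
        have h1 : j < (ω.take k).length := hj
        have h2 := List.length_eraseIdx_add_one h1
        have h3 : (ω.take k).length = k := by rw [List.length_take]; omega
        rw [List.length_drop]
        omega
      obtain ⟨ω', hmem, hred', hprod'⟩ := ih ω''.length (by omega) ω'' rfl
      refine ⟨ω', ?_, hred', by rw [hprod', hprod]⟩
      intro b hb
      rcases List.mem_append.mp (hmem b hb) with h | h
      · exact (List.take_sublist k ω).mem ((List.eraseIdx_sublist (ω.take k) j).mem h)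
      · exact (List.drop_sublist (k+1) ω).mem h

lemma exists_reduced_word_in {L : Set B} {u : W} (hu : u ∈ Subgroup.closure (cs.simple '' L)) :
    ∃ ω : List B, (∀ b ∈ ω, b ∈ L) ∧ cs.IsReduced ω ∧ π ω = u := by
  obtain ⟨ω, hsub, rfl⟩ := (mem_parab_iff cs).mp hu
  obtain ⟨ω', hmem, hred, hprod⟩ := reduce_word cs ω.length ω rfl
  exact ⟨ω', fun b hb => hsub b (hmem b hb), hred, hprod⟩

lemma length_mul_of_forall_le {L : Set B} {u : W}
    (hmin : ∀ z ∈ Subgroup.closure (cs.simple '' L), ℓ u ≤ ℓ (u * z)) :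
    ∀ n (v : W), ℓ v = n → v ∈ Subgroup.closure (cs.simple '' L) →
      ℓ (u * v) = ℓ u + ℓ v := by
  intro n
  induction n using Nat.strong_induction_on with
  | _ n ih =>
    intro v hn hv
    obtain ⟨χ, hχL, hχred, hχprod⟩ := exists_reduced_word_in cs hv
    rcases List.eq_nil_or_concat χ with rfl | ⟨χ', i, rfl⟩
    · have : v = 1 := by rw [← hχprod]; simp
      subst this
      simp
    · rw [List.concat_eq_append] at *
      have hi : i ∈ L := hχL i (by simp)
      set v' := π χ' with hv'
      have hvv : v = v' * s i := by
        rw [← hχprod, cs.wordProd_append, cs.wordProd_singleton]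
      have hredχ' : cs.IsReduced χ' := by
        have := hχred.take χ'.length
        rwa [List.take_left] at this
      have hlv : ℓ v = χ'.length + 1 := by
        rw [← hχprod, hχred]
        simp
      have hlv' : ℓ v' = χ'.length := hredχ'
      have hv'mem : v' ∈ Subgroup.closure (cs.simple '' L) :=
        (mem_parab_iff cs).mpr ⟨χ', fun b hb => hχL b (by simp [hb]), rfl⟩
      have hIH : ℓ (u * v') = ℓ u + ℓ v' := ih (ℓ v') (by omega) v' rfl hv'mem
      have hdich := cs.length_mul_simple (u * v') i
      have huv : u * v = (u * v') * s i := by rw [hvv, mul_assoc]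
      rcases hdich with h | h
      · rw [huv, h, hIH, hlv, hlv']
        omega
      · exfalso
        have hlt : ℓ ((u * v') * s i) < ℓ (u * v') := by omega
        obtain ⟨ωu, hωured, hωu⟩ := cs.exists_reduced_word' u
        have hprodw : π (ωu ++ χ') = u * v' := by
          rw [cs.wordProd_append, ← hωu]
        obtain ⟨j, hj, hex⟩ := exchange cs hlt hprodw
        rcases lt_or_ge j ωu.length with hcase | hcase
        · rw [List.eraseIdx_append_of_lt_length hcase] at hex
          rw [cs.wordProd_append] at hex
          have hz : π (ωu.eraseIdx j) = u * (v * v'⁻¹) := by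
            have : π (ωu.eraseIdx j) * v' = u * v := by rw [hv', hex, huv]
            calc π (ωu.eraseIdx j) = π (ωu.eraseIdx j) * v' * v'⁻¹ := by group
            _ = u * v * v'⁻¹ := by rw [this]
            _ = u * (v * v'⁻¹) := by group
          have hzmem : v * v'⁻¹ ∈ Subgroup.closure (cs.simple '' L) :=
            Subgroup.mul_mem _ hv (Subgroup.inv_mem _ hv'mem)
          have h1 : ℓ (u * (v * v'⁻¹)) ≤ (ωu.eraseIdx j).length := by
            rw [← hz]; exact cs.length_wordProd_le _
          have h2 := List.length_eraseIdx_add_one hcase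
          have h3 : ωu.length = ℓ u := by rw [hωu]; exact hωured.symm
          have h4 := hmin _ hzmem
          omega
        · rw [List.eraseIdx_append_of_length_le hcase] at hex
          rw [cs.wordProd_append] at hex
          have hveq : v = π (χ'.eraseIdx (j - ωu.length)) := by
            have h5 : u * π (χ'.eraseIdx (j - ωu.length)) = u * v := by
              rw [huv, ← hex, hωu]
            exact (mul_left_cancel h5).symm
          have h6 : j - ωu.length < χ'.length := by
            rw [List.length_append] at hj
            omega
          have h7 := List.length_eraseIdx_add_one h6
          have h8 : ℓ v ≤ (χ'.eraseIdx (j - ωu.length)).length := by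
            rw [hveq]; exact cs.length_wordProd_le _
          omega


lemma min_of_minReps {L : Set B} {w : W} (hw : ∀ i ∈ L, ℓ w < ℓ (w * s i)) :
    ∀ z ∈ Subgroup.closure (cs.simple '' L), ℓ w ≤ ℓ (w * z) := by
  have hex : ∃ n, ∃ z, z ∈ Subgroup.closure (cs.simple '' L) ∧ ℓ (w * z) = n :=
    ⟨ℓ w, 1, Subgroup.one_mem _, by rw [mul_one]⟩
  obtain ⟨z₀, hz₀, hn₀⟩ := Nat.find_spec hex
  have hminu : ∀ z ∈ Subgroup.closure (cs.simple '' L), ℓ (w * z₀) ≤ ℓ ((w * z₀) * z) := by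
    intro z hz
    rw [hn₀, mul_assoc]
    exact Nat.find_min' hex ⟨z₀ * z, Subgroup.mul_mem _ hz₀ hz, rfl⟩
  have hinv : z₀⁻¹ ∈ Subgroup.closure (cs.simple '' L) := Subgroup.inv_mem _ hz₀
  rcases eq_or_ne z₀ 1 with rfl | hne
  · intro z hz
    have := hminu z hz
    simpa using this
  · exfalso
    have hdec : ℓ ((w * z₀) * z₀⁻¹) = ℓ (w * z₀) + ℓ z₀⁻¹ :=
      length_mul_of_forall_le cs hminu _ _ rfl hinv
    have hw0 : (w * z₀) * z₀⁻¹ = w := by group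
    have hinvne : z₀⁻¹ ≠ 1 := by simpa using hne
    obtain ⟨χ, hχL, hχred, hχprod⟩ := exists_reduced_word_in cs hinv
    rcases List.eq_nil_or_concat χ with rfl | ⟨χ', i, rfl⟩
    · exact hinvne (by rw [← hχprod]; simp)
    · rw [List.concat_eq_append] at *
      have hi : i ∈ L := hχL i (by simp)
      have hχ'eq : π χ' = z₀⁻¹ * s i := by
        have h1 : π χ' * s i = z₀⁻¹ := by
          rw [← cs.wordProd_singleton, ← cs.wordProd_append, hχprod]
        rw [← h1, mul_assoc, cs.simple_mul_simple_self, mul_one]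
      have hstep : w * s i = (w * z₀) * π χ' := by
        rw [hχ'eq]
        group
      have hχ'mem : π χ' ∈ Subgroup.closure (cs.simple '' L) :=
        (mem_parab_iff cs).mpr ⟨χ', fun b hb => hχL b (by simp [hb]), rfl⟩
      have h1 : ℓ (w * s i) = ℓ (w * z₀) + ℓ (π χ') := by
        rw [hstep]
        exact length_mul_of_forall_le cs hminu _ _ rfl hχ'mem
      have hredχ' : cs.IsReduced χ' := by
        have := hχred.take χ'.length
        rwa [List.take_left] at this
      have h2 : ℓ (π χ') = χ'.length := hredχ'
      have h3 : ℓ z₀⁻¹ = χ'.length + 1 := by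
        rw [← hχprod, hχred]
        simp
      have h4 := hw i hi
      rw [hw0] at hdec
      omega

lemma minReps_mul_length {L : Set B} {w : W} (hw : ∀ i ∈ L, ℓ w < ℓ (w * s i))
    {v : W} (hv : v ∈ Subgroup.closure (cs.simple '' L)) :
    ℓ (w * v) = ℓ w + ℓ v :=
  length_mul_of_forall_le cs (min_of_minReps cs hw) _ v rfl hv

lemma length_lt_of_simple_notin {L : Set B} {p : W}
    (hp : p ∈ Subgroup.closure (cs.simple '' L)) {l : B}
    (hl : s l ∉ Subgroup.closure (cs.simple '' L)) : ℓ p < ℓ (p * s l) := by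
  rcases cs.length_mul_simple p l with h | h
  · omega
  · exfalso
    obtain ⟨χ, hχL, hχred, hχprod⟩ := exists_reduced_word_in cs hp
    obtain ⟨j, hj, hex⟩ := exchange cs (show ℓ (p * s l) < ℓ p by omega) hχprod
    have hmem : p * s l ∈ Subgroup.closure (cs.simple '' L) := by
      refine (mem_parab_iff cs).mpr ⟨χ.eraseIdx j, ?_, hex⟩
      intro b hb
      exact hχL b ((List.eraseIdx_sublist χ j).mem hb)
    have hsl : s l ∈ Subgroup.closure (cs.simple '' L) := by
      have h2 := Subgroup.mul_mem _ (Subgroup.inv_mem _ hp) hmem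
      rwa [show p⁻¹ * (p * s l) = s l by group] at h2
    exact hl hsl


lemma parab_commute {A C : Set B} (hcomm : ∀ a ∈ A, ∀ c ∈ C, Commute (cs.simple a) (cs.simple c))
    {x y : W} (hx : x ∈ Subgroup.closure (cs.simple '' A))
    (hy : y ∈ Subgroup.closure (cs.simple '' C)) : Commute x y := by
  induction hx using Subgroup.closure_induction with
  | mem a ha =>
    obtain ⟨i, hi, rfl⟩ := ha
    induction hy using Subgroup.closure_induction with
    | mem c hc =>
      obtain ⟨k, hk, rfl⟩ := hc
      exact hcomm i hi k hk
    | one => exact Commute.one_right _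
    | mul c d hc hd ihc ihd => exact Commute.mul_right ihc ihd
    | inv c hc ihc => exact Commute.inv_right ihc
  | one => exact Commute.one_left _
  | mul a b ha hb iha ihb => exact Commute.mul_left iha ihb
  | inv a ha iha => exact Commute.inv_left iha

section Sigma

variable {I J : Set B} {σ : W → W}
  (hmul : ∀ x ∈ Subgroup.closure (cs.simple '' I), ∀ y ∈ Subgroup.closure (cs.simple '' I),
    σ (x * y) = σ x * σ y)
  (hsimple : ∀ i ∈ I, ∃ j ∈ J, σ (cs.simple i) = cs.simple j)

include hmul in
lemma sigma_one : σ 1 = 1 := by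
  have h1 := hmul 1 (Subgroup.one_mem _) 1 (Subgroup.one_mem _)
  rw [mul_one] at h1
  exact (left_eq_mul.mp h1)

include hmul hsimple in
lemma sigma_word : ∀ χ : List B, (∀ b ∈ χ, b ∈ I) →
    ∃ χJ : List B, χJ.length = χ.length ∧
      (∀ b ∈ χJ, b ∈ J ∧ ∃ i ∈ I, σ (cs.simple i) = cs.simple b) ∧ π χJ = σ (π χ) := by
  intro χ
  induction χ with
  | nil =>
    intro _
    exact ⟨[], rfl, by simp, by rw [cs.wordProd_nil, sigma_one cs hmul]⟩
  | cons i χ ih =>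
    intro hχ
    have hi : i ∈ I := hχ i (by simp)
    obtain ⟨χJ, hlen, hJ, hprod⟩ := ih (fun b hb => hχ b (by simp [hb]))
    obtain ⟨j, hj, hσ⟩ := hsimple i hi
    refine ⟨j :: χJ, by simp [hlen], ?_, ?_⟩
    · intro b hb
      rcases List.mem_cons.mp hb with rfl | hb
      · exact ⟨hj, i, hi, hσ⟩
      · exact hJ b hb
    · rw [cs.wordProd_cons, cs.wordProd_cons, hprod, ← hσ]
      rw [← hmul (cs.simple i) (Subgroup.subset_closure ⟨i, hi, rfl⟩) (π χ)
        ((mem_parab_iff cs).mpr ⟨χ, fun b hb => hχ b (by simp [hb]), rfl⟩)]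

variable (hbij : Set.BijOn σ (Subgroup.closure (cs.simple '' I) : Set W)
    (Subgroup.closure (cs.simple '' J) : Set W))

include hmul hsimple hbij in
lemma sigma_simple_surj : ∀ j ∈ J, ∃ i ∈ I, σ (cs.simple i) = cs.simple j := by
  intro j hj
  set J₀ : Set B := {b | b ∈ J ∧ ∃ i ∈ I, σ (cs.simple i) = cs.simple b} with hJ₀
  have hsub : (Subgroup.closure (cs.simple '' J) : Set W)
      ⊆ (Subgroup.closure (cs.simple '' J₀) : Set W) := by
    intro y hy
    obtain ⟨x, hx, rfl⟩ := hbij.surjOn hy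
    obtain ⟨χ, hχI, hχprod⟩ := (mem_parab_iff cs).mp hx
    obtain ⟨χJ, hlen, hJmem, hprod⟩ := sigma_word cs hmul hsimple χ hχI
    rw [← hχprod, ← hprod]
    exact (mem_parab_iff cs).mpr ⟨χJ, fun b hb => hJmem b hb, rfl⟩
  have hsj : cs.simple j ∈ Subgroup.closure (cs.simple '' J₀) :=
    hsub (Subgroup.subset_closure ⟨j, hj, rfl⟩)
  obtain ⟨ω, hωJ₀, hωred, hωprod⟩ := exists_reduced_word_in cs hsj
  have hlen1 : ω.length = 1 := by
    have h1 : ℓ (π ω) = 1 := by rw [hωprod]; exact cs.length_simple j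
    rw [hωred] at h1
    omega
  obtain ⟨b, rfl⟩ := List.length_eq_one_iff.mp hlen1
  obtain ⟨hbJ, i, hi, hσ⟩ := hωJ₀ b (by simp)
  rw [cs.wordProd_singleton] at hωprod
  exact ⟨i, hi, by rw [hσ, hωprod]⟩

include hmul hsimple hbij in
lemma sigma_preimage_word : ∀ ψ : List B, (∀ b ∈ ψ, b ∈ J) →
    ∃ χ : List B, (∀ b ∈ χ, b ∈ I) ∧ χ.length = ψ.length ∧ σ (π χ) = π ψ := by
  intro ψ
  induction ψ with
  | nil =>
    intro _
    exact ⟨[], by simp, rfl, by rw [cs.wordProd_nil, sigma_one cs hmul]⟩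
  | cons j ψ ih =>
    intro hψ
    obtain ⟨χ, hχI, hlen, hprod⟩ := ih (fun b hb => hψ b (by simp [hb]))
    obtain ⟨i, hi, hσ⟩ := sigma_simple_surj cs hmul hsimple hbij j (hψ j (by simp))
    refine ⟨i :: χ, ?_, by simp [hlen], ?_⟩
    · intro b hb
      rcases List.mem_cons.mp hb with rfl | hb
      · exact hi
      · exact hχI b hb
    · rw [cs.wordProd_cons, cs.wordProd_cons,
        hmul (cs.simple i) (Subgroup.subset_closure ⟨i, hi, rfl⟩) (π χ)
          ((mem_parab_iff cs).mpr ⟨χ, hχI, rfl⟩), hσ, hprod]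

include hmul hsimple hbij in
lemma sigma_length {x : W} (hx : x ∈ Subgroup.closure (cs.simple '' I)) :
    ℓ (σ x) = ℓ x := by
  have hle : ℓ (σ x) ≤ ℓ x := by
    obtain ⟨χ, hχI, hχred, hχprod⟩ := exists_reduced_word_in cs hx
    obtain ⟨χJ, hlen, _, hprod⟩ := sigma_word cs hmul hsimple χ hχI
    calc ℓ (σ x) = ℓ (π χJ) := by rw [hprod, hχprod]
    _ ≤ χJ.length := cs.length_wordProd_le χJ
    _ = χ.length := hlen
    _ = ℓ x := by rw [← hχprod, hχred]
  have hge : ℓ x ≤ ℓ (σ x) := by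
    have hσx : σ x ∈ Subgroup.closure (cs.simple '' J) := hbij.mapsTo hx
    obtain ⟨ψ, hψJ, hψred, hψprod⟩ := exists_reduced_word_in cs hσx
    obtain ⟨χ, hχI, hlen, hprod⟩ := sigma_preimage_word cs hmul hsimple hbij ψ hψJ
    have hxeq : π χ = x := by
      refine hbij.injOn ((mem_parab_iff cs).mpr ⟨χ, hχI, rfl⟩) hx ?_
      rw [hprod, hψprod]
    calc ℓ x = ℓ (π χ) := by rw [hxeq]
    _ ≤ χ.length := cs.length_wordProd_le χ
    _ = ψ.length := hlen
    _ = ℓ (σ x) := by rw [← hψprod, hψred]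
  omega

end Sigma

end
end CoxAux

theorem statement_6 (cs : CoxeterSystem M W) (I J K : Set B) (σ : W → W)
    (h : GoodSetup cs I J K σ) (w w₁ w₂ : W)
    (hw : w ∈ minReps cs (J ∪ K)) (hw₁ : w₁ ∈ minReps cs (I ∪ J ∪ K))
    (hw₂ : w₂ ∈ parab cs I) (hd : w = w₁ * w₂) :
    MinC cs I K σ w =
      {u : W | ∃ x ∈ parab cs I, u = w * (x * σ x) ∧
        cs.length (w₂ * x) + cs.length x⁻¹ = cs.length w₂} := by
  classical
  clear hw
  have hIJK_I : parab cs I ≤ parab cs (I ∪ J ∪ K) :=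
    Subgroup.closure_mono (Set.image_mono (by intro b hb; exact Or.inl (Or.inl hb)))
  have hIJK_J : parab cs J ≤ parab cs (I ∪ J ∪ K) :=
    Subgroup.closure_mono (Set.image_mono (by intro b hb; exact Or.inl (Or.inr hb)))
  have hIJK_K : parab cs K ≤ parab cs (I ∪ J ∪ K) :=
    Subgroup.closure_mono (Set.image_mono (by intro b hb; exact Or.inr hb))
  have hJK_J : parab cs J ≤ parab cs (J ∪ K) :=
    Subgroup.closure_mono (Set.image_mono (by intro b hb; exact Or.inl hb))
  have hJK_K : parab cs K ≤ parab cs (J ∪ K) :=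
    Subgroup.closure_mono (Set.image_mono (by intro b hb; exact Or.inr hb))
  have hIJ1 : ∀ g, g ∈ parab cs I → g ∈ parab cs J → g = 1 := fun g h1 h2 =>
    (h.directProd g h1 g⁻¹ (Subgroup.inv_mem _ h2) 1 (Subgroup.one_mem _) (by group)).1
  have hIK1 : ∀ g, g ∈ parab cs I → g ∈ parab cs K → g = 1 := fun g h1 h2 =>
    (h.directProd g h1 1 (Subgroup.one_mem _) g⁻¹ (Subgroup.inv_mem _ h2) (by group)).1
  have hJK1 : ∀ g, g ∈ parab cs J → g ∈ parab cs K → g = 1 := fun g h1 h2 =>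
    (h.directProd 1 (Subgroup.one_mem _) g h1 g⁻¹ (Subgroup.inv_mem _ h2) (by group)).2.1
  have hsl_notI : ∀ l ∈ J ∪ K, cs.simple l ∉ parab cs I := by
    intro l hl hmem
    have hone : cs.simple l = 1 := by
      rcases hl with hl | hl
      · exact hIJ1 _ hmem (Subgroup.subset_closure ⟨l, hl, rfl⟩)
      · exact hIK1 _ hmem (Subgroup.subset_closure ⟨l, hl, rfl⟩)
    have h1 := cs.length_simple l
    rw [hone, cs.length_one] at h1
    omega
  have hsl_notJ : ∀ l ∈ K, cs.simple l ∉ parab cs J := by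
    intro l hl hmem
    have hone : cs.simple l = 1 :=
      hJK1 _ hmem (Subgroup.subset_closure ⟨l, hl, rfl⟩)
    have h1 := cs.length_simple l
    rw [hone, cs.length_one] at h1
    omega
  have hminI : ∀ p ∈ parab cs I, ∀ l ∈ J ∪ K, cs.length p < cs.length (p * cs.simple l) :=
    fun p hp l hl => CoxAux.length_lt_of_simple_notin cs hp (hsl_notI l hl)
  have hminJ : ∀ q ∈ parab cs J, ∀ l ∈ K, cs.length q < cs.length (q * cs.simple l) :=
    fun q hq l hl => CoxAux.length_lt_of_simple_notin cs hq (hsl_notJ l hl)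
  have hσlen : ∀ x ∈ parab cs I, cs.length (σ x) = cs.length x := fun x hx =>
    CoxAux.sigma_length cs h.mulSigma h.simpleSigma h.bijSigma hx
  have key : ∀ x ∈ parab cs I, ∀ a ∈ parab cs K,
      cs.length (w₁ * ((w₂ * x) * (σ x * a)))
        = cs.length w₁ + (cs.length (w₂ * x) + (cs.length (σ x) + cs.length a)) := by
    intro x hx a ha
    have hx' : w₂ * x ∈ parab cs I := Subgroup.mul_mem _ hw₂ hx
    have hsx : σ x ∈ parab cs J := h.bijSigma.mapsTo hx
    have hv : (w₂ * x) * (σ x * a) ∈ parab cs (I ∪ J ∪ K) :=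
      Subgroup.mul_mem _ (hIJK_I hx') (Subgroup.mul_mem _ (hIJK_J hsx) (hIJK_K ha))
    rw [CoxAux.minReps_mul_length cs hw₁ hv]
    congr 1
    rw [CoxAux.minReps_mul_length cs (fun l hl => hminI _ hx' l hl)
      (Subgroup.mul_mem _ (hJK_J hsx) (hJK_K ha))]
    congr 1
    exact CoxAux.minReps_mul_length cs (fun l hl => hminJ _ hsx l hl) ha
  have hlw : cs.length w = cs.length w₁ + cs.length w₂ := by
    rw [hd]
    exact CoxAux.minReps_mul_length cs hw₁ (hIJK_I hw₂)
  ext u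
  simp only [MinC, inCoset, Set.mem_setOf_eq]
  constructor
  · rintro ⟨⟨a, ha, x, hx, rfl⟩, hlen⟩
    have hcomm_ax : Commute a (x * σ x) := by
      have h1 : Commute x a := CoxAux.parab_commute cs h.commIK hx ha
      have h2 : Commute (σ x) a := CoxAux.parab_commute cs h.commJK (h.bijSigma.mapsTo hx) ha
      exact (Commute.mul_left h1 h2).symm
    have hrw : w * a * (x * σ x) = w₁ * ((w₂ * x) * (σ x * a)) := by
      rw [hd]
      calc w₁ * w₂ * a * (x * σ x) = w₁ * w₂ * (a * (x * σ x)) := by group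
      _ = w₁ * w₂ * ((x * σ x) * a) := by rw [hcomm_ax.eq]
      _ = w₁ * ((w₂ * x) * (σ x * a)) := by group
    rw [hrw, key x hx a ha, hσlen x hx, hlw] at hlen
    have htri : cs.length w₂ ≤ cs.length (w₂ * x) + cs.length x := by
      have h1 := cs.length_mul_le (w₂ * x) x⁻¹
      rw [show w₂ * x * x⁻¹ = w₂ by group, cs.length_inv] at h1
      exact h1
    have ha0 : cs.length a = 0 := by omega
    have ha1 : a = 1 := cs.length_eq_zero_iff.mp ha0
    refine ⟨x, hx, ?_, ?_⟩
    · rw [ha1, mul_one]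
    · rw [cs.length_inv]
      omega
  · rintro ⟨x, hx, rfl, hcond⟩
    rw [cs.length_inv] at hcond
    refine ⟨⟨1, Subgroup.one_mem _, x, hx, by rw [mul_one]⟩, ?_⟩
    have hrw : w * (x * σ x) = w₁ * ((w₂ * x) * (σ x * 1)) := by
      rw [hd, mul_one]
      group
    rw [hrw, key x hx 1 (Subgroup.one_mem _), cs.length_one, hσlen x hx, hlw]
    omega


end BruhatSetup
end
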